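/- arXiv:2207.03423 — 6 statements merged into one kernel-verified Lean document; each statement's English description precedes it below -/
import Mathlib

section
/- Fix a real number N > 1. There exist constants C > 0 and w̄ ∈ (0, 1/2), depending only on N, such that for every D > 0 and every w ∈ (0, w̄] one has 𝓘_{N,D}(w) ≥ (N/D) · w^{1-1/N} · (1 − C·w^{1/N}). Equivalently, inf_{ξ ≥ 0} G_N(ξ, w) ≥ 1 − C·w^{1/N} for all w ∈ (0, w̄]. -/
set_option maxHeartbeats 800000

noncomputable section

/-- The auxiliary function `G_N(ξ, v)` from the paper. -/
def GN (N ξ v : ℝ) : ℝ :=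
  ((ξ + 1) ^ N + (1 / v - 1) * ξ ^ N) ^ ((N - 1) / N) / ((ξ + 1) ^ N - ξ ^ N)

/-- The model isoperimetric profile `𝓘_{N,D}(v)`. -/
def modelProfile (N D v : ℝ) : ℝ :=
  (N / D) * sInf {y : ℝ | ∃ ξ : ℝ, 0 ≤ ξ ∧
    y = (min v (1 - v) * (ξ + 1) ^ N + max v (1 - v) * ξ ^ N) ^ ((N - 1) / N) /
        ((ξ + 1) ^ N - ξ ^ N)}

open Real

/-- Key pointwise estimate: with `C = 2 N^{1/(N-1)}` and `w̄ = C^{-N}`, for every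
`ξ ≥ 0` and `w ∈ (0, w̄]` one has `G_N(ξ, w) ≥ 1 - C w^{1/N}`. -/
lemma GN_key (N : ℝ) (hN : 1 < N) (w ξ : ℝ) (hw : 0 < w)
    (hwb : w ≤ (2 * N ^ (1 / (N - 1))) ^ (-N)) (hξ : 0 ≤ ξ) :
    1 - (2 * N ^ (1 / (N - 1))) * w ^ (1 / N) ≤ GN N ξ w := by
  set C : ℝ := 2 * N ^ (1 / (N - 1)) with hCdef
  have hN0 : (0 : ℝ) < N := by linarith
  have hN1 : N - 1 ≠ 0 := by intro h; nlinarith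
  have hNe : N ≠ 0 := ne_of_gt hN0
  have hCpos : 0 < C := by positivity
  have hC2 : (2 : ℝ) ≤ C := by
    have : (1 : ℝ) ≤ N ^ (1 / (N - 1)) :=
      one_le_rpow hN.le (div_nonneg zero_le_one (by linarith))
    nlinarith
  set x : ℝ := C * w ^ (1 / N) with hxdef
  have hwp : 0 < w ^ (1 / N) := rpow_pos_of_pos hw _
  have hx0 : 0 < x := by positivity
  -- x ≤ 1
  have hx1 : x ≤ 1 := by
    have h1 : w ^ (1 / N) ≤ (C ^ (-N)) ^ (1 / N) :=
      rpow_le_rpow hw.le hwb (by positivity)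
    have h2 : (C ^ (-N)) ^ (1 / N) = C⁻¹ := by
      rw [← rpow_mul hCpos.le]
      rw [show -N * (1 / N) = -1 by field_simp]
      exact rpow_neg_one C
    rw [h2] at h1
    calc x = C * w ^ (1 / N) := rfl
      _ ≤ C * C⁻¹ := by nlinarith
      _ = 1 := mul_inv_cancel₀ (ne_of_gt hCpos)
  -- basic quantities
  have hξ1 : (0 : ℝ) < ξ + 1 := by linarith
  have hb0 : 0 ≤ ξ ^ N := rpow_nonneg hξ _
  have ha0 : 0 < (ξ + 1) ^ N := rpow_pos_of_pos hξ1 _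
  have hs0 : 0 < (ξ + 1) ^ N - ξ ^ N := by
    have := rpow_lt_rpow hξ (by linarith : ξ < ξ + 1) hN0
    linarith
  set s : ℝ := (ξ + 1) ^ N - ξ ^ N with hsdef
  set e : ℝ := (N - 1) / N with hedef
  have he0 : 0 < e := by
    apply div_pos <;> linarith
  -- rewrite the numerator base as s + m with m = ξ^N / w
  have hbase : (ξ + 1) ^ N + (1 / w - 1) * ξ ^ N = s + ξ ^ N / w := by
    field_simp [hsdef]; ring
  set m : ℝ := ξ ^ N / w with hmdef
  have hm0 : 0 ≤ m := by positivity
  have hGN : GN N ξ w = (s + m) ^ e / s := by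
    rw [GN, hbase]
  rcases le_or_gt ξ x with hcase | hcase
  · -- small ξ : GN ≥ s^(e-1) = s^(-1/N) ≥ (ξ+1)⁻¹ ≥ 1 - x
    have h1 : s ^ e ≤ (s + m) ^ e :=
      rpow_le_rpow hs0.le (by linarith) he0.le
    have h2 : s ^ e / s = s ^ (-(1 / N)) := by
      rw [show s ^ e / s = s ^ e / s ^ (1 : ℝ) by rw [rpow_one],
        ← rpow_sub hs0]
      congr 1
      rw [hedef]; field_simp; ring
    have hsa : s ≤ (ξ + 1) ^ N := by rw [hsdef]; linarith
    have h3 : ((ξ + 1) ^ N) ^ (-(1 / N)) ≤ s ^ (-(1 / N)) :=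
      rpow_le_rpow_of_nonpos hs0 hsa (neg_nonpos.mpr (by positivity))
    have h4 : ((ξ + 1) ^ N) ^ (-(1 / N)) = (ξ + 1)⁻¹ := by
      rw [← rpow_mul hξ1.le, show N * -(1 / N) = -1 by field_simp]
      exact rpow_neg_one _
    have h5 : 1 - x ≤ (ξ + 1)⁻¹ := by
      rw [inv_eq_one_div, le_div_iff₀ hξ1]
      nlinarith [mul_nonneg hx0.le hξ]
    calc 1 - x ≤ (ξ + 1)⁻¹ := h5
      _ = ((ξ + 1) ^ N) ^ (-(1 / N)) := h4.symm
      _ ≤ s ^ (-(1 / N)) := h3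
      _ = s ^ e / s := h2.symm
      _ ≤ (s + m) ^ e / s := by gcongr
      _ = GN N ξ w := hGN.symm
  · -- large ξ : GN ≥ 1
    -- Bernoulli: s ≤ N * (ξ+1)^(N-1)
    have hu : ξ / (ξ + 1) - 1 = -(1 / (ξ + 1)) := by field_simp; ring
    have hinv : 1 / (ξ + 1) ≤ 1 := by rw [div_le_one hξ1]; linarith
    have hinv0 : 0 < 1 / (ξ + 1) := by positivity
    have hbern := one_add_mul_self_le_rpow_one_add
      (s := ξ / (ξ + 1) - 1) (by rw [hu]; linarith) hN.le
    rw [show 1 + (ξ / (ξ + 1) - 1) = ξ / (ξ + 1) by ring] at hbern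
    have hdivN : (ξ / (ξ + 1)) ^ N = ξ ^ N / (ξ + 1) ^ N := div_rpow hξ hξ1.le N
    -- Claim A
    have h6 : (1 - N * (1 / (ξ + 1))) * (ξ + 1) ^ N ≤ ξ ^ N := by
      have h7 : ξ ^ N / (ξ + 1) ^ N * (ξ + 1) ^ N = ξ ^ N :=
        div_mul_cancel₀ _ (ne_of_gt ha0)
      have h8 := mul_le_mul_of_nonneg_right hbern ha0.le
      rw [hdivN, h7, hu] at h8
      nlinarith [h8]
    have hpow1 : (ξ + 1) ^ (N - 1) = (ξ + 1) ^ N / (ξ + 1) := by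
      rw [rpow_sub hξ1, rpow_one]
    have hA : s ≤ N * (ξ + 1) ^ (N - 1) := by
      rw [hsdef, hpow1]
      have : N * ((ξ + 1) ^ N / (ξ + 1)) = N * (1 / (ξ + 1)) * (ξ + 1) ^ N := by
        field_simp
      rw [this]
      linarith [h6]
    -- Claim B
    have hxx : x / 2 ≤ ξ / (ξ + 1) := by
      rw [div_le_div_iff₀ (by norm_num : (0:ℝ) < 2) hξ1]
      nlinarith [mul_le_mul_of_nonneg_right hx1 hξ]
    have hB1 : (x / 2) ^ N ≤ (ξ / (ξ + 1)) ^ N :=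
      rpow_le_rpow (by positivity) hxx hN0.le
    have hB2 : (x / 2) ^ N = N ^ (N / (N - 1)) * w := by
      have hx2 : x / 2 = N ^ (1 / (N - 1)) * w ^ (1 / N) := by
        rw [hxdef, hCdef]; ring
      rw [hx2, mul_rpow (by positivity) hwp.le, ← rpow_mul hN0.le,
        ← rpow_mul hw.le, show 1 / (N - 1) * N = N / (N - 1) by ring,
        show 1 / N * N = 1 by field_simp, rpow_one]
    -- Claim C : s^(N/(N-1)) ≤ m
    have hexp0 : 0 ≤ N / (N - 1) := div_nonneg hN0.le (by linarith)
    have hC1 : s ^ (N / (N - 1)) ≤ (N * (ξ + 1) ^ (N - 1)) ^ (N / (N - 1)) :=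
      rpow_le_rpow hs0.le hA hexp0
    have hC2 : (N * (ξ + 1) ^ (N - 1)) ^ (N / (N - 1))
        = N ^ (N / (N - 1)) * (ξ + 1) ^ N := by
      rw [mul_rpow hN0.le (rpow_nonneg hξ1.le _), ← rpow_mul hξ1.le,
        show (N - 1) * (N / (N - 1)) = N by field_simp]
    have hC3 : N ^ (N / (N - 1)) * (ξ + 1) ^ N ≤ m := by
      rw [hmdef, le_div_iff₀ hw]
      have h9 := hB1
      rw [hB2, hdivN] at h9
      have h10 := mul_le_mul_of_nonneg_right h9 ha0.le
      rw [div_mul_cancel₀ _ (ne_of_gt ha0)] at h10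
      calc N ^ (N / (N - 1)) * (ξ + 1) ^ N * w
          = N ^ (N / (N - 1)) * w * (ξ + 1) ^ N := by ring
        _ ≤ ξ ^ N := h10
    have hCm : s ^ (N / (N - 1)) ≤ m := by
      calc s ^ (N / (N - 1)) ≤ (N * (ξ + 1) ^ (N - 1)) ^ (N / (N - 1)) := hC1
        _ = N ^ (N / (N - 1)) * (ξ + 1) ^ N := hC2
        _ ≤ m := hC3
    -- conclude
    have h11 : s ≤ (s + m) ^ e := by
      have h12 : s ^ (N / (N - 1)) ≤ s + m := by linarith
      have h13 := rpow_le_rpow (rpow_nonneg hs0.le _) h12 he0.le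
      rw [← rpow_mul hs0.le, show N / (N - 1) * e = 1 by
        rw [hedef]; field_simp, rpow_one] at h13
      exact h13
    calc 1 - x ≤ 1 := by linarith
      _ = s / s := (div_self (ne_of_gt hs0)).symm
      _ ≤ (s + m) ^ e / s := by gcongr
      _ = GN N ξ w := hGN.symm

/-- Lemma 4.2 (Milman estimate): for `N > 1` there are `C > 0` and `w̄ ∈ (0, 1/2)`
such that for all `D > 0` and `w ∈ (0, w̄]`,
`𝓘_{N,D}(w) ≥ (N/D) w^{1-1/N} (1 - C w^{1/N})`; equivalently
`inf_{ξ ≥ 0} G_N(ξ, w) ≥ 1 - C w^{1/N}`. -/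
theorem milman_lower_estimate (N : ℝ) (hN : 1 < N) :
    ∃ C : ℝ, 0 < C ∧ ∃ wbar : ℝ, 0 < wbar ∧ wbar < 1 / 2 ∧
      ∀ D : ℝ, 0 < D → ∀ w : ℝ, 0 < w → w ≤ wbar →
        (N / D) * w ^ (1 - 1 / N) * (1 - C * w ^ (1 / N)) ≤ modelProfile N D w ∧
        1 - C * w ^ (1 / N) ≤ sInf {y : ℝ | ∃ ξ : ℝ, 0 ≤ ξ ∧ y = GN N ξ w} := by
  have hN0 : (0 : ℝ) < N := by linarith
  have hNe : N ≠ 0 := ne_of_gt hN0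
  set C : ℝ := 2 * N ^ (1 / (N - 1)) with hCdef
  have hCpos : 0 < C := by positivity
  have hC2 : (2 : ℝ) ≤ C := by
    have : (1 : ℝ) ≤ N ^ (1 / (N - 1)) :=
      one_le_rpow hN.le (div_nonneg zero_le_one (by linarith))
    nlinarith
  set wbar : ℝ := C ^ (-N) with hwbardef
  have hwbar0 : 0 < wbar := rpow_pos_of_pos hCpos _
  have hwbar_half : wbar < 1 / 2 := by
    have h1 : C ^ (-N) ≤ (2 : ℝ) ^ (-N) :=
      rpow_le_rpow_of_nonpos two_pos hC2 (by linarith)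
    have h2 : (2 : ℝ) ^ (-N) < (2 : ℝ) ^ (-1 : ℝ) :=
      rpow_lt_rpow_of_exponent_lt one_lt_two (by linarith)
    have h3 : (2 : ℝ) ^ (-1 : ℝ) = 1 / 2 := by
      rw [rpow_neg_one]; norm_num
    rw [h3] at h2
    rw [hwbardef]; linarith
  refine ⟨C, hCpos, wbar, hwbar0, hwbar_half, ?_⟩
  intro D hD w hw hwle
  have hG : ∀ ξ : ℝ, 0 ≤ ξ → 1 - C * w ^ (1 / N) ≤ GN N ξ w :=
    fun ξ hξ => GN_key N hN w ξ hw hwle hξ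
  constructor
  · -- the model profile estimate
    rw [modelProfile]
    have hw2 : w < 1 / 2 := lt_of_le_of_lt hwle hwbar_half
    have hmin : min w (1 - w) = w := min_eq_left (by linarith)
    have hmax : max w (1 - w) = 1 - w := max_eq_right (by linarith)
    have hsetbd : ∀ y ∈ {y : ℝ | ∃ ξ : ℝ, 0 ≤ ξ ∧
        y = (min w (1 - w) * (ξ + 1) ^ N + max w (1 - w) * ξ ^ N) ^ ((N - 1) / N) /
        ((ξ + 1) ^ N - ξ ^ N)},
        w ^ (1 - 1 / N) * (1 - C * w ^ (1 / N)) ≤ y := by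
      rintro y ⟨ξ, hξ, rfl⟩
      rw [hmin, hmax]
      have hξ1 : (0 : ℝ) < ξ + 1 := by linarith
      have hZ0 : 0 ≤ (ξ + 1) ^ N + (1 / w - 1) * ξ ^ N := by
        have h1 : (1 : ℝ) ≤ 1 / w := by
          rw [le_div_iff₀ hw]; linarith
        have := rpow_nonneg hξ N
        have := rpow_nonneg hξ1.le N
        nlinarith
      have hWZ : w * (ξ + 1) ^ N + (1 - w) * ξ ^ N
          = w * ((ξ + 1) ^ N + (1 / w - 1) * ξ ^ N) := by
        field_simp
      have hee : (N - 1) / N = 1 - 1 / N := by field_simp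
      have hkey : (w * ((ξ + 1) ^ N + (1 / w - 1) * ξ ^ N)) ^ ((N - 1) / N) /
          ((ξ + 1) ^ N - ξ ^ N) = w ^ (1 - 1 / N) * GN N ξ w := by
        rw [mul_rpow hw.le hZ0, GN, hee, mul_div_assoc]
      rw [hWZ, hkey]
      exact mul_le_mul_of_nonneg_left (hG ξ hξ) (rpow_nonneg hw.le _)
    have hne : Set.Nonempty {y : ℝ | ∃ ξ : ℝ, 0 ≤ ξ ∧
        y = (min w (1 - w) * (ξ + 1) ^ N + max w (1 - w) * ξ ^ N) ^ ((N - 1) / N) /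
        ((ξ + 1) ^ N - ξ ^ N)} := ⟨_, ⟨0, le_refl 0, rfl⟩⟩
    have hinf := le_csInf hne hsetbd
    calc N / D * w ^ (1 - 1 / N) * (1 - C * w ^ (1 / N))
        = N / D * (w ^ (1 - 1 / N) * (1 - C * w ^ (1 / N))) := by ring
      _ ≤ N / D * sInf _ := mul_le_mul_of_nonneg_left hinf (by positivity)
  · -- the G_N estimate
    refine le_csInf ⟨_, ⟨0, le_refl 0, rfl⟩⟩ ?_
    rintro y ⟨ξ, hξ, rfl⟩
    exact hG ξ hξ
end
end

section
/- Fix a real number N > 1. For every ε > 0 there exist w̄ > 0 and δ̄ > 0 such that for every w ∈ (0, w̄] and every ξ ≥ 0 with G_N(ξ, w) ≤ 1 + δ̄, one has ξ ≤ (1+ε)·w^{1/N}. -/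
noncomputable section

/-- Bernoulli-type bound: `(a+1)^N - a^N ≤ N * (a+1)^(N-1)` for real `N > 1`. -/
lemma rpow_succ_sub_rpow_le (N : ℝ) (hN : 1 < N) (a : ℝ) (ha : 0 ≤ a) :
    (a + 1) ^ N - a ^ N ≤ N * (a + 1) ^ (N - 1) := by
  have hb0 : (0:ℝ) < a + 1 := by linarith
  have hab : a / (a + 1) - 1 = -(1 / (a + 1)) := by
    field_simp
    ring
  have hber : 1 + N * (a / (a + 1) - 1) ≤ (1 + (a / (a + 1) - 1)) ^ N := by
    refine one_add_mul_self_le_rpow_one_add ?_ hN.le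
    rw [hab]
    have h1 : 1 / (a + 1) ≤ 1 := by rw [div_le_one hb0]; linarith
    linarith
  have h1 : (1 : ℝ) + (a / (a + 1) - 1) = a / (a + 1) := by ring
  rw [h1, Real.div_rpow ha hb0.le] at hber
  have hBN : (0:ℝ) < (a + 1) ^ N := Real.rpow_pos_of_pos hb0 N
  have hbN1 : (a + 1) ^ (N - 1) = (a + 1) ^ N / (a + 1) := by
    rw [Real.rpow_sub hb0, Real.rpow_one]
  have hkey : (a + 1) ^ N * (1 + N * (a / (a + 1) - 1)) ≤ a ^ N := by
    calc (a + 1) ^ N * (1 + N * (a / (a + 1) - 1))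
        ≤ (a + 1) ^ N * (a ^ N / (a + 1) ^ N) :=
          mul_le_mul_of_nonneg_left hber hBN.le
      _ = a ^ N := by field_simp
  rw [hab] at hkey
  rw [hbN1]
  have hexp : (a + 1) ^ N * (1 + N * -(1 / (a + 1)))
      = (a + 1) ^ N - N * ((a + 1) ^ N / (a + 1)) := by ring
  rw [hexp] at hkey
  linarith

set_option maxHeartbeats 1000000 in
/-- If `G_N(ξ, w)` is close to `1` and `w` is small, then `ξ ≤ (1+ε) w^{1/N}`. -/
theorem xi_small_of_GN_close_to_one (N : ℝ) (hN : 1 < N) :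
    ∀ ε : ℝ, 0 < ε → ∃ wbar : ℝ, 0 < wbar ∧ ∃ δbar : ℝ, 0 < δbar ∧
      ∀ w : ℝ, 0 < w → w ≤ wbar → ∀ ξ : ℝ, 0 ≤ ξ →
        GN N ξ w ≤ 1 + δbar → ξ ≤ (1 + ε) * w ^ (1 / N) := by
  intro ε hε
  have hN0 : (0:ℝ) < N := by linarith
  have hNne : N ≠ 0 := ne_of_gt hN0
  have hN1 : (0:ℝ) < N - 1 := by linarith
  set p : ℝ := (N - 1) / N with hp
  have hp0 : 0 < p := by positivity
  have hNp : N * p = N - 1 := by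
    rw [hp, mul_comm, div_mul_cancel₀ _ hNne]
  have hq1 : N / (N - 1) * p = 1 := by
    rw [hp, div_mul_div_comm, mul_comm N (N - 1), div_self (mul_pos hN1 hN0).ne']
  -- the constant c > 1
  have hE0 : (0:ℝ) < (1 + ε) ^ N := Real.rpow_pos_of_pos (by linarith) N
  set c : ℝ := (1 + (1 + ε) ^ N / 2) ^ p with hc
  have hc1 : 1 < c := by
    rw [hc, Real.one_lt_rpow_iff_of_pos (by linarith)]
    exact Or.inl ⟨by linarith, hp0⟩
  have hcle : ∀ x : ℝ, 1 + (1 + ε) ^ N / 2 ≤ x → c ≤ x ^ p := by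
    intro x hx
    rw [hc]
    exact Real.rpow_le_rpow (by positivity) hx hp0.le
  set d : ℝ := Real.sqrt c with hd
  have hd1 : 1 < d := by
    rw [hd, show (1:ℝ) = Real.sqrt 1 by simp]
    exact Real.sqrt_lt_sqrt (by norm_num) hc1
  have hd0 : (0:ℝ) < d := by linarith
  have hdd : d * d = c := Real.mul_self_sqrt (by linarith)
  -- the threshold ξ₀
  set ξ₀ : ℝ := d ^ (1 / N) - 1 with hξ₀
  have hx00 : 0 < ξ₀ := by
    have : 1 < d ^ (1 / N) := by
      rw [Real.one_lt_rpow_iff_of_pos hd0]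
      exact Or.inl ⟨hd1, by positivity⟩
    simp only [hξ₀]; linarith
  have hx0d : (ξ₀ + 1) ^ N = d := by
    simp only [hξ₀, sub_add_cancel]
    rw [← Real.rpow_mul hd0.le, one_div_mul_cancel hNne, Real.rpow_one]
  set r₁ : ℝ := ξ₀ / (ξ₀ + 1) with hr₁
  have hr₁0 : 0 < r₁ := by positivity
  have hr₁N : 0 < r₁ ^ (N - 1) := Real.rpow_pos_of_pos hr₁0 (N - 1)
  set M : ℝ := 2 * N / r₁ ^ (N - 1) + 1 with hM
  have hM1 : (1:ℝ) ≤ M := by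
    have : (0:ℝ) ≤ 2 * N / r₁ ^ (N - 1) := by positivity
    simp only [hM]; linarith
  have hM0 : (0:ℝ) < M := by linarith
  have hMP : (0:ℝ) < M ^ (N / (N - 1)) := Real.rpow_pos_of_pos hM0 _
  have hMr : M * r₁ ^ (N - 1) = 2 * N + r₁ ^ (N - 1) := by
    rw [hM]; field_simp
  -- choose wbar and δbar
  refine ⟨min (1/2) (1 / (M ^ (N / (N - 1)) + 1)), by positivity,
    min 1 ((d - 1) / 2), by
      have : 0 < (d - 1) / 2 := by linarith
      positivity, ?_⟩
  intro w hw hwle ξ hξ hG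
  set δbar : ℝ := min 1 ((d - 1) / 2) with hδ
  have hδ1 : δbar ≤ 1 := min_le_left _ _
  have hδd : 1 + δbar < d := by
    have : δbar ≤ (d - 1) / 2 := min_le_right _ _
    linarith
  have hw2 : w ≤ 1 / 2 := le_trans hwle (min_le_left _ _)
  have hwM : w ≤ 1 / (M ^ (N / (N - 1)) + 1) := le_trans hwle (min_le_right _ _)
  set t : ℝ := 1 / w - 1 with htdef
  have ht1 : 1 ≤ t := by
    have : (2:ℝ) ≤ 1 / w := by rw [le_div_iff₀ hw]; linarith
    simp only [htdef]; linarith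
  have ht0 : 0 < t := by linarith
  have htM : M ≤ t ^ p := by
    have h1 : M ^ (N / (N - 1)) + 1 ≤ 1 / w := by
      rw [le_div_iff₀ hw]
      have := (le_div_iff₀ (by positivity : (0:ℝ) < M ^ (N / (N - 1)) + 1)).mp hwM
      linarith [mul_comm w (M ^ (N / (N - 1)) + 1)]
    have h2 : M ^ (N / (N - 1)) ≤ t := by simp only [htdef]; linarith
    calc M = M ^ ((N / (N - 1)) * p) := by rw [hq1, Real.rpow_one]
      _ = (M ^ (N / (N - 1))) ^ p := Real.rpow_mul hM0.le _ _
      _ ≤ t ^ p := Real.rpow_le_rpow hMP.le h2 hp0.le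
  have htw : t * ((1 + ε) ^ N * w) = (1 - w) * (1 + ε) ^ N := by
    rw [htdef]; field_simp
  -- basic positivity facts
  have hx1 : (0:ℝ) < ξ + 1 := by linarith
  have hA1 : (1:ℝ) ≤ (ξ + 1) ^ N := Real.one_le_rpow (by linarith) hN0.le
  have hxN0 : (0:ℝ) ≤ ξ ^ N := Real.rpow_nonneg hξ N
  have hD0 : (0:ℝ) < (ξ + 1) ^ N - ξ ^ N := by
    have := Real.rpow_lt_rpow hξ (lt_add_one ξ) hN0
    linarith
  rw [GN, ← htdef, ← hp] at hG
  clear_value t δbar M r₁ ξ₀ d c p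
  by_contra hcon
  push_neg at hcon
  rcases le_or_gt ξ₀ ξ with hcase | hcase
  · -- Case 1: ξ₀ ≤ ξ : then G is very large, contradiction
    have hxpos : 0 < ξ := lt_of_lt_of_le hx00 hcase
    have htx0 : (0:ℝ) ≤ t * ξ ^ N := by positivity
    have hnum : (t * ξ ^ N) ^ p ≤ ((ξ + 1) ^ N + t * ξ ^ N) ^ p :=
      Real.rpow_le_rpow htx0 (by linarith) hp0.le
    have hnum2 : (t * ξ ^ N) ^ p = t ^ p * ξ ^ (N - 1) := by
      rw [Real.mul_rpow ht0.le hxN0, ← Real.rpow_mul hξ, hNp]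
    have hden : (ξ + 1) ^ N - ξ ^ N ≤ N * (ξ + 1) ^ (N - 1) :=
      rpow_succ_sub_rpow_le N hN ξ hξ
    have hxP : (0:ℝ) < (ξ + 1) ^ (N - 1) := Real.rpow_pos_of_pos hx1 (N - 1)
    have hchain : t ^ p * ξ ^ (N - 1) / (N * (ξ + 1) ^ (N - 1)) ≤ 1 + δbar := by
      calc t ^ p * ξ ^ (N - 1) / (N * (ξ + 1) ^ (N - 1))
          ≤ ((ξ + 1) ^ N + t * ξ ^ N) ^ p / ((ξ + 1) ^ N - ξ ^ N) :=
            div_le_div₀ (Real.rpow_nonneg (by linarith) p)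
              (by rw [← hnum2]; exact hnum) hD0 hden
        _ ≤ 1 + δbar := hG
    -- but the LHS is > 2
    have hr : r₁ ≤ ξ / (ξ + 1) := by
      rw [hr₁, div_le_div_iff₀ (by linarith) hx1]
      linarith
    have hrN : r₁ ^ (N - 1) ≤ (ξ / (ξ + 1)) ^ (N - 1) :=
      Real.rpow_le_rpow hr₁0.le hr hN1.le
    have heq : t ^ p * ξ ^ (N - 1) / (N * (ξ + 1) ^ (N - 1))
        = t ^ p * (ξ / (ξ + 1)) ^ (N - 1) / N := by
      rw [Real.div_rpow hξ hx1.le]; ring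
    have hbig : 2 < t ^ p * (ξ / (ξ + 1)) ^ (N - 1) / N := by
      rw [lt_div_iff₀ hN0]
      have h1 : M * r₁ ^ (N - 1) ≤ t ^ p * (ξ / (ξ + 1)) ^ (N - 1) :=
        mul_le_mul htM hrN hr₁N.le (by positivity)
      linarith [hr₁N]
    rw [heq] at hchain
    linarith
  · -- Case 2: ξ < ξ₀
    have hwN : (0:ℝ) < w ^ (1 / N) := Real.rpow_pos_of_pos hw _
    have hLHS0 : (0:ℝ) ≤ (1 + ε) * w ^ (1 / N) := by positivity
    have htx : (1 + ε) ^ N * w < ξ ^ N := by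
      have := Real.rpow_lt_rpow hLHS0 hcon hN0
      rwa [Real.mul_rpow (by linarith) hwN.le, ← Real.rpow_mul hw.le,
        one_div_mul_cancel hNne, Real.rpow_one] at this
    have ht2 : (1 + ε) ^ N / 2 ≤ t * ξ ^ N := by
      have h1 : t * ((1 + ε) ^ N * w) ≤ t * ξ ^ N :=
        mul_le_mul_of_nonneg_left htx.le ht0.le
      rw [htw] at h1
      have h2 : 1 / 2 * (1 + ε) ^ N ≤ (1 - w) * (1 + ε) ^ N :=
        mul_le_mul_of_nonneg_right (by linarith) hE0.le
      linarith
    have hnum : c ≤ ((ξ + 1) ^ N + t * ξ ^ N) ^ p :=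
      hcle _ (by linarith)
    have hden : (ξ + 1) ^ N - ξ ^ N ≤ d := by
      have h1 : (ξ + 1) ^ N ≤ (ξ₀ + 1) ^ N :=
        Real.rpow_le_rpow hx1.le (by linarith) hN0.le
      rw [hx0d] at h1
      linarith
    have hchain : c / d ≤ 1 + δbar := by
      calc c / d ≤ ((ξ + 1) ^ N + t * ξ ^ N) ^ p / ((ξ + 1) ^ N - ξ ^ N) :=
            div_le_div₀ (Real.rpow_nonneg (by positivity) p) hnum hD0 hden
        _ ≤ 1 + δbar := hG
    have hcd : c / d = d := by
      rw [← hdd, mul_div_assoc, div_self hd0.ne', mul_one]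
    rw [hcd] at hchain
    linarith
end
end

section
/- Fix a real number N > 1, D > 0, ξ ≥ 0, and v ∈ (0,1). For every interval set E ⊆ [0,D] with ∫_E h_{N,D}(ξ,x) dx = v, the weighted perimeter satisfies P_{h_{N,D}(ξ,·)}(E) ≥ h_{N,D}(ξ, r_{N,D}(ξ, min{v, 1−v})). Moreover, equality holds only if, up to a Lebesgue-null set, E = [0, r_{N,D}(ξ,v)] in case v ≤ 1/2, or E = [r_{N,D}(ξ,1−v), D] in case v ≥ 1/2. -/
open MeasureTheory
open scoped Classical

noncomputable section

/-- The model density `h_{N,D}(ξ, ·)` on `[0, D]`. -/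
def modelDensity (N D ξ x : ℝ) : ℝ :=
  (N / D ^ N) * (x + ξ * D) ^ (N - 1) / ((ξ + 1) ^ N - ξ ^ N)

/-- The radius `r_{N,D}(ξ, v)`, the unique `r` with `∫_0^r h_{N,D}(ξ, x) dx = v`. -/
def modelRadius (N D ξ v : ℝ) : ℝ :=
  D * ((v * (1 + ξ) ^ N + (1 - v) * ξ ^ N) ^ (1 / N) - ξ)

section Aux

variable {N D ξ : ℝ}

lemma mir_K_pos (hN : 1 < N) (hξ : 0 ≤ ξ) : 0 < (ξ + 1) ^ N - ξ ^ N :=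
  sub_pos.2 (Real.rpow_lt_rpow hξ (by linarith) (by linarith))

lemma mir_density_nonneg (hN : 1 < N) (hD : 0 < D) (hξ : 0 ≤ ξ) {x : ℝ} (hx : 0 ≤ x) :
    0 ≤ modelDensity N D ξ x := by
  have h1 : (0:ℝ) < D ^ N := Real.rpow_pos_of_pos hD N
  have h2 : (0:ℝ) ≤ (x + ξ * D) ^ (N - 1) :=
    Real.rpow_nonneg (by nlinarith [mul_nonneg hξ hD.le]) _
  exact div_nonneg (mul_nonneg (div_nonneg (by linarith) h1.le) h2) (mir_K_pos hN hξ).le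

lemma mir_density_pos (hN : 1 < N) (hD : 0 < D) (hξ : 0 ≤ ξ) {x : ℝ} (hx : 0 < x) :
    0 < modelDensity N D ξ x := by
  have h1 : (0:ℝ) < D ^ N := Real.rpow_pos_of_pos hD N
  have h2 : (0:ℝ) < (x + ξ * D) ^ (N - 1) :=
    Real.rpow_pos_of_pos (by nlinarith [mul_nonneg hξ hD.le]) _
  exact div_pos (mul_pos (div_pos (by linarith) h1) h2) (mir_K_pos hN hξ)


lemma mir_density_mono (hN : 1 < N) (hD : 0 < D) (hξ : 0 ≤ ξ) {x y : ℝ}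
    (hx : 0 ≤ x) (hxy : x ≤ y) : modelDensity N D ξ x ≤ modelDensity N D ξ y := by
  have h2 : (x + ξ*D)^(N-1) ≤ (y+ξ*D)^(N-1) :=
    Real.rpow_le_rpow (by nlinarith [mul_nonneg hξ hD.le]) (by linarith) (by linarith)
  have hC : 0 ≤ N / D^N := div_nonneg (by linarith) (Real.rpow_pos_of_pos hD N).le
  have hK := mir_K_pos hN hξ
  unfold modelDensity
  gcongr

lemma mir_density_strict (hN : 1 < N) (hD : 0 < D) (hξ : 0 ≤ ξ) {x y : ℝ}
    (hx : 0 ≤ x) (hxy : x < y) : modelDensity N D ξ x < modelDensity N D ξ y := by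
  have h2 : (x + ξ*D)^(N-1) < (y+ξ*D)^(N-1) :=
    Real.rpow_lt_rpow (by nlinarith [mul_nonneg hξ hD.le]) (by linarith) (by linarith)
  have hC : 0 < N / D^N := div_pos (by linarith) (Real.rpow_pos_of_pos hD N)
  have hK := mir_K_pos hN hξ
  unfold modelDensity
  gcongr

lemma mir_density_inj (hN : 1 < N) (hD : 0 < D) (hξ : 0 ≤ ξ) {x y : ℝ}
    (hx : 0 ≤ x) (hy : 0 ≤ y) (e : modelDensity N D ξ x = modelDensity N D ξ y) : x = y := by
  rcases lt_trichotomy x y with h | h | h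
  · exact absurd e (mir_density_strict hN hD hξ hx h).ne
  · exact h
  · exact absurd e.symm (mir_density_strict hN hD hξ hy h).ne

lemma mir_density_continuous (hN : 1 < N) : Continuous (modelDensity N D ξ) := by
  have h1 : Continuous fun x : ℝ => x ^ (N-1) :=
    continuous_iff_continuousAt.2 fun x => Real.continuousAt_rpow_const x (N-1) (Or.inr (by linarith))
  have h2 : Continuous fun x : ℝ => (x + ξ*D) ^ (N-1) := h1.comp (continuous_id.add continuous_const)
  exact (continuous_const.mul h2).div_const _

lemma mir_integral_Ioo (hN : 1 < N) (hD : 0 < D) (hξ : 0 ≤ ξ) {s t : ℝ} (hst : s ≤ t) :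
    ∫ x in Set.Ioo s t, modelDensity N D ξ x
      = ((t + ξ*D)^N - (s + ξ*D)^N) / (D^N * ((ξ+1)^N - ξ^N)) := by
  have hK := (mir_K_pos hN hξ).ne'
  have hDN : (D:ℝ) ^ N ≠ 0 := (Real.rpow_pos_of_pos hD N).ne'
  have hder : ∀ x ∈ Set.uIcc s t,
      HasDerivAt (fun y => (y + ξ*D)^N / (D^N * ((ξ+1)^N - ξ^N))) (modelDensity N D ξ x) x := by
    intro x _
    have h1 : HasDerivAt (fun y : ℝ => y + ξ*D) 1 x := (hasDerivAt_id x).add_const _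
    have h2 : HasDerivAt (fun y : ℝ => (y + ξ*D)^N) (N * (x + ξ*D)^(N-1) * 1) x :=
      (Real.hasDerivAt_rpow_const (Or.inr hN.le)).comp x h1
    have h3 := h2.div_const (D^N * ((ξ+1)^N - ξ^N))
    refine h3.congr_deriv ?_
    unfold modelDensity
    field_simp
  have hint := intervalIntegral.integral_eq_sub_of_hasDerivAt hder
    ((mir_density_continuous hN).intervalIntegrable s t)
  rw [intervalIntegral.integral_of_le hst, MeasureTheory.integral_Ioc_eq_integral_Ioo] at hint
  rw [hint]
  ring

lemma mir_pow_inv (hN : 1 < N) {c : ℝ} (hc : 0 ≤ c) : (c ^ N) ^ (1/N) = c := by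
  have hNne : N ≠ 0 := ne_of_gt (by linarith)
  rw [← Real.rpow_mul hc, mul_one_div, div_self hNne, Real.rpow_one]

lemma mir_s_ge (hN : 1 < N) (hξ : 0 ≤ ξ) {w : ℝ} (hw0 : 0 ≤ w) :
    ξ ^ N ≤ w * (1+ξ)^N + (1-w) * ξ^N := by
  have hK := mir_K_pos hN hξ
  rw [add_comm ξ 1] at hK
  nlinarith

lemma mir_s_le (hN : 1 < N) (hξ : 0 ≤ ξ) {w : ℝ} (hw1 : w ≤ 1) :
    w * (1+ξ)^N + (1-w) * ξ^N ≤ (1+ξ)^N := by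
  have hK := mir_K_pos hN hξ
  rw [add_comm ξ 1] at hK
  nlinarith

lemma mir_radius_nonneg (hN : 1 < N) (hD : 0 < D) (hξ : 0 ≤ ξ) {w : ℝ} (hw0 : 0 ≤ w) :
    0 ≤ modelRadius N D ξ w := by
  have h1 : ξ ≤ (w * (1+ξ)^N + (1-w) * ξ^N) ^ (1/N) := by
    calc ξ = (ξ^N)^(1/N) := (mir_pow_inv hN hξ).symm
    _ ≤ _ := Real.rpow_le_rpow (Real.rpow_nonneg hξ N) (mir_s_ge hN hξ hw0)
      (by positivity)
  unfold modelRadius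
  have := hD.le
  nlinarith

lemma mir_radius_le (hN : 1 < N) (hD : 0 < D) (hξ : 0 ≤ ξ) {w : ℝ} (hw0 : 0 ≤ w) (hw1 : w ≤ 1) :
    modelRadius N D ξ w ≤ D := by
  have h1 : (w * (1+ξ)^N + (1-w) * ξ^N) ^ (1/N) ≤ 1 + ξ := by
    calc (w * (1+ξ)^N + (1-w) * ξ^N) ^ (1/N)
        ≤ ((1+ξ)^N)^(1/N) := Real.rpow_le_rpow
          ((Real.rpow_nonneg hξ N).trans (mir_s_ge hN hξ hw0)) (mir_s_le hN hξ hw1) (by positivity)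
    _ = 1 + ξ := mir_pow_inv hN (by linarith)
  unfold modelRadius
  nlinarith

lemma mir_radius_strict (hN : 1 < N) (hD : 0 < D) (hξ : 0 ≤ ξ) {w₁ w₂ : ℝ}
    (hw0 : 0 ≤ w₁) (h12 : w₁ < w₂) : modelRadius N D ξ w₁ < modelRadius N D ξ w₂ := by
  have hK := mir_K_pos hN hξ
  rw [add_comm ξ 1] at hK
  have h1 : w₁ * (1+ξ)^N + (1-w₁) * ξ^N < w₂ * (1+ξ)^N + (1-w₂) * ξ^N := by nlinarith
  have h0 : 0 ≤ w₁ * (1+ξ)^N + (1-w₁) * ξ^N :=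
    (Real.rpow_nonneg hξ N).trans (mir_s_ge hN hξ hw0)
  have h2 := Real.rpow_lt_rpow h0 h1 (by positivity : (0:ℝ) < 1/N)
  unfold modelRadius
  nlinarith

lemma mir_radius_mono (hN : 1 < N) (hD : 0 < D) (hξ : 0 ≤ ξ) {w₁ w₂ : ℝ}
    (hw0 : 0 ≤ w₁) (h12 : w₁ ≤ w₂) : modelRadius N D ξ w₁ ≤ modelRadius N D ξ w₂ := by
  rcases h12.lt_or_eq with h | h
  · exact (mir_radius_strict hN hD hξ hw0 h).le
  · rw [h]

lemma mir_radius_zero (hN : 1 < N) (hD : 0 < D) (hξ : 0 ≤ ξ) : modelRadius N D ξ 0 = 0 := by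
  unfold modelRadius
  rw [show (0:ℝ) * (1+ξ)^N + (1-0) * ξ^N = ξ^N by ring, mir_pow_inv hN hξ]
  ring

lemma mir_radius_one (hN : 1 < N) (hD : 0 < D) (hξ : 0 ≤ ξ) : modelRadius N D ξ 1 = D := by
  unfold modelRadius
  rw [show (1:ℝ) * (1+ξ)^N + (1-1) * ξ^N = (1+ξ)^N by ring, mir_pow_inv hN (by linarith : (0:ℝ) ≤ 1 + ξ)]
  ring

lemma mir_radius_pos (hN : 1 < N) (hD : 0 < D) (hξ : 0 ≤ ξ) {w : ℝ} (hw : 0 < w) :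
    0 < modelRadius N D ξ w := by
  have := mir_radius_strict hN hD hξ (le_refl 0) hw
  rwa [mir_radius_zero hN hD hξ] at this

lemma mir_radius_lt_D (hN : 1 < N) (hD : 0 < D) (hξ : 0 ≤ ξ) {w : ℝ} (hw0 : 0 ≤ w) (hw : w < 1) :
    modelRadius N D ξ w < D := by
  have := mir_radius_strict hN hD hξ hw0 hw
  rwa [mir_radius_one hN hD hξ] at this

lemma mir_radius_pow (hN : 1 < N) (hD : 0 < D) (hξ : 0 ≤ ξ) {w : ℝ} (hw0 : 0 ≤ w) :
    (modelRadius N D ξ w + ξ * D) ^ N = D ^ N * (w * (ξ+1)^N + (1-w) * ξ^N) := by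
  have hs : 0 ≤ w * (1+ξ)^N + (1-w) * ξ^N :=
    (Real.rpow_nonneg hξ N).trans (mir_s_ge hN hξ hw0)
  have h1 : modelRadius N D ξ w + ξ * D = D * (w * (1+ξ)^N + (1-w) * ξ^N)^(1/N) := by
    unfold modelRadius; ring
  rw [h1, Real.mul_rpow hD.le (Real.rpow_nonneg hs _)]
  rw [← Real.rpow_mul hs, one_div_mul_cancel (ne_of_gt (by linarith : (0:ℝ) < N)), Real.rpow_one]
  rw [add_comm ξ 1]

lemma mir_integral_radius (hN : 1 < N) (hD : 0 < D) (hξ : 0 ≤ ξ) {w : ℝ}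
    (hw0 : 0 ≤ w) (hw1 : w ≤ 1) :
    ∫ x in Set.Ioo 0 (modelRadius N D ξ w), modelDensity N D ξ x = w := by
  have hK := mir_K_pos hN hξ
  have hDN : (0:ℝ) < D ^ N := Real.rpow_pos_of_pos hD N
  rw [mir_integral_Ioo hN hD hξ (mir_radius_nonneg hN hD hξ hw0),
    mir_radius_pow hN hD hξ hw0, zero_add, Real.mul_rpow hξ hD.le]
  field_simp
  ring

lemma mir_G_lt (hN : 1 < N) (hD : 0 < D) (hξ : 0 ≤ ξ) {x y : ℝ}
    (hx : 0 ≤ x) (hxy : x < y) : (x + ξ*D) ^ N < (y + ξ*D) ^ N :=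
  Real.rpow_lt_rpow (by nlinarith [mul_nonneg hξ hD.le]) (by linarith) (by linarith)

end Aux

/-- A decomposition of an "interval set" `E ⊆ [0, D']`: up to a Lebesgue-null set, `E` is an at
most countable union of pairwise separated open intervals (degenerate intervals `a i = b i`
are allowed, so that finite families are covered); the summability field expresses that the
perimeter of `E` with respect to the density `h` is a (finite) real number. -/
structure IntervalDecomp (D' : ℝ) (h : ℝ → ℝ) (E : Set ℝ) where
  a : ℕ → ℝ
  b : ℕ → ℝ
  nonneg : ∀ i, 0 ≤ a i
  le : ∀ i, a i ≤ b i
  le_top : ∀ i, b i ≤ D'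
  sep : ∀ i j, i ≠ j → b i ≤ a j ∨ b j ≤ a i
  aeEq : E =ᵐ[volume] ⋃ i, Set.Ioo (a i) (b i)
  summablePerim : Summable fun i =>
    (if a i < b i ∧ a i ≠ 0 then h (a i) else 0) +
    (if a i < b i ∧ b i ≠ D' then h (b i) else 0)

/-- The weighted perimeter `P_h(E) = Σ_{i : a_i ≠ 0} h(a_i) + Σ_{i : b_i ≠ D'} h(b_i)`
of an interval set, computed from a decomposition. -/
def IntervalDecomp.perim {D' : ℝ} {h : ℝ → ℝ} {E : Set ℝ}
    (d : IntervalDecomp D' h E) : ℝ :=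
  ∑' i, ((if d.a i < d.b i ∧ d.a i ≠ 0 then h (d.a i) else 0) +
         (if d.a i < d.b i ∧ d.b i ≠ D' then h (d.b i) else 0))

/-- Isoperimetric inequality in the model space, together with the characterization of
equality: optimal sets are `[0, r_{N,D}(ξ,v)]` (if `v ≤ 1/2`) or `[r_{N,D}(ξ,1-v), D]`
(if `v ≥ 1/2`), up to null sets. -/
theorem model_isoperimetric_inequality_and_rigidity
    (N D ξ v : ℝ) (hN : 1 < N) (hD : 0 < D) (hξ : 0 ≤ ξ)
    (hv : v ∈ Set.Ioo (0:ℝ) 1)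
    (E : Set ℝ) (hE : E ⊆ Set.Icc 0 D)
    (d : IntervalDecomp D (modelDensity N D ξ) E)
    (hm : (∫ x in E, modelDensity N D ξ x) = v) :
    modelDensity N D ξ (modelRadius N D ξ (min v (1 - v))) ≤ d.perim ∧
      (d.perim = modelDensity N D ξ (modelRadius N D ξ (min v (1 - v))) →
        (v ≤ 1 / 2 ∧ E =ᵐ[volume] Set.Ioo 0 (modelRadius N D ξ v)) ∨
        (1 / 2 ≤ v ∧ E =ᵐ[volume] Set.Ioo (modelRadius N D ξ (1 - v)) D)) := by
  obtain ⟨hv0, hv1⟩ := hv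
  have hK := mir_K_pos hN hξ
  have hDN : (0:ℝ) < D ^ N := Real.rpow_pos_of_pos hD N
  have hc : 0 < D ^ N * ((ξ+1)^N - ξ^N) := mul_pos hDN hK
  have hmin0 : 0 < min v (1 - v) := lt_min hv0 (by linarith)
  have hmin1 : min v (1-v) ≤ 1 := le_trans (min_le_left _ _) hv1.le
  set U : Set ℝ := ⋃ i, Set.Ioo (d.a i) (d.b i) with hUdef
  have hUmeas : MeasurableSet U := (isOpen_iUnion fun i => isOpen_Ioo).measurableSet
  have hb0 : ∀ i, 0 ≤ d.b i := fun i => (d.nonneg i).trans (d.le i)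
  have hUsub : U ⊆ Set.Icc 0 D := by
    rintro x hx
    simp only [hUdef, Set.mem_iUnion] at hx
    obtain ⟨i, hx⟩ := hx
    exact ⟨(d.nonneg i).trans hx.1.le, hx.2.le.trans (d.le_top i)⟩
  have hintegD : IntegrableOn (modelDensity N D ξ) (Set.Icc 0 D) volume :=
    (mir_density_continuous hN).integrableOn_Icc
  have hintegU : IntegrableOn (modelDensity N D ξ) U volume := hintegD.mono_set hUsub
  have hUnonneg : 0 ≤ᵐ[volume.restrict U] modelDensity N D ξ :=
    (ae_restrict_iff' hUmeas).2
      (Filter.Eventually.of_forall fun x hx => mir_density_nonneg hN hD hξ (hUsub hx).1)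
  have hintU : ∫ x in U, modelDensity N D ξ x = v :=
    (setIntegral_congr_set d.aeEq).symm.trans hm
  set f : ℕ → ℝ := fun i =>
    (if d.a i < d.b i ∧ d.a i ≠ 0 then modelDensity N D ξ (d.a i) else 0) +
    (if d.a i < d.b i ∧ d.b i ≠ D then modelDensity N D ξ (d.b i) else 0) with hfdef
  have hfnonneg : ∀ i, 0 ≤ f i := by
    intro i
    refine add_nonneg ?_ ?_ <;> split_ifs <;>
      first
        | exact mir_density_nonneg hN hD hξ (d.nonneg i)
        | exact mir_density_nonneg hN hD hξ (hb0 i)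
        | exact le_rfl
  have hsumf : Summable f := d.summablePerim
  have hperim : d.perim = ∑' i, f i := rfl
  have hfle : ∀ i, f i ≤ d.perim := by
    intro i; rw [hperim]; exact hsumf.le_tsum i fun j _ => hfnonneg j
  have hfb : ∀ j, d.a j < d.b j → d.b j ≠ D →
      modelDensity N D ξ (d.b j) ≤ f j := by
    intro j hj hjD
    have h1 : 0 ≤ (if d.a j < d.b j ∧ d.a j ≠ 0 then modelDensity N D ξ (d.a j) else 0) := by
      split_ifs with hcnd
      · exact mir_density_nonneg hN hD hξ (d.nonneg j)
      · exact le_rfl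
    have h2 : (if d.a j < d.b j ∧ d.b j ≠ D then modelDensity N D ξ (d.b j) else 0)
        = modelDensity N D ξ (d.b j) := if_pos ⟨hj, hjD⟩
    simp only [hfdef]
    rw [h2]
    linarith
  have key_int : ∀ w, 0 ≤ w → w ≤ 1 →
      ((modelRadius N D ξ w + ξ*D)^N - (0 + ξ*D)^N) / (D^N * ((ξ+1)^N - ξ^N)) = w := by
    intro w hw0 hw1
    rw [← mir_integral_Ioo hN hD hξ (mir_radius_nonneg hN hD hξ hw0)]
    exact mir_integral_radius hN hD hξ hw0 hw1
  by_cases hA : ∃ i, d.a i < d.b i ∧ d.b i = D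
  · -- Case A : some interval touches D
    obtain ⟨i₀, hab0, hbD⟩ := hA
    have hsubA : Set.Ioo (d.a i₀) D ⊆ U := by
      intro x hx
      rw [hUdef]
      exact Set.mem_iUnion.2 ⟨i₀, hx.1, hx.2.trans_le hbD.ge⟩
    have hIa : ∫ x in Set.Ioo (d.a i₀) D, modelDensity N D ξ x ≤ v := by
      rw [← hintU]
      exact setIntegral_mono_set hintegU hUnonneg hsubA.eventuallyLE
    have haD : d.a i₀ ≤ D := le_trans (d.le i₀) (d.le_top i₀)
    have ha0ltD : d.a i₀ < D := hab0.trans_le hbD.le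
    have hIa2 : ((D + ξ*D)^N - (d.a i₀ + ξ*D)^N) / (D^N * ((ξ+1)^N - ξ^N)) ≤ v :=
      le_trans (le_of_eq (mir_integral_Ioo hN hD hξ haD).symm) hIa
    have hIa' : (D + ξ*D)^N - (d.a i₀ + ξ*D)^N ≤ v * (D^N * ((ξ+1)^N - ξ^N)) :=
      (div_le_iff₀ hc).1 hIa2
    have eD : (D + ξ*D)^N - (0 + ξ*D)^N = 1 * (D^N * ((ξ+1)^N - ξ^N)) := by
      have h1 := key_int 1 zero_le_one le_rfl
      rw [mir_radius_one hN hD hξ] at h1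
      exact (div_eq_iff hc.ne').1 h1
    have erv : (modelRadius N D ξ (1-v) + ξ*D)^N - (0 + ξ*D)^N
        = (1-v) * (D^N * ((ξ+1)^N - ξ^N)) :=
      (div_eq_iff hc.ne').1 (key_int (1-v) (by linarith) (by linarith))
    have hGa : (modelRadius N D ξ (1-v) + ξ*D)^N ≤ (d.a i₀ + ξ*D)^N := by linarith
    have hra : modelRadius N D ξ (1-v) ≤ d.a i₀ := by
      by_contra hcon
      push_neg at hcon
      exact absurd hGa (not_le.2 (mir_G_lt hN hD hξ (d.nonneg i₀) hcon))
    have ha0pos : 0 < d.a i₀ :=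
      lt_of_lt_of_le (mir_radius_pos hN hD hξ (by linarith : (0:ℝ) < 1 - v)) hra
    have hfi0 : f i₀ = modelDensity N D ξ (d.a i₀) := by
      simp only [hfdef]
      rw [if_pos ⟨hab0, ha0pos.ne'⟩, if_neg (by simp [hbD])]
      ring
    have hchain1 : modelDensity N D ξ (modelRadius N D ξ (min v (1-v)))
        ≤ modelDensity N D ξ (modelRadius N D ξ (1-v)) :=
      mir_density_mono hN hD hξ (mir_radius_nonneg hN hD hξ hmin0.le)
        (mir_radius_mono hN hD hξ hmin0.le (min_le_right _ _))
    have hchain2 : modelDensity N D ξ (modelRadius N D ξ (1-v)) ≤ modelDensity N D ξ (d.a i₀) :=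
      mir_density_mono hN hD hξ (mir_radius_nonneg hN hD hξ (by linarith)) hra
    have hineq : modelDensity N D ξ (modelRadius N D ξ (min v (1-v))) ≤ d.perim :=
      le_trans (hchain1.trans hchain2) (hfi0 ▸ hfle i₀)
    refine ⟨hineq, fun heq => ?_⟩
    have hub : modelDensity N D ξ (d.a i₀)
        ≤ modelDensity N D ξ (modelRadius N D ξ (min v (1-v))) := by
      rw [← heq, ← hfi0]; exact hfle i₀
    have hEq1 : modelDensity N D ξ (d.a i₀)
        = modelDensity N D ξ (modelRadius N D ξ (min v (1-v))) :=
      le_antisymm hub (hchain1.trans hchain2)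
    have hveq : 1 - v ≤ v := by
      by_contra hcon
      push_neg at hcon
      have hm' : min v (1-v) = v := min_eq_left (by linarith)
      rw [hm'] at hEq1
      have hstr : modelDensity N D ξ (modelRadius N D ξ v)
          < modelDensity N D ξ (modelRadius N D ξ (1-v)) :=
        mir_density_strict hN hD hξ (mir_radius_nonneg hN hD hξ hv0.le)
          (mir_radius_strict hN hD hξ hv0.le hcon)
      linarith
    have hveq2 : (1:ℝ)/2 ≤ v := by linarith
    have hmin_eq : min v (1-v) = 1-v := min_eq_right hveq
    rw [hmin_eq] at hEq1 heq
    have ha0eq : d.a i₀ = modelRadius N D ξ (1-v) :=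
      mir_density_inj hN hD hξ ha0pos.le (mir_radius_nonneg hN hD hξ (by linarith)) hEq1
    have hfi0perim : f i₀ = d.perim := by rw [hfi0, hEq1, heq]
    have htriv : ∀ j, j ≠ i₀ → ¬ (d.a j < d.b j) := by
      intro j hj habj
      rcases d.sep j i₀ hj with hsep | hsep
      · have hbjD : d.b j ≠ D := by
          intro hEqD; rw [hEqD] at hsep; linarith
        have hfj := hfb j habj hbjD
        have hpos : 0 < modelDensity N D ξ (d.b j) :=
          mir_density_pos hN hD hξ (lt_of_le_of_lt (d.nonneg j) habj)
        have hsum2 : f i₀ + f j ≤ d.perim := by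
          rw [hperim]
          have := Summable.sum_le_tsum ({i₀, j} : Finset ℕ) (fun k _ => hfnonneg k) hsumf
          rwa [Finset.sum_pair (Ne.symm hj)] at this
        linarith [hfi0perim]
      · have := d.le_top j
        rw [hbD] at hsep
        linarith
    have hUeq : U = Set.Ioo (d.a i₀) D := by
      apply Set.Subset.antisymm
      · rintro x hx
        simp only [hUdef, Set.mem_iUnion] at hx
        obtain ⟨j, hxj⟩ := hx
        by_cases hji : j = i₀
        · subst hji; exact ⟨hxj.1, hxj.2.trans_le hbD.le⟩
        · exact absurd (hxj.1.trans hxj.2) (htriv j hji)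
      · exact hsubA
    right
    refine ⟨hveq2, ?_⟩
    have hUeq2 : U = Set.Ioo (modelRadius N D ξ (1-v)) D := by rw [hUeq, ha0eq]
    refine d.aeEq.trans ?_
    rw [← hUdef, hUeq2]
    exact Filter.EventuallyEq.rfl
  · -- Case B : no interval touches D
    push_neg at hA
    have hTne : ∃ i, d.a i < d.b i := by
      by_contra hcon
      push_neg at hcon
      have hUe : U = ∅ := by
        rw [hUdef, Set.iUnion_eq_empty]
        exact fun i => Set.Ioo_eq_empty (not_lt.2 (hcon i))
      rw [hUe] at hintU
      simp at hintU
      linarith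
    haveI hne : Nonempty {i // d.a i < d.b i} := ⟨⟨hTne.choose, hTne.choose_spec⟩⟩
    set t := ⨆ i : {i // d.a i < d.b i}, d.b i with htdef
    have hbdd : BddAbove (Set.range fun i : {i // d.a i < d.b i} => d.b i.1) :=
      ⟨D, by rintro x ⟨i, rfl⟩; exact d.le_top i.1⟩
    have hbt : ∀ i, d.a i < d.b i → d.b i ≤ t := fun i hi => le_ciSup hbdd ⟨i, hi⟩
    have htD : t ≤ D := ciSup_le fun i => d.le_top i.1
    have ht0 : 0 < t := by
      obtain ⟨i, hi⟩ := hTne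
      exact lt_of_le_of_lt (d.nonneg i) (lt_of_lt_of_le hi (hbt i hi))
    have hUsubt : U ⊆ Set.Icc 0 t := by
      rintro x hx
      simp only [hUdef, Set.mem_iUnion] at hx
      obtain ⟨i, hxi⟩ := hx
      have hi : d.a i < d.b i := hxi.1.trans hxi.2
      exact ⟨(d.nonneg i).trans hxi.1.le, hxi.2.le.trans (hbt i hi)⟩
    have hvt : v ≤ ((t + ξ*D)^N - (0 + ξ*D)^N) / (D^N * ((ξ+1)^N - ξ^N)) := by
      rw [← mir_integral_Ioo hN hD hξ ht0.le, ← MeasureTheory.integral_Icc_eq_integral_Ioo,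
        ← hintU]
      exact setIntegral_mono_set (hintegD.mono_set (Set.Icc_subset_Icc le_rfl htD))
        ((ae_restrict_iff' measurableSet_Icc).2
          (Filter.Eventually.of_forall fun x hx => mir_density_nonneg hN hD hξ hx.1))
        hUsubt.eventuallyLE
    have hrvle : modelRadius N D ξ v ≤ t := by
      by_contra hcon
      push_neg at hcon
      have h1 := mir_G_lt hN hD hξ ht0.le hcon
      have h2 : (modelRadius N D ξ v + ξ*D)^N - (0 + ξ*D)^N = v * (D^N * ((ξ+1)^N - ξ^N)) :=
        (div_eq_iff hc.ne').1 (key_int v hv0.le hv1.le)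
      have h3 : v * (D^N * ((ξ+1)^N - ξ^N)) ≤ (t + ξ*D)^N - (0 + ξ*D)^N := (le_div_iff₀ hc).1 hvt
      linarith
    have hkey : ∀ x, 0 ≤ x → x < t → modelDensity N D ξ x ≤ d.perim := by
      intro x hx hxt
      obtain ⟨i, hib⟩ := exists_lt_of_lt_ciSup hxt
      exact le_trans (mir_density_mono hN hD hξ hx hib.le)
        ((hfb i.1 i.2 (hA i.1 i.2)).trans (hfle i.1))
    have hrv0 : 0 < modelRadius N D ξ v := mir_radius_pos hN hD hξ hv0
    have hmain : modelDensity N D ξ (modelRadius N D ξ v) ≤ d.perim := by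
      rcases lt_or_eq_of_le hrvle with hlt | heqt
      · exact hkey _ hrv0.le hlt
      · have htend : Filter.Tendsto (modelDensity N D ξ) (nhdsWithin t (Set.Iio t))
            (nhds (modelDensity N D ξ t)) :=
          ((mir_density_continuous hN).tendsto t).mono_left nhdsWithin_le_nhds
        rw [heqt]
        refine le_of_tendsto htend ?_
        filter_upwards [Ioo_mem_nhdsLT ht0] with x hx
        exact hkey x hx.1.le hx.2
    have hchainB : modelDensity N D ξ (modelRadius N D ξ (min v (1-v)))
        ≤ modelDensity N D ξ (modelRadius N D ξ v) :=
      mir_density_mono hN hD hξ (mir_radius_nonneg hN hD hξ hmin0.le)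
        (mir_radius_mono hN hD hξ hmin0.le (min_le_left _ _))
    refine ⟨hchainB.trans hmain, fun heq => ?_⟩
    have hv2 : v ≤ 1/2 := by
      by_contra hcon
      push_neg at hcon
      have hm' : min v (1-v) = 1-v := min_eq_right (by linarith)
      rw [hm'] at heq
      have hstr : modelDensity N D ξ (modelRadius N D ξ (1-v))
          < modelDensity N D ξ (modelRadius N D ξ v) :=
        mir_density_strict hN hD hξ (mir_radius_nonneg hN hD hξ (by linarith))
          (mir_radius_strict hN hD hξ (by linarith) (by linarith))
      linarith
    have hmin_eq : min v (1-v) = v := min_eq_left (by linarith)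
    rw [hmin_eq] at heq
    have htle : t ≤ modelRadius N D ξ v := by
      refine ciSup_le fun i => ?_
      by_contra hcon
      push_neg at hcon
      have h1 : modelDensity N D ξ (modelRadius N D ξ v) < modelDensity N D ξ (d.b i.1) :=
        mir_density_strict hN hD hξ hrv0.le hcon
      have h2 := (hfb i.1 i.2 (hA i.1 i.2)).trans (hfle i.1)
      linarith
    have hteq : t = modelRadius N D ξ v := le_antisymm htle hrvle
    have hUsubI : U ⊆ Set.Icc 0 (modelRadius N D ξ v) := hteq ▸ hUsubt
    have hintegI : IntegrableOn (modelDensity N D ξ) (Set.Icc 0 (modelRadius N D ξ v)) volume :=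
      hintegD.mono_set (Set.Icc_subset_Icc le_rfl (mir_radius_le hN hD hξ hv0.le hv1.le))
    have hintI : ∫ x in Set.Icc 0 (modelRadius N D ξ v), modelDensity N D ξ x = v := by
      rw [MeasureTheory.integral_Icc_eq_integral_Ioo]
      exact mir_integral_radius hN hD hξ hv0.le hv1.le
    have hintA : ∫ x in Set.Icc 0 (modelRadius N D ξ v) \ U, modelDensity N D ξ x = 0 := by
      rw [integral_diff hUmeas hintegI hUsubI, hintI, hintU, sub_self]
    have hAmeas : MeasurableSet (Set.Icc 0 (modelRadius N D ξ v) \ U) :=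
      measurableSet_Icc.diff hUmeas
    have hAnonneg : 0 ≤ᵐ[volume.restrict (Set.Icc 0 (modelRadius N D ξ v) \ U)]
        modelDensity N D ξ :=
      (ae_restrict_iff' hAmeas).2
        (Filter.Eventually.of_forall fun x hx => mir_density_nonneg hN hD hξ hx.1.1)
    have hAint : IntegrableOn (modelDensity N D ξ) (Set.Icc 0 (modelRadius N D ξ v) \ U) volume :=
      hintegI.mono_set Set.diff_subset
    have hae0 : modelDensity N D ξ =ᵐ[volume.restrict (Set.Icc 0 (modelRadius N D ξ v) \ U)]
        0 := (integral_eq_zero_iff_of_nonneg_ae hAnonneg hAint).1 hintA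
    have hmeasne : MeasurableSet {x : ℝ | modelDensity N D ξ x ≠ 0} :=
      ((mir_density_continuous hN).measurable (measurableSet_singleton 0)).compl
    have h1 : volume ({x : ℝ | modelDensity N D ξ x ≠ 0}
        ∩ (Set.Icc 0 (modelRadius N D ξ v) \ U)) = 0 := by
      simp only [Filter.EventuallyEq, Pi.zero_apply] at hae0
      have := ae_iff.1 hae0
      rwa [MeasureTheory.Measure.restrict_apply hmeasne] at this
    have hAnull : volume (Set.Icc 0 (modelRadius N D ξ v) \ U) = 0 := by
      have hsub2 : Set.Icc 0 (modelRadius N D ξ v) \ U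
          ⊆ ({x : ℝ | modelDensity N D ξ x ≠ 0} ∩ (Set.Icc 0 (modelRadius N D ξ v) \ U))
            ∪ {0} := by
        intro x hx
        by_cases hx0 : x = 0
        · exact Or.inr (by simp [hx0])
        · exact Or.inl ⟨(mir_density_pos hN hD hξ (lt_of_le_of_ne hx.1.1 (Ne.symm hx0))).ne', hx⟩
      refine le_antisymm ?_ zero_le
      calc volume (Set.Icc 0 (modelRadius N D ξ v) \ U)
          ≤ volume (({x : ℝ | modelDensity N D ξ x ≠ 0}
              ∩ (Set.Icc 0 (modelRadius N D ξ v) \ U)) ∪ {0}) := measure_mono hsub2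
        _ ≤ volume ({x : ℝ | modelDensity N D ξ x ≠ 0}
              ∩ (Set.Icc 0 (modelRadius N D ξ v) \ U)) + volume ({0} : Set ℝ) :=
            measure_union_le _ _
        _ = 0 := by rw [h1, Real.volume_singleton, add_zero]
    have hUae : U =ᵐ[volume] Set.Icc 0 (modelRadius N D ξ v) := by
      rw [MeasureTheory.ae_eq_set]
      constructor
      · rw [Set.diff_eq_empty.2 hUsubI]; exact measure_empty
      · exact hAnull
    exact Or.inl ⟨hv2, d.aeEq.trans (hUae.trans Ioo_ae_eq_Icc.symm)⟩
end
end

section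
/- Fix a real number N > 1. For every ε ∈ (0,1) there exist w̄ > 0 and δ̄ > 0 such that for all D ≥ D' > 0, every probability CD(0,N) density h on [0,D'], and every interval set E ⊆ [0,D'] with 0 < m_h(E) ≤ w̄ and Res_h^D(E) ≤ δ̄, one has D' ≥ D·(1 − ε). -/
open MeasureTheory
open scoped Classical

noncomputable section

/-- A `CD(0,N)` density on `[0, D']`: nonnegative on `[0, D']`, positive on `(0, D')`,
and `h^{1/(N-1)}` is concave on `[0, D']`. -/
def IsCDDensity (N D' : ℝ) (h : ℝ → ℝ) : Prop :=
  (∀ x ∈ Set.Icc (0:ℝ) D', 0 ≤ h x) ∧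
  (∀ x ∈ Set.Ioo (0:ℝ) D', 0 < h x) ∧
  ConcaveOn ℝ (Set.Icc (0:ℝ) D') (fun x => h x ^ (1 / (N - 1)))

/-- A probability `CD(0,N)` density on `[0, D']`. -/
def IsProbCDDensity (N D' : ℝ) (h : ℝ → ℝ) : Prop :=
  IsCDDensity N D' h ∧ (∫ x in Set.Icc (0:ℝ) D', h x) = 1

private lemma aux_pow_eq {N : ℝ} (hN : 1 < N) {x : ℝ} (hx : 0 ≤ x) :
    (x ^ (1 / (N - 1))) ^ (N - 1) = x := by
  rw [← Real.rpow_mul hx, one_div, inv_mul_cancel₀ (by linarith : N - 1 ≠ 0), Real.rpow_one]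

private lemma aux_Fincr {θ : ℝ} (hθ0 : 0 < θ) (hθ1 : θ ≤ 1) {A m : ℝ}
    (hA : 0 ≤ A) (hm : 0 ≤ m) (hs : A + m ≤ 1) :
    m ^ θ - m ≤ ((1 - A) ^ θ - (1 - A)) + ((A + m) ^ θ - (A + m)) := by
  have hF : ConcaveOn ℝ (Set.Ici 0) (fun u : ℝ => u ^ θ - u) := by
    have h1 := Real.concaveOn_rpow hθ0.le hθ1
    have h2 : ConcaveOn ℝ (Set.Ici (0:ℝ)) (fun u : ℝ => -u) := (convexOn_id (convex_Ici 0)).neg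
    have h3 : ConcaveOn ℝ (Set.Ici (0:ℝ)) (fun u : ℝ => u ^ θ + -u) := h1.add h2
    simpa [sub_eq_add_neg] using h3
  rcases eq_or_lt_of_le hA with hA0 | hA0
  · simp [← hA0, Real.one_rpow]
  · have h1m : 0 < 1 - m := by linarith
    set lam : ℝ := A / (1 - m) with hlam
    have hlam0 : 0 < lam := div_pos hA0 h1m
    have hlam1 : lam ≤ 1 := by rw [hlam, div_le_one h1m]; linarith
    have e1 : (1 - lam) * m + lam = A + m := by
      rw [hlam]; field_simp; ring
    have e2 : lam * m + (1 - lam) = 1 - A := by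
      rw [hlam]; field_simp; ring
    have hc1 : (1 - lam) * (m ^ θ - m) ≤ (A + m) ^ θ - (A + m) := by
      have := hF.2 (Set.mem_Ici.2 hm) (Set.mem_Ici.2 zero_le_one)
        (by linarith : (0:ℝ) ≤ 1 - lam) hlam0.le (by ring)
      simpa [smul_eq_mul, e1] using this
    have hc2 : lam * (m ^ θ - m) ≤ (1 - A) ^ θ - (1 - A) := by
      have := hF.2 (Set.mem_Ici.2 hm) (Set.mem_Ici.2 zero_le_one)
        hlam0.le (by linarith : (0:ℝ) ≤ 1 - lam) (by ring)
      simpa [smul_eq_mul, e2] using this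
    linarith

private lemma aux_integrableOn {N D' : ℝ} {h : ℝ → ℝ} (hprob : IsProbCDDensity N D' h) :
    MeasureTheory.IntegrableOn h (Set.Icc (0:ℝ) D') := by
  by_contra hc
  have h1 := hprob.2
  rw [MeasureTheory.integral_undef hc] at h1
  norm_num at h1

private lemma aux_II {D' x y : ℝ} {h : ℝ → ℝ}
    (hInt : MeasureTheory.IntegrableOn h (Set.Icc (0:ℝ) D'))
    (hx : x ∈ Set.Icc (0:ℝ) D') (hy : y ∈ Set.Icc (0:ℝ) D') :
    IntervalIntegrable h volume x y := by
  rw [intervalIntegrable_iff]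
  refine hInt.mono_set (fun t ht => ?_)
  rcases ht with ⟨h1, h2⟩
  exact ⟨(le_min hx.1 hy.1).trans h1.le, h2.trans (max_le hx.2 hy.2)⟩

private lemma aux_L2 {N D' : ℝ} (hN : 1 < N) (hD' : 0 < D') {h : ℝ → ℝ}
    (hprob : IsProbCDDensity N D' h) {b : ℝ} (hb0 : 0 < b) (hbD : b < D') :
    N * ((∫ t in (0:ℝ)..b, h t) ^ (1 - 1 / N) - ∫ t in (0:ℝ)..b, h t) ≤ (D' - b) * h b := by
  have hInt : MeasureTheory.IntegrableOn h (Set.Icc (0:ℝ) D') := aux_integrableOn hprob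
  obtain ⟨⟨hnn, hpos, hconc⟩, hone⟩ := hprob
  have hN0 : (0:ℝ) < N := by linarith
  have hN1 : (0:ℝ) < N - 1 := by linarith
  have hθ0 : 0 < 1 - 1 / N := by
    rw [sub_pos, div_lt_one hN0]; exact hN
  set θ : ℝ := 1 - 1 / N with hθ
  set g : ℝ → ℝ := fun x => h x ^ (1 / (N - 1)) with hg
  set vv : ℝ → ℝ := fun x => ∫ t in (0:ℝ)..x, h t with hvv
  show N * (vv b ^ θ - vv b) ≤ (D' - b) * h b
  clear_value θ g vv
  have hgh : ∀ x ∈ Set.Icc (0:ℝ) D', h x = g x ^ (N - 1) := by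
    intro x hx
    rw [hg]
    exact (aux_pow_eq hN (hnn x hx)).symm
  have hg_nn : ∀ x ∈ Set.Icc (0:ℝ) D', 0 ≤ g x := by
    intro x hx
    rw [hg]
    exact Real.rpow_nonneg (hnn x hx) _
  have hg_pos : ∀ x ∈ Set.Ioo (0:ℝ) D', 0 < g x := by
    intro x hx
    rw [hg]
    exact Real.rpow_pos_of_pos (hpos x hx) _
  have h0mem : (0:ℝ) ∈ Set.Icc (0:ℝ) D' := ⟨le_rfl, hD'.le⟩
  have hbmem : b ∈ Set.Icc (0:ℝ) D' := ⟨hb0.le, hbD.le⟩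
  have hD'mem : D' ∈ Set.Icc (0:ℝ) D' := ⟨hD'.le, le_rfl⟩
  have hvadd : ∀ {x y : ℝ}, x ∈ Set.Icc (0:ℝ) D' → y ∈ Set.Icc (0:ℝ) D' →
      vv y - vv x = ∫ t in x..y, h t := by
    intro x y hx hy
    have h2 := intervalIntegral.integral_add_adjacent_intervals
      (aux_II hInt h0mem hx) (aux_II hInt hx hy)
    simp only [hvv]
    linarith
  have hv_mono : ∀ {x y : ℝ}, x ∈ Set.Icc (0:ℝ) D' → y ∈ Set.Icc (0:ℝ) D' → x ≤ y →
      vv x ≤ vv y := by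
    intro x y hx hy hxy
    have h1 := hvadd hx hy
    have h2 : 0 ≤ ∫ t in x..y, h t :=
      intervalIntegral.integral_nonneg hxy
        (fun u hu => hnn u ⟨hx.1.trans hu.1, hu.2.trans hy.2⟩)
    linarith
  have hvD : vv D' = 1 := by
    simp only [hvv]
    rw [intervalIntegral.integral_of_le hD'.le, ← MeasureTheory.integral_Icc_eq_integral_Ioc]
    exact hone
  have hvb_pos : 0 < vv b := by
    simp only [hvv]
    exact intervalIntegral.intervalIntegral_pos_of_pos_on (aux_II hInt h0mem hbmem)
      (fun x hx => hpos x ⟨hx.1, hx.2.trans hbD⟩) hb0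
  have hhb_pos : 0 < h b := hpos b ⟨hb0, hbD⟩
  have hcontg : ContinuousOn g (Set.Ioo 0 D') := by
    have := hconc.continuousOn_interior
    rwa [interior_Icc] at this
  have hconth : ContinuousOn h (Set.Ioo 0 D') := by
    refine ContinuousOn.congr (f := fun x => g x ^ (N - 1)) ?_ ?_
    · exact hcontg.rpow_const (fun x hx => Or.inr hN1.le)
    · intro x hx
      exact hgh x (Set.Ioo_subset_Icc_self hx)
  -- the key pointwise bound coming from concavity
  have hkey : ∀ y ∈ Set.Ioo b D', h y ≤ h b * (vv y / vv b) ^ θ := by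
    intro y hy
    have hymem : y ∈ Set.Icc (0:ℝ) D' := ⟨(hb0.trans hy.1).le, hy.2.le⟩
    have hvy_ge : vv b ≤ vv y := hv_mono hbmem hymem hy.1.le
    have hgb_pos : 0 < g b := hg_pos b ⟨hb0, hbD⟩
    rcases le_or_gt (g y) (g b) with hgle | hglt
    · have h1 : h y ≤ h b := by
        rw [hgh y hymem, hgh b hbmem]
        exact Real.rpow_le_rpow (hg_nn y hymem) hgle hN1.le
      have h2 : (1:ℝ) ≤ (vv y / vv b) ^ θ := by
        rw [show (1:ℝ) = 1 ^ θ from (Real.one_rpow θ).symm]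
        exact Real.rpow_le_rpow zero_le_one ((one_le_div hvb_pos).2 hvy_ge) hθ0.le
      nlinarith [hhb_pos, h1, h2]
    · set k : ℝ := (g y - g b) / (y - b) with hk
      have hyb : 0 < y - b := by have := hy.1; linarith
      have hk0 : 0 < k := div_pos (by linarith) hyb
      clear_value k
      set l : ℝ → ℝ := fun t => g b + k * (t - b) with hl
      clear_value l
      have hlb : l b = g b := by simp [hl]
      have hly : l y = g y := by
        rw [hl]
        show g b + k * (y - b) = g y
        rw [hk]; field_simp; ring
      have hchordUp : ∀ t ∈ Set.Icc (0:ℝ) b, g t ≤ l t := by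
        intro t ht
        rcases eq_or_lt_of_le ht.2 with htb | htb
        · rw [htb, hlb]
        · have hyt : 0 < y - t := by linarith
          have ha0 : 0 < (y - b) / (y - t) := by positivity
          have hb0' : 0 ≤ (b - t) / (y - t) := div_nonneg (by linarith) hyt.le
          have hab1 : (y - b) / (y - t) + (b - t) / (y - t) = 1 := by field_simp; ring
          have hcc := hconc.2 (Set.mem_Icc.2 ⟨ht.1, ht.2.trans hbD.le⟩) hymem ha0.le hb0' hab1
          simp only [smul_eq_mul] at hcc
          have hpt : (y - b) / (y - t) * t + (b - t) / (y - t) * y = b := by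
            field_simp; ring
          rw [hpt] at hcc
          have hident : (y - b) / (y - t) * (l t) = g b - (b - t) / (y - t) * g y := by
            rw [hl]
            show (y - b) / (y - t) * (g b + k * (t - b)) = _
            rw [hk]; field_simp; ring
          have hmul : (y - b) / (y - t) * g t ≤ (y - b) / (y - t) * l t := by
            rw [hident]; linarith
          exact le_of_mul_le_mul_left hmul ha0
      have hl0 : 0 ≤ l 0 := by
        by_contra hneg
        push_neg at hneg
        have hml0 : 0 < -(l 0) := by linarith
        set t : ℝ := min (b / 2) (-(l 0) / (2 * k)) with ht
        have ht0 : 0 < t := lt_min (by linarith) (by positivity)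
        have htb : t < b := lt_of_le_of_lt (min_le_left _ _) (by linarith)
        clear_value t
        have hgt : 0 < g t := hg_pos t ⟨ht0, htb.trans hbD⟩
        have hle : g t ≤ l t := hchordUp t ⟨ht0.le, htb.le⟩
        have hlt : l t = l 0 + k * t := by rw [hl]; ring
        have hkt : k * t ≤ -(l 0) / 2 := by
          calc k * t ≤ k * (-(l 0) / (2 * k)) :=
                mul_le_mul_of_nonneg_left (by rw [ht]; exact min_le_right _ _) hk0.le
            _ = -(l 0) / 2 := by field_simp
        linarith
      have hlnn : ∀ t, 0 ≤ t → 0 ≤ l t := by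
        intro t ht
        have hlt : l t = l 0 + k * t := by rw [hl]; ring
        nlinarith
      have hld : ∀ t : ℝ, HasDerivAt l k t := by
        intro t
        rw [hl]
        have : HasDerivAt (fun t : ℝ => g b + k * (t - b)) (k * 1) t :=
          (((hasDerivAt_id t).sub_const b).const_mul k).const_add (g b)
        simpa using this
      have hlcont : Continuous fun t => l t ^ (N - 1) := by
        refine continuous_iff_continuousAt.2 (fun t => ?_)
        exact (hld t).continuousAt.rpow_const (Or.inr hN1.le)
      have hftc : ∀ x y' : ℝ, (∫ t in x..y', k * N * l t ^ (N - 1)) = l y' ^ N - l x ^ N := by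
        intro x y'
        apply intervalIntegral.integral_eq_sub_of_hasDerivAt
        · intro t _
          have h1 := (hld t).rpow_const (p := N) (Or.inr hN.le)
          simpa [mul_comm, mul_assoc, mul_left_comm] using h1
        · exact ((continuous_const.mul hlcont)).intervalIntegrable _ _
      have hkN : 0 < k * N := by positivity
      have hint_l : ∀ x y' : ℝ, (∫ t in x..y', l t ^ (N - 1)) = (l y' ^ N - l x ^ N) / (k * N) := by
        intro x y'
        have h1 := hftc x y'
        rw [intervalIntegral.integral_const_mul] at h1
        rw [eq_div_iff (ne_of_gt hkN)]
        linarith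
      -- step 1 : vv b * (k*N) ≤ g b ^ N
      have hstep1 : vv b * (k * N) ≤ g b ^ N := by
        have hmono : vv b ≤ ∫ t in (0:ℝ)..b, l t ^ (N - 1) := by
          simp only [hvv]
          apply intervalIntegral.integral_mono_on hb0.le (aux_II hInt h0mem hbmem)
            (hlcont.intervalIntegrable _ _)
          intro t ht
          have htI : t ∈ Set.Icc (0:ℝ) D' := ⟨ht.1, ht.2.trans hbD.le⟩
          rw [hgh t htI]
          exact Real.rpow_le_rpow (hg_nn t htI) (hchordUp t ht) hN1.le
        rw [hint_l, hlb] at hmono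
        have hl0N : 0 ≤ l 0 ^ N := Real.rpow_nonneg hl0 N
        rw [le_div_iff₀ hkN] at hmono
        linarith
      -- step 2 : g y ^ N - g b ^ N ≤ (vv y - vv b) * (k * N)
      have hstep2 : g y ^ N - g b ^ N ≤ (vv y - vv b) * (k * N) := by
        have hchordLow : ∀ t ∈ Set.Icc b y, l t ≤ g t := by
          intro t ht
          have ha0 : 0 ≤ (y - t) / (y - b) := div_nonneg (by linarith [ht.2]) hyb.le
          have hb0' : 0 ≤ (t - b) / (y - b) := div_nonneg (by linarith [ht.1]) hyb.le
          have hab1 : (y - t) / (y - b) + (t - b) / (y - b) = 1 := by field_simp; ring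
          have hcc := hconc.2 hbmem hymem ha0 hb0' hab1
          simp only [smul_eq_mul] at hcc
          have hpt : (y - t) / (y - b) * b + (t - b) / (y - b) * y = t := by
            field_simp; ring
          rw [hpt] at hcc
          have hident : l t = (y - t) / (y - b) * g b + (t - b) / (y - b) * g y := by
            rw [hl]
            show g b + k * (t - b) = _
            rw [hk]; field_simp; ring
          linarith
        have hmono : (∫ t in b..y, l t ^ (N - 1)) ≤ ∫ t in b..y, h t := by
          apply intervalIntegral.integral_mono_on hy.1.le (hlcont.intervalIntegrable _ _)
            (aux_II hInt hbmem hymem)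
          intro t ht
          have htI : t ∈ Set.Icc (0:ℝ) D' := ⟨hb0.le.trans ht.1, ht.2.trans hy.2.le⟩
          rw [hgh t htI]
          exact Real.rpow_le_rpow (hlnn t (hb0.le.trans ht.1)) (hchordLow t ht) hN1.le
        rw [hint_l, hly, hlb] at hmono
        rw [hvadd hbmem hymem]
        rw [div_le_iff₀ hkN] at hmono
        exact hmono
      have hgyN_ge : g b ^ N ≤ g y ^ N := Real.rpow_le_rpow (hg_nn b hbmem) hglt.le hN0.le
      have hgbN_pos : 0 < g b ^ N := Real.rpow_pos_of_pos (hg_pos b ⟨hb0, hbD⟩) N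
      have hcomb : vv b * g y ^ N ≤ vv y * g b ^ N := by
        nlinarith [mul_nonneg (sub_nonneg.2 hvy_ge) (sub_nonneg.2 hstep1),
          mul_le_mul_of_nonneg_left hstep2 hvb_pos.le]
      have hGYle : g y ^ N ≤ g b ^ N * (vv y / vv b) := by
        have h2 : g b ^ N * (vv y / vv b) = (vv y * g b ^ N) / vv b := by ring
        rw [h2, le_div_iff₀ hvb_pos]
        linarith [hcomb]
      have hNθ : N * θ = N - 1 := by rw [hθ]; field_simp
      have e1 : h y = (g y ^ N) ^ θ := by
        rw [← Real.rpow_mul (hg_nn y hymem), hNθ]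
        exact hgh y hymem
      have e2 : (g b ^ N * (vv y / vv b)) ^ θ = h b * (vv y / vv b) ^ θ := by
        rw [Real.mul_rpow (Real.rpow_nonneg (hg_nn b hbmem) N)
          (div_nonneg (hvb_pos.le.trans hvy_ge) hvb_pos.le)]
        congr 1
        rw [← Real.rpow_mul (hg_nn b hbmem), hNθ]
        exact (hgh b hbmem).symm
      rw [e1, ← e2]
      exact Real.rpow_le_rpow (Real.rpow_nonneg (hg_nn y hymem) N) hGYle hθ0.le
  -- integrate the differential inequality
  have hvbθ : 0 < vv b ^ θ := Real.rpow_pos_of_pos hvb_pos θ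
  set C : ℝ := h b / vv b ^ θ with hC
  clear_value C
  have hC0 : 0 < C := by rw [hC]; exact div_pos hhb_pos hvbθ
  have hv' : ∀ y ∈ Set.Ioo b D', HasDerivAt vv (h y) y := by
    intro y hy
    have hyI : y ∈ Set.Ioo (0:ℝ) D' := ⟨hb0.trans hy.1, hy.2⟩
    rw [hvv]
    exact intervalIntegral.integral_hasDerivAt_right
      (aux_II hInt h0mem ⟨hyI.1.le, hyI.2.le⟩)
      (hconth.stronglyMeasurableAtFilter isOpen_Ioo y hyI)
      (hconth.continuousAt (Ioo_mem_nhds hyI.1 hyI.2))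
  have hvy_pos : ∀ y ∈ Set.Ioo b D', 0 < vv y := fun y hy =>
    lt_of_lt_of_le hvb_pos (hv_mono hbmem ⟨(hb0.trans hy.1).le, hy.2.le⟩ hy.1.le)
  have hGd : ∀ y ∈ Set.Ioo b D',
      HasDerivAt (fun y => C * y / N - vv y ^ (1 / N))
        (C / N - h y * (1 / N) * vv y ^ (1 / N - 1)) y := by
    intro y hy
    have h1 : HasDerivAt (fun y : ℝ => C * y / N) (C / N) y := by
      simpa using (((hasDerivAt_id y).const_mul C).div_const N)
    have h2 : HasDerivAt (fun y => vv y ^ (1 / N)) (h y * (1 / N) * vv y ^ (1 / N - 1)) y :=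
      (hv' y hy).rpow_const (Or.inl (ne_of_gt (hvy_pos y hy)))
    exact h1.sub h2
  have hvC : ContinuousOn vv (Set.Icc (0:ℝ) D') := by
    have h1 := intervalIntegral.continuousOn_primitive_interval'
      (aux_II hInt h0mem hD'mem) (Set.left_mem_uIcc (a := (0:ℝ)) (b := D'))
    rw [Set.uIcc_of_le hD'.le] at h1
    rw [hvv]
    exact h1
  have hG : MonotoneOn (fun y => C * y / N - vv y ^ (1 / N)) (Set.Icc b D') := by
    apply monotoneOn_of_deriv_nonneg (convex_Icc _ _)
    · apply ContinuousOn.sub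
      · exact (continuousOn_const.mul continuousOn_id).div_const N
      · apply ContinuousOn.rpow_const
          (hvC.mono (Set.Icc_subset_Icc hb0.le le_rfl))
        intro x hx
        exact Or.inl (ne_of_gt (lt_of_lt_of_le hvb_pos
          (hv_mono hbmem ⟨hb0.le.trans hx.1, hx.2⟩ hx.1)))
    · rw [interior_Icc]
      intro y hy
      exact (hGd y hy).differentiableAt.differentiableWithinAt
    · rw [interior_Icc]
      intro y hy
      rw [(hGd y hy).deriv]
      have hkb := hkey y hy
      have hvyp := hvy_pos y hy
      have hbound : h y * vv y ^ (1 / N - 1) ≤ C := by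
        have hdr : (vv y / vv b) ^ θ = vv y ^ θ / vv b ^ θ :=
          Real.div_rpow hvyp.le hvb_pos.le θ
        have hprod : vv y ^ θ * vv y ^ (1 / N - 1) = 1 := by
          rw [← Real.rpow_add hvyp]
          rw [show θ + (1 / N - 1) = 0 by rw [hθ]; ring, Real.rpow_zero]
        calc h y * vv y ^ (1 / N - 1)
            ≤ h b * (vv y / vv b) ^ θ * vv y ^ (1 / N - 1) :=
              mul_le_mul_of_nonneg_right hkb (Real.rpow_nonneg hvyp.le _)
          _ = (h b / vv b ^ θ) * (vv y ^ θ * vv y ^ (1 / N - 1)) := by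
              rw [hdr]; ring
          _ = C := by rw [hprod, hC, mul_one]
      have hNinv : (0:ℝ) < 1 / N := by positivity
      rw [sub_nonneg, show h y * (1 / N) * vv y ^ (1 / N - 1)
          = (h y * vv y ^ (1 / N - 1)) * (1 / N) by ring]
      refine le_trans (mul_le_mul_of_nonneg_right hbound hNinv.le) (le_of_eq ?_)
      ring
  have hmono : C * b / N - vv b ^ (1 / N) ≤ C * D' / N - vv D' ^ (1 / N) :=
    hG (Set.left_mem_Icc.2 hbD.le) (Set.right_mem_Icc.2 hbD.le) hbD.le
  rw [hvD, Real.one_rpow] at hmono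
  -- hmono : C * b / N - vv b ^ (1/N) ≤ C * D' / N - 1
  have h1 : 1 - vv b ^ (1 / N) ≤ C * (D' - b) / N := by
    have he : C * (D' - b) / N = C * D' / N - C * b / N := by ring
    linarith
  have h1' : (1 - vv b ^ (1 / N)) * N ≤ C * (D' - b) := by
    have h2 := mul_le_mul_of_nonneg_right h1 hN0.le
    have h3 : C * (D' - b) / N * N = C * (D' - b) := by field_simp
    linarith
  have h2 := mul_le_mul_of_nonneg_right h1' hvbθ.le
  have hCvb : C * vv b ^ θ = h b := by
    rw [hC]; field_simp
  have hvb1N : vv b ^ θ * vv b ^ (1 / N) = vv b := by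
    rw [← Real.rpow_add hvb_pos]
    rw [show θ + 1 / N = 1 by rw [hθ]; ring, Real.rpow_one]
  calc N * (vv b ^ θ - vv b) = (1 - vv b ^ (1 / N)) * N * vv b ^ θ := by
        linear_combination N * hvb1N
    _ ≤ C * (D' - b) * vv b ^ θ := h2
    _ = (D' - b) * (C * vv b ^ θ) := by ring
    _ = (D' - b) * h b := by rw [hCvb]

private lemma aux_L1 {N D' : ℝ} (hN : 1 < N) (hD' : 0 < D') {h : ℝ → ℝ}
    (hprob : IsProbCDDensity N D' h) {a : ℝ} (ha0 : 0 < a) (haD : a < D') :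
    N * ((1 - ∫ t in (0:ℝ)..a, h t) ^ (1 - 1 / N) - (1 - ∫ t in (0:ℝ)..a, h t)) ≤ a * h a := by
  have hInt : MeasureTheory.IntegrableOn h (Set.Icc (0:ℝ) D') := aux_integrableOn hprob
  obtain ⟨⟨hnn, hpos, hconc⟩, hone⟩ := hprob
  have hmap : ∀ x ∈ Set.Icc (0:ℝ) D', D' - x ∈ Set.Icc (0:ℝ) D' := fun x hx =>
    ⟨by linarith [hx.2], by linarith [hx.1]⟩
  have hprob' : IsProbCDDensity N D' (fun x => h (D' - x)) := by
    refine ⟨⟨fun x hx => hnn _ (hmap x hx),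
      fun x hx => hpos _ ⟨by linarith [hx.2], by linarith [hx.1]⟩, ?_⟩, ?_⟩
    · refine ⟨convex_Icc _ _, ?_⟩
      intro x hx y hy p q hp hq hpq
      have hx' := hmap x hx
      have hy' := hmap y hy
      have hcc := hconc.2 hx' hy' hp hq hpq
      have hpt : p • (D' - x) + q • (D' - y) = D' - (p • x + q • y) := by
        simp only [smul_eq_mul]
        have : p + q = 1 := hpq
        nlinarith [this]
      rw [hpt] at hcc
      simpa using hcc
    · rw [MeasureTheory.integral_Icc_eq_integral_Ioc, ← intervalIntegral.integral_of_le hD'.le]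
      rw [intervalIntegral.integral_comp_sub_left h D']
      simp only [sub_self, sub_zero]
      rw [intervalIntegral.integral_of_le hD'.le, ← MeasureTheory.integral_Icc_eq_integral_Ioc]
      exact hone
  have hL2 := aux_L2 hN hD' hprob' (b := D' - a) (by linarith) (by linarith)
  have he : (∫ t in (0:ℝ)..(D' - a), h (D' - t)) = 1 - ∫ t in (0:ℝ)..a, h t := by
    rw [intervalIntegral.integral_comp_sub_left h D']
    simp only [sub_sub_cancel, sub_zero]
    have h0mem : (0:ℝ) ∈ Set.Icc (0:ℝ) D' := ⟨le_rfl, hD'.le⟩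
    have hamem : a ∈ Set.Icc (0:ℝ) D' := ⟨ha0.le, haD.le⟩
    have hD'mem : D' ∈ Set.Icc (0:ℝ) D' := ⟨hD'.le, le_rfl⟩
    have h1 := intervalIntegral.integral_add_adjacent_intervals
      (aux_II hInt h0mem hamem) (aux_II hInt hamem hD'mem)
    have h2 : (∫ t in (0:ℝ)..D', h t) = 1 := by
      rw [intervalIntegral.integral_of_le hD'.le, ← MeasureTheory.integral_Icc_eq_integral_Ioc]
      exact hone
    linarith
  rw [he] at hL2
  have he2 : D' - (D' - a) = a := by ring
  rw [he2] at hL2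
  exact hL2


set_option maxHeartbeats 1000000 in
/-- Proposition 5.3 (almost rigidity of the diameter): if `m_h(E)` and the `D`-residual
`Res_h^D(E) = D P_h(E) / (N m_h(E)^{1-1/N}) - 1` are small enough, then `D' ≥ D (1 - ε)`. -/
theorem almost_rigidity_diameter (N : ℝ) (hN : 1 < N) :
    ∀ ε : ℝ, ε ∈ Set.Ioo (0:ℝ) 1 →
      ∃ wbar : ℝ, 0 < wbar ∧ ∃ δbar : ℝ, 0 < δbar ∧
        ∀ D D' : ℝ, 0 < D' → D' ≤ D →
        ∀ h : ℝ → ℝ, IsProbCDDensity N D' h →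
        ∀ E : Set ℝ, E ⊆ Set.Icc 0 D' →
        ∀ d : IntervalDecomp D' h E,
          0 < (∫ x in E, h x) → (∫ x in E, h x) ≤ wbar →
          D * d.perim / (N * (∫ x in E, h x) ^ (1 - 1 / N)) - 1 ≤ δbar →
          D * (1 - ε) ≤ D' := by
  intro ε hε
  obtain ⟨hε0, hε1⟩ := hε
  have hN0 : (0:ℝ) < N := by linarith
  have hε4 : (0:ℝ) < ε / 4 := by linarith
  refine ⟨(ε / 4) ^ N, Real.rpow_pos_of_pos hε4 N, ε / 2, by linarith, ?_⟩
  intro D D' hD' hDD' h hprob E hE d hM0 hMw hres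
  have hθ0 : 0 < 1 - 1 / N := by rw [sub_pos, div_lt_one hN0]; exact hN
  have hθ1 : 1 - 1 / N < 1 := by
    have : 0 < 1 / N := by positivity
    linarith
  have hInt : MeasureTheory.IntegrableOn h (Set.Icc (0:ℝ) D') := aux_integrableOn hprob
  have hnn := hprob.1.1
  have hpos := hprob.1.2.1
  have hone := hprob.2
  -- basic memberships
  have h0mem : (0:ℝ) ∈ Set.Icc (0:ℝ) D' := ⟨le_rfl, hD'.le⟩
  have hD'mem : D' ∈ Set.Icc (0:ℝ) D' := ⟨hD'.le, le_rfl⟩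
  have hamem : ∀ i, d.a i ∈ Set.Icc (0:ℝ) D' := fun i =>
    ⟨d.nonneg i, (d.le i).trans (d.le_top i)⟩
  have hbmem : ∀ i, d.b i ∈ Set.Icc (0:ℝ) D' := fun i =>
    ⟨(d.nonneg i).trans (d.le i), d.le_top i⟩
  -- the masses of the pieces
  set M : ℝ := ∫ x in E, h x with hM
  set Mi : ℕ → ℝ := fun i => ∫ x in Set.Ioo (d.a i) (d.b i), h x with hMi
  set term : ℕ → ℝ := fun i =>
    (if d.a i < d.b i ∧ d.a i ≠ 0 then h (d.a i) else 0) +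
    (if d.a i < d.b i ∧ d.b i ≠ D' then h (d.b i) else 0) with hterm
  have hperim : d.perim = ∑' i, term i := rfl
  have hsum_term : Summable term := d.summablePerim
  clear_value M Mi term
  have hUsub : (⋃ i, Set.Ioo (d.a i) (d.b i)) ⊆ Set.Icc (0:ℝ) D' := by
    intro x hx
    rcases Set.mem_iUnion.1 hx with ⟨i, hi⟩
    exact ⟨(d.nonneg i).trans hi.1.le, hi.2.le.trans (d.le_top i)⟩
  have hdisj : Pairwise (Function.onFun Disjoint fun i => Set.Ioo (d.a i) (d.b i)) := by
    intro i j hij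
    rcases d.sep i j hij with hsep | hsep
    · exact Set.disjoint_left.2 fun x hx1 hx2 =>
        absurd (hx1.2.trans_le (hsep.trans hx2.1.le)) (lt_irrefl x)
    · exact Set.disjoint_left.2 fun x hx1 hx2 =>
        absurd (hx2.2.trans_le (hsep.trans hx1.1.le)) (lt_irrefl x)
  have hHasSum : HasSum Mi M := by
    have h1 : M = ∫ x in ⋃ i, Set.Ioo (d.a i) (d.b i), h x := by
      rw [hM]; exact MeasureTheory.setIntegral_congr_set d.aeEq
    rw [hMi, h1]
    exact MeasureTheory.hasSum_integral_iUnion (fun i => measurableSet_Ioo) hdisj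
      (hInt.mono_set hUsub)
  have hMiS : Summable Mi := hHasSum.summable
  have htsumMi : ∑' i, Mi i = M := hHasSum.tsum_eq
  have hMi_nn : ∀ i, 0 ≤ Mi i := by
    intro i
    simp only [hMi]
    exact MeasureTheory.setIntegral_nonneg measurableSet_Ioo
      (fun x hx => hnn x (hUsub (Set.mem_iUnion.2 ⟨i, hx⟩)))
  have hMi_le : ∀ i, Mi i ≤ M := by
    intro i
    rw [← htsumMi]
    exact Summable.le_tsum hMiS i fun j _ => hMi_nn j
  have hwle : (ε / 4 : ℝ) ^ N ≤ ε / 4 := by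
    have h1 := Real.rpow_le_rpow_of_exponent_ge hε4 (by linarith : ε / 4 ≤ 1) hN.le
    rwa [Real.rpow_one] at h1
  have hM1 : M < 1 := by
    have := hMw
    linarith
  -- interval integral facts
  have hvadd : ∀ {x y : ℝ}, x ∈ Set.Icc (0:ℝ) D' → y ∈ Set.Icc (0:ℝ) D' →
      (∫ t in (0:ℝ)..y, h t) - ∫ t in (0:ℝ)..x, h t = ∫ t in x..y, h t := by
    intro x y hx hy
    have h2 := intervalIntegral.integral_add_adjacent_intervals
      (aux_II hInt h0mem hx) (aux_II hInt hx hy)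
    linarith
  have hvD : (∫ t in (0:ℝ)..D', h t) = 1 := by
    rw [intervalIntegral.integral_of_le hD'.le, ← MeasureTheory.integral_Icc_eq_integral_Ioc]
    exact hone
  have hA_nn : ∀ i, 0 ≤ ∫ t in (0:ℝ)..(d.a i), h t := fun i =>
    intervalIntegral.integral_nonneg (d.nonneg i)
      (fun u hu => hnn u ⟨hu.1, hu.2.trans ((hamem i).2)⟩)
  have hB_le1 : ∀ i, (∫ t in (0:ℝ)..(d.b i), h t) ≤ 1 := by
    intro i
    have h1 := hvadd (hbmem i) hD'mem
    have h2 : 0 ≤ ∫ t in (d.b i)..D', h t :=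
      intervalIntegral.integral_nonneg (d.le_top i)
        (fun u hu => hnn u ⟨(hbmem i).1.trans hu.1, hu.2⟩)
    linarith [hvD]
  have hBA : ∀ i, d.a i < d.b i →
      (∫ t in (0:ℝ)..(d.b i), h t) = (∫ t in (0:ℝ)..(d.a i), h t) + Mi i := by
    intro i hab
    have h1 := hvadd (hamem i) (hbmem i)
    have h2 : (∫ t in (d.a i)..(d.b i), h t) = Mi i := by
      rw [intervalIntegral.integral_of_le hab.le,
        MeasureTheory.integral_Ioc_eq_integral_Ioo]
      simp only [hMi]
    linarith
  -- the key per-piece estimate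
  have hkey : ∀ i, N * (Mi i ^ (1 - 1 / N) - Mi i) ≤ D' * term i := by
    intro i
    by_cases hab : d.a i < d.b i
    · have hstep : Mi i ^ (1 - 1 / N) - Mi i ≤
          ((1 - ∫ t in (0:ℝ)..(d.a i), h t) ^ (1 - 1 / N)
            - (1 - ∫ t in (0:ℝ)..(d.a i), h t)) +
          ((∫ t in (0:ℝ)..(d.b i), h t) ^ (1 - 1 / N)
            - (∫ t in (0:ℝ)..(d.b i), h t)) := by
        have h1 := aux_Fincr hθ0 hθ1.le (hA_nn i) (hMi_nn i)
          (by rw [← hBA i hab]; exact hB_le1 i)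
        rwa [← hBA i hab] at h1
      have hterm1 : N * ((1 - ∫ t in (0:ℝ)..(d.a i), h t) ^ (1 - 1 / N)
            - (1 - ∫ t in (0:ℝ)..(d.a i), h t)) ≤
          D' * (if d.a i < d.b i ∧ d.a i ≠ 0 then h (d.a i) else 0) := by
        by_cases ha0 : d.a i = 0
        · have hv0 : (∫ t in (0:ℝ)..(d.a i), h t) = 0 := by
            rw [ha0, intervalIntegral.integral_same]
          rw [hv0]
          simp [ha0, Real.one_rpow]
        · have ha0' : 0 < d.a i := lt_of_le_of_ne (d.nonneg i) (Ne.symm ha0)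
          have haD : d.a i < D' := lt_of_lt_of_le hab (d.le_top i)
          have hL1 := aux_L1 hN hD' hprob ha0' haD
          rw [if_pos ⟨hab, ha0⟩]
          calc N * ((1 - ∫ t in (0:ℝ)..(d.a i), h t) ^ (1 - 1 / N)
                - (1 - ∫ t in (0:ℝ)..(d.a i), h t)) ≤ d.a i * h (d.a i) := hL1
            _ ≤ D' * h (d.a i) := mul_le_mul_of_nonneg_right (hamem i).2 (hnn _ (hamem i))
      have hterm2 : N * ((∫ t in (0:ℝ)..(d.b i), h t) ^ (1 - 1 / N)
            - (∫ t in (0:ℝ)..(d.b i), h t)) ≤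
          D' * (if d.a i < d.b i ∧ d.b i ≠ D' then h (d.b i) else 0) := by
        by_cases hb0 : d.b i = D'
        · have hv1 : (∫ t in (0:ℝ)..(d.b i), h t) = 1 := by rw [hb0]; exact hvD
          rw [hv1]
          simp [hb0, Real.one_rpow]
        · have hbD : d.b i < D' := lt_of_le_of_ne (d.le_top i) hb0
          have hb0' : 0 < d.b i := lt_of_le_of_lt (d.nonneg i) hab
          have hL2 := aux_L2 hN hD' hprob hb0' hbD
          rw [if_pos ⟨hab, hb0⟩]
          calc N * ((∫ t in (0:ℝ)..(d.b i), h t) ^ (1 - 1 / N)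
                - (∫ t in (0:ℝ)..(d.b i), h t)) ≤ (D' - d.b i) * h (d.b i) := hL2
            _ ≤ D' * h (d.b i) := by
                have := hnn _ (hbmem i)
                nlinarith [(hbmem i).1]
      calc N * (Mi i ^ (1 - 1 / N) - Mi i)
          ≤ N * (((1 - ∫ t in (0:ℝ)..(d.a i), h t) ^ (1 - 1 / N)
              - (1 - ∫ t in (0:ℝ)..(d.a i), h t)) +
            ((∫ t in (0:ℝ)..(d.b i), h t) ^ (1 - 1 / N)
              - (∫ t in (0:ℝ)..(d.b i), h t))) :=
            mul_le_mul_of_nonneg_left hstep hN0.le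
        _ = N * ((1 - ∫ t in (0:ℝ)..(d.a i), h t) ^ (1 - 1 / N)
              - (1 - ∫ t in (0:ℝ)..(d.a i), h t)) +
            N * ((∫ t in (0:ℝ)..(d.b i), h t) ^ (1 - 1 / N)
              - (∫ t in (0:ℝ)..(d.b i), h t)) := by ring
        _ ≤ D' * (if d.a i < d.b i ∧ d.a i ≠ 0 then h (d.a i) else 0) +
            D' * (if d.a i < d.b i ∧ d.b i ≠ D' then h (d.b i) else 0) :=
            add_le_add hterm1 hterm2
        _ = D' * term i := by rw [hterm]; ring
    · have hab' : d.a i = d.b i := le_antisymm (d.le i) (not_lt.1 hab)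
      have hMi0 : Mi i = 0 := by
        rw [hMi]
        simp [hab', Set.Ioo_self]
      rw [hMi0, Real.zero_rpow (ne_of_gt hθ0)]
      have hterm0 : term i = 0 := by
        rw [hterm]
        simp [hab]
      rw [hterm0]
      simp
  -- summability
  have hkey_nn : ∀ i, 0 ≤ N * (Mi i ^ (1 - 1 / N) - Mi i) := by
    intro i
    rcases eq_or_lt_of_le (hMi_nn i) with h0 | h0
    · rw [← h0, Real.zero_rpow (ne_of_gt hθ0)]
      simp
    · have h1 : Mi i ^ (1:ℝ) ≤ Mi i ^ (1 - 1 / N) :=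
        Real.rpow_le_rpow_of_exponent_ge h0 (le_of_lt (lt_of_le_of_lt (hMi_le i) hM1)) hθ1.le
      rw [Real.rpow_one] at h1
      nlinarith
  have hsumD : Summable fun i => D' * term i := hsum_term.mul_left D'
  have hsum_key : Summable fun i => N * (Mi i ^ (1 - 1 / N) - Mi i) :=
    Summable.of_nonneg_of_le hkey_nn hkey hsumD
  have hsum_key' : Summable fun i => Mi i ^ (1 - 1 / N) - Mi i :=
    (summable_mul_left_iff (ne_of_gt hN0)).1 hsum_key
  have hsum_Miθ : Summable fun i => Mi i ^ (1 - 1 / N) := by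
    have h1 := hsum_key'.add hMiS
    simpa using h1
  -- subadditivity of the power at the level of the total mass
  have hMθ_le : M ^ (1 - 1 / N) ≤ ∑' i, Mi i ^ (1 - 1 / N) := by
    have hMsplit : M ^ (1 - 1 / N) = ∑' i, Mi i * M ^ (1 - 1 / N - 1) := by
      rw [tsum_mul_right, htsumMi]
      nth_rewrite 2 [← Real.rpow_one M]
      rw [← Real.rpow_add hM0, show (1:ℝ) + (1 - 1 / N - 1) = 1 - 1 / N from by ring]
    rw [hMsplit]
    apply Summable.tsum_le_tsum _ (hMiS.mul_right _) hsum_Miθ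
    intro i
    rcases eq_or_lt_of_le (hMi_nn i) with h0 | h0
    · rw [← h0, Real.zero_rpow (ne_of_gt hθ0)]
      simp
    · have h1 : M ^ (1 - 1 / N - 1) ≤ Mi i ^ (1 - 1 / N - 1) :=
        Real.rpow_le_rpow_of_nonpos h0 (hMi_le i) (by linarith)
      calc Mi i * M ^ (1 - 1 / N - 1) ≤ Mi i * Mi i ^ (1 - 1 / N - 1) :=
            mul_le_mul_of_nonneg_left h1 h0.le
        _ = Mi i ^ (1 - 1 / N) := by
            nth_rewrite 1 [← Real.rpow_one (Mi i)]
            rw [← Real.rpow_add h0, show (1:ℝ) + (1 - 1 / N - 1) = 1 - 1 / N from by ring]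
  -- lower bound on the weighted perimeter
  have hlow : N * (M ^ (1 - 1 / N) - M) ≤ D' * d.perim := by
    have h1 : (∑' i, N * (Mi i ^ (1 - 1 / N) - Mi i)) ≤ ∑' i, D' * term i :=
      Summable.tsum_le_tsum hkey hsum_key hsumD
    have h2 : (∑' i, N * (Mi i ^ (1 - 1 / N) - Mi i))
        = N * ((∑' i, Mi i ^ (1 - 1 / N)) - M) := by
      rw [tsum_mul_left, Summable.tsum_sub hsum_Miθ hMiS, htsumMi]
    have h3 : (∑' i, D' * term i) = D' * d.perim := by
      rw [tsum_mul_left, hperim]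
    have h4 : N * (M ^ (1 - 1 / N) - M) ≤ N * ((∑' i, Mi i ^ (1 - 1 / N)) - M) := by
      apply mul_le_mul_of_nonneg_left _ hN0.le
      linarith [hMθ_le]
    linarith [h1, h2.symm.le, h3.le]
  -- conclude
  have hMθpos : 0 < M ^ (1 - 1 / N) := Real.rpow_pos_of_pos hM0 _
  have hMroot : M ^ (1 / N : ℝ) ≤ ε / 4 := by
    have h1 : M ^ (1 / N : ℝ) ≤ ((ε / 4) ^ N) ^ (1 / N : ℝ) := by
      apply Real.rpow_le_rpow hM0.le _ (by positivity)
      simpa [← hM] using hMw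
    rwa [← Real.rpow_mul hε4.le, mul_one_div, div_self (ne_of_gt hN0), Real.rpow_one] at h1
  have hMsplit : M ^ (1 - 1 / N) * M ^ (1 / N : ℝ) = M := by
    rw [← Real.rpow_add hM0, show (1:ℝ) - 1 / N + 1 / N = 1 from by ring, Real.rpow_one]
  have hlow2 : N * (M ^ (1 - 1 / N) * (1 - ε / 4)) ≤ D' * d.perim := by
    have h1 : M ^ (1 - 1 / N) * (1 - ε / 4) ≤ M ^ (1 - 1 / N) - M := by
      nlinarith [hMθpos, hMroot, hMsplit]
    nlinarith [hlow, hN0]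
  have hNMθ : 0 < N * M ^ (1 - 1 / N) := by positivity
  have hup : D * d.perim ≤ (1 + ε / 2) * (N * M ^ (1 - 1 / N)) := by
    have h1 : D * d.perim / (N * M ^ (1 - 1 / N)) ≤ 1 + ε / 2 := by linarith [hres]
    calc D * d.perim = D * d.perim / (N * M ^ (1 - 1 / N)) * (N * M ^ (1 - 1 / N)) := by
          field_simp
      _ ≤ (1 + ε / 2) * (N * M ^ (1 - 1 / N)) :=
          mul_le_mul_of_nonneg_right h1 hNMθ.le
  have hperim_nn : 0 ≤ d.perim := by
    rw [hperim]
    apply tsum_nonneg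
    intro i
    rw [hterm]
    apply add_nonneg
    · split_ifs with hcond
      · exact hnn _ (hamem i)
      · exact le_rfl
    · split_ifs with hcond
      · exact hnn _ (hbmem i)
      · exact le_rfl
  have hD0 : 0 < D := lt_of_lt_of_le hD' hDD'
  have h5 : D * (N * (M ^ (1 - 1 / N) * (1 - ε / 4))) ≤ D * (D' * d.perim) :=
    mul_le_mul_of_nonneg_left hlow2 hD0.le
  have h6 : D' * (D * d.perim) ≤ D' * ((1 + ε / 2) * (N * M ^ (1 - 1 / N))) :=
    mul_le_mul_of_nonneg_left hup hD'.le
  have hmid : D * (D' * d.perim) = D' * (D * d.perim) := by ring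
  have hq : D * (N * (M ^ (1 - 1 / N) * (1 - ε / 4)))
      ≤ D' * ((1 + ε / 2) * (N * M ^ (1 - 1 / N))) := by linarith
  have h7 : D * (1 - ε / 4) ≤ D' * (1 + ε / 2) := by
    have hq' : (D * (1 - ε / 4)) * (N * M ^ (1 - 1 / N))
        ≤ (D' * (1 + ε / 2)) * (N * M ^ (1 - 1 / N)) := by
      calc (D * (1 - ε / 4)) * (N * M ^ (1 - 1 / N))
          = D * (N * (M ^ (1 - 1 / N) * (1 - ε / 4))) := by ring
        _ ≤ D' * ((1 + ε / 2) * (N * M ^ (1 - 1 / N))) := hq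
        _ = (D' * (1 + ε / 2)) * (N * M ^ (1 - 1 / N)) := by ring
    exact le_of_mul_le_mul_right hq' hNMθ
  nlinarith [h7, mul_nonneg hD0.le hε0.le, mul_nonneg (mul_nonneg hD0.le hε0.le) hε0.le]
end
end

section
/- Fix a real number N > 1. For every ε > 0 there exist w̄ > 0 and δ̄ > 0 such that for all D ≥ D' > 0, every probability CD(0,N) density h on [0,D'], and every w ∈ (0, w̄] with Res_h^D(w) ≤ δ̄, one has (1 − ε)·D·w^{1/N} ≤ r_h(w) ≤ (1 + ε)·D·w^{1/N}. -/
open MeasureTheory Filter Topology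

noncomputable section

private lemma concave3 {s : Set ℝ} {g : ℝ → ℝ} (hg : ConcaveOn ℝ s g)
    {a b c : ℝ} (ha : a ∈ s) (hc : c ∈ s) (hab : a ≤ b) (hbc : b ≤ c) :
    (c - b) * g a + (b - a) * g c ≤ (c - a) * g b := by
  rcases eq_or_lt_of_le (hab.trans hbc) with h | h
  · have h1 : a = b := le_antisymm hab (h ▸ hbc)
    have h2 : b = c := le_antisymm hbc (h ▸ hab).ge
    subst h1; subst h2; ring_nf; exact le_refl _
  · have hca : 0 < c - a := by linarith
    have h1 : (0:ℝ) ≤ (c - b)/(c - a) := by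
      apply div_nonneg <;> linarith
    have h2 : (0:ℝ) ≤ (b - a)/(c - a) := by
      apply div_nonneg <;> linarith
    have h3 : (c - b)/(c - a) + (b - a)/(c - a) = 1 := by field_simp; ring
    have key := hg.2 ha hc h1 h2 h3
    have hb : ((c - b)/(c - a)) • a + ((b - a)/(c - a)) • c = b := by
      simp only [smul_eq_mul]; field_simp; ring
    rw [hb] at key
    simp only [smul_eq_mul] at key
    have key2 := mul_le_mul_of_nonneg_left key hca.le
    calc (c - b) * g a + (b - a) * g c
        = (c - a) * ((c - b)/(c - a) * g a + (b - a)/(c - a) * g c) := by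
          field_simp
      _ ≤ (c - a) * g b := key2

private lemma rpow_sub_rpow_le {x y p : ℝ} (hy : 0 ≤ y) (hyx : y ≤ x) (hp : 1 ≤ p) :
    x ^ p - y ^ p ≤ p * x ^ (p - 1) * (x - y) := by
  rcases eq_or_lt_of_le (hy.trans hyx) with hx0 | hx0
  · have hx : x = 0 := hx0.symm
    have hy0 : y = 0 := le_antisymm (hx ▸ hyx) hy
    subst hx; subst hy0
    simp [Real.zero_rpow (by linarith : p ≠ 0)]
  · have hu1 : -1 ≤ y / x - 1 := by
      have : 0 ≤ y / x := div_nonneg hy hx0.le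
      linarith
    have hbern := one_add_mul_self_le_rpow_one_add hu1 hp
    rw [add_sub_cancel] at hbern
    rw [Real.div_rpow hy hx0.le] at hbern
    have hxp : (0:ℝ) < x ^ p := Real.rpow_pos_of_pos hx0 p
    have h2 : (1 + p * (y / x - 1)) * x ^ p ≤ y ^ p := by
      rw [← le_div_iff₀ hxp]; exact hbern
    have h3 : x ^ p - y ^ p ≤ p * (1 - y / x) * x ^ p := by nlinarith
    have h4 : p * (1 - y / x) * x ^ p = p * x ^ (p - 1) * (x - y) := by
      have hxx : x ^ p = x ^ (p - 1) * x := by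
        rw [← Real.rpow_add_one hx0.ne']; ring_nf
      rw [hxx]; field_simp
    linarith [h4 ▸ h3]

private lemma integral_affine_rpow {a s l u p : ℝ} (hs : 0 < s) (hlu : l ≤ u)
    (ha : 0 ≤ a) (hp : 0 ≤ p) :
    ∫ t in l..u, (a + s * (t - l)) ^ p
      = ((a + s * (u - l)) ^ (p + 1) - a ^ (p + 1)) / ((p + 1) * s) := by
  have hbase : ∀ t ∈ Set.uIcc l u, 0 ≤ a + s * (t - l) := by
    intro t ht
    rw [Set.uIcc_of_le hlu] at ht
    have := ht.1
    nlinarith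
  have hderiv : ∀ t ∈ Set.uIcc l u,
      HasDerivAt (fun t => (a + s * (t - l)) ^ (p + 1) / ((p + 1) * s))
        ((a + s * (t - l)) ^ p) t := by
    intro t ht
    have hb := hbase t ht
    have haff : HasDerivAt (fun t : ℝ => a + s * (t - l)) s t := by
      simpa using (((hasDerivAt_id t).sub_const l).const_mul s).const_add a
    have hpow : HasDerivAt (fun z : ℝ => z ^ (p + 1))
        ((p + 1) * (a + s * (t - l)) ^ p) (a + s * (t - l)) := by
      have := Real.hasDerivAt_rpow_const
        (x := a + s * (t - l)) (p := p + 1) (Or.inr (by linarith))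
      simpa using this
    have := (hpow.comp t haff).div_const ((p + 1) * s)
    refine this.congr_deriv ?_
    rw [div_eq_iff (by positivity)]
    ring
  have hcont : IntervalIntegrable (fun t => (a + s * (t - l)) ^ p) volume l u := by
    apply ContinuousOn.intervalIntegrable
    apply ContinuousOn.rpow_const
    · fun_prop
    · intro t ht; right; linarith
  rw [intervalIntegral.integral_eq_sub_of_hasDerivAt hderiv hcont]
  have : a + s * (l - l) = a := by ring
  rw [this]
  ring

private lemma exists_good_constants (N : ℝ) (hN : 1 < N) (ε : ℝ) (hε : 0 < ε) :
    ∃ v : ℝ, 0 < v ∧ v ≤ 1/2 ∧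
      (1+v)*N*v^(1-1/N) ≤ 1/4 ∧
      1/2 ≤ (1-v)^(1/(N-1)) - ((1+v)*N)^(1/(N-1)) * v^(1/N) ∧
      2*(((1+v)*N)^(1/(N-1)) * v^(1/N)) < N^(1/N)*(1-v)^(1/N) ∧
      1 - ε ≤ (1 - (max 0 (1 - ((((1-v)^(1/N) - 2*(((1+v)*N)^(1/(N-1)) * v^(1/N))/N^(1/N))/(1+v)) ^ (N/(N-1)))))^(1/N)) / (1+v) := by
  have hN0 : (0:ℝ) < N := by linarith
  have hN1 : (0:ℝ) < N - 1 := by linarith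
  have hiN : (0:ℝ) < 1/N := by positivity
  have hiN1 : (0:ℝ) < 1/(N-1) := by positivity
  have h1iN : (0:ℝ) < 1 - 1/N := by
    have : 1/N < 1 := by
      rw [div_lt_one hN0]; linarith
    linarith
  have cpow : ∀ p : ℝ, 0 < p → ContinuousAt (fun v:ℝ => v ^ p) 0 := fun p hp =>
    Real.continuousAt_rpow_const 0 p (Or.inr hp.le)
  have cA : ContinuousAt (fun v:ℝ => ((1+v)*N)^(1/(N-1)) * v^(1/N)) 0 := by
    apply ContinuousAt.mul
    · exact ContinuousAt.rpow_const (by fun_prop) (Or.inl (by norm_num; positivity))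
    · exact cpow _ hiN
  have hA0 : ((1+(0:ℝ))*N)^(1/(N-1)) * (0:ℝ)^(1/N) = 0 := by
    rw [Real.zero_rpow (by positivity : (1:ℝ)/N ≠ 0)]; ring
  have c1v : ∀ p : ℝ, ContinuousAt (fun v:ℝ => (1-v) ^ p) 0 := by
    intro p
    exact ContinuousAt.rpow_const (by fun_prop) (Or.inl (by norm_num))
  set q : ℝ → ℝ := fun v => (((1-v)^(1/N) - 2*(((1+v)*N)^(1/(N-1)) * v^(1/N))/N^(1/N))/(1+v)) with hq
  have cq : ContinuousAt q 0 := by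
    apply ContinuousAt.div
    · exact (c1v _).sub ((continuousAt_const.mul cA).div_const _)
    · fun_prop
    · norm_num
  have hq0 : q 0 = 1 := by
    simp only [hq]
    rw [hA0]
    norm_num
  have cT : ContinuousAt (fun v => (max 0 (1 - (q v) ^ (N/(N-1))))^(1/N)) 0 := by
    have cqp : ContinuousAt (fun v => (q v) ^ (N/(N-1))) 0 :=
      cq.rpow_const (Or.inl (by rw [hq0]; norm_num))
    have cmax : ContinuousAt (fun v => max 0 (1 - (q v) ^ (N/(N-1)))) 0 :=
      continuousAt_const.max (continuousAt_const.sub cqp)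
    exact cmax.rpow_const (Or.inr hiN.le)
  have l1 : ∀ᶠ v in 𝓝[>] (0:ℝ), 0 < v := self_mem_nhdsWithin
  have ltend : Tendsto (fun v:ℝ => v) (𝓝[>] (0:ℝ)) (𝓝 0) :=
    tendsto_id.mono_left nhdsWithin_le_nhds
  have l2 : ∀ᶠ v in 𝓝[>] (0:ℝ), v ≤ 1/2 :=
    (ltend.eventually_lt_const (by norm_num : (0:ℝ) < 1/2)).mono fun v h => h.le
  have l3 : ∀ᶠ v in 𝓝[>] (0:ℝ), (1+v)*N*v^(1-1/N) ≤ 1/4 := by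
    have ct : Tendsto (fun v:ℝ => (1+v)*N*v^(1-1/N)) (𝓝[>] 0) (𝓝 ((1+0)*N*(0:ℝ)^(1-1/N))) := by
      apply Tendsto.mono_left _ nhdsWithin_le_nhds
      exact (ContinuousAt.mul (by fun_prop) (cpow _ h1iN)).tendsto
    have h0 : (1+(0:ℝ))*N*(0:ℝ)^(1-1/N) < 1/4 := by
      rw [Real.zero_rpow h1iN.ne']; norm_num
    exact (ct.eventually_lt_const h0).mono fun v h => h.le
  have l4 : ∀ᶠ v in 𝓝[>] (0:ℝ), 1/2 ≤ (1-v)^(1/(N-1)) - ((1+v)*N)^(1/(N-1)) * v^(1/N) := by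
    have ct : Tendsto (fun v:ℝ => (1-v)^(1/(N-1)) - ((1+v)*N)^(1/(N-1)) * v^(1/N)) (𝓝[>] 0)
        (𝓝 ((1-(0:ℝ))^(1/(N-1)) - ((1+0)*N)^(1/(N-1)) * (0:ℝ)^(1/N))) :=
      (((c1v _).sub cA).tendsto).mono_left nhdsWithin_le_nhds
    have h0 : (1/2:ℝ) < (1-(0:ℝ))^(1/(N-1)) - ((1+0)*N)^(1/(N-1)) * (0:ℝ)^(1/N) := by
      rw [hA0]; norm_num
    exact (ct.eventually_const_lt h0).mono fun v h => h.le
  have l5 : ∀ᶠ v in 𝓝[>] (0:ℝ), 2*(((1+v)*N)^(1/(N-1)) * v^(1/N)) < N^(1/N)*(1-v)^(1/N) := by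
    have ct : Tendsto (fun v:ℝ => N^(1/N)*(1-v)^(1/N) - 2*(((1+v)*N)^(1/(N-1)) * v^(1/N))) (𝓝[>] 0)
        (𝓝 (N^(1/N)*(1-(0:ℝ))^(1/N) - 2*(((1+0)*N)^(1/(N-1)) * (0:ℝ)^(1/N)))) :=
      ((continuousAt_const.mul (c1v _)).sub (continuousAt_const.mul cA)).tendsto.mono_left
        nhdsWithin_le_nhds
    have h0 : (0:ℝ) < N^(1/N)*(1-(0:ℝ))^(1/N) - 2*(((1+0)*N)^(1/(N-1)) * (0:ℝ)^(1/N)) := by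
      rw [hA0]
      norm_num
      positivity
    exact (ct.eventually_const_lt h0).mono fun v h => by linarith
  have l6 : ∀ᶠ v in 𝓝[>] (0:ℝ),
      1 - ε ≤ (1 - (max 0 (1 - (q v) ^ (N/(N-1))))^(1/N)) / (1+v) := by
    have ct : Tendsto (fun v => (1 - (max 0 (1 - (q v) ^ (N/(N-1))))^(1/N)) / (1+v)) (𝓝[>] 0)
        (𝓝 ((1 - (max 0 (1 - (q 0) ^ (N/(N-1))))^(1/N)) / (1+0))) := by
      refine (ContinuousAt.div (continuousAt_const.sub cT) (by fun_prop) (by norm_num)).tendsto.mono_left nhdsWithin_le_nhds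
    have h0 : 1 - ε < (1 - (max 0 (1 - (q 0) ^ (N/(N-1))))^(1/N)) / (1+0) := by
      rw [hq0, Real.one_rpow]
      norm_num
      rw [Real.zero_rpow (by positivity : (N:ℝ)⁻¹ ≠ 0)]
      linarith
    exact (ct.eventually_const_lt h0).mono fun v h => h.le
  obtain ⟨v, hv⟩ := (l1.and (l2.and (l3.and (l4.and (l5.and l6))))).exists
  exact ⟨v, hv.1, hv.2.1, hv.2.2.1, hv.2.2.2.1, hv.2.2.2.2.1, hv.2.2.2.2.2⟩

set_option maxHeartbeats 2000000 in
/-- Proposition 5.4 (almost rigidity for the segment `[0, r_h(w)]`): if `w` and the residual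
`Res_h^D(w) = D h(r_h(w)) / (N w^{1-1/N}) - 1` are small enough, then
`r_h(w)` is `ε`-close to `D w^{1/N}`.  Here `r = r_h(w)` is characterized by
`r ∈ (0, D')` and `∫_0^r h = w`. -/
theorem almost_rigidity_segment (N : ℝ) (hN : 1 < N) :
    ∀ ε : ℝ, 0 < ε → ∃ wbar : ℝ, 0 < wbar ∧ ∃ δbar : ℝ, 0 < δbar ∧
      ∀ D D' : ℝ, 0 < D' → D' ≤ D →
      ∀ h : ℝ → ℝ, IsProbCDDensity N D' h →
      ∀ w : ℝ, 0 < w → w ≤ wbar →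
      ∀ r : ℝ, r ∈ Set.Ioo 0 D' → (∫ x in (0:ℝ)..r, h x) = w →
        D * h r / (N * w ^ (1 - 1 / N)) - 1 ≤ δbar →
        (1 - ε) * D * w ^ (1 / N) ≤ r ∧ r ≤ (1 + ε) * D * w ^ (1 / N) := by
  intro ε hε
  set ε' := min ε (1/2) with hε'def
  have hε'pos : 0 < ε' := lt_min hε (by norm_num)
  have hε'le : ε' ≤ 1/2 := min_le_right _ _
  have hε'ε : ε' ≤ ε := min_le_left _ _
  obtain ⟨v, hv0, hv12, hC2, hC3, hC4, hC5⟩ := exists_good_constants N hN ε' hε'pos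
  refine ⟨v, hv0, v, hv0, ?_⟩
  intro D D' hD'0 hD'D h hprob w hw0 hwv r hrmem hintw hres
  have hN0 : (0:ℝ) < N := by linarith
  have hN1 : (0:ℝ) < N - 1 := by linarith
  have hNm1 : (0:ℝ) ≤ N - 1 := hN1.le
  have hiN : (0:ℝ) < 1/N := by positivity
  have hiNle1 : 1/N ≤ 1 := by
    rw [div_le_one hN0]; linarith
  have h1iN : (0:ℝ) < 1 - 1/N := by
    have : 1/N < 1 := by rw [div_lt_one hN0]; linarith
    linarith
  have hD0 : 0 < D := lt_of_lt_of_le hD'0 hD'D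
  have hr0 : 0 < r := hrmem.1
  have hrD' : r < D' := hrmem.2
  have hw12 : w ≤ 1/2 := hwv.trans hv12
  have hv1 : v ≤ 1 := by linarith
  obtain ⟨⟨hnn, hpos, hconc⟩, hmass⟩ := hprob
  set g : ℝ → ℝ := fun x => h x ^ (1/(N-1)) with hgdef
  have hconc' : ConcaveOn ℝ (Set.Icc 0 D') g := hconc
  have gnn : ∀ x ∈ Set.Icc (0:ℝ) D', 0 ≤ g x := fun x hx =>
    Real.rpow_nonneg (hnn x hx) _
  have hgh : ∀ x ∈ Set.Icc (0:ℝ) D', (g x) ^ (N-1) = h x := by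
    intro x hx
    have e1 : (1/(N-1)) * (N-1) = 1 := by field_simp
    rw [hgdef]
    dsimp only
    rw [← Real.rpow_mul (hnn x hx), e1, Real.rpow_one]
  have hrIcc : r ∈ Set.Icc (0:ℝ) D' := ⟨hr0.le, hrD'.le⟩
  have h0Icc : (0:ℝ) ∈ Set.Icc (0:ℝ) D' := ⟨le_refl 0, hD'0.le⟩
  set γ := g r with hγdef
  have hγ : 0 < γ := Real.rpow_pos_of_pos (hpos r hrmem) _
  have hhrγ : h r = γ ^ (N-1) := (hgh r hrIcc).symm
  -- residual rearranged
  have hNw : (0:ℝ) < N * w ^ (1 - 1/N) := by positivity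
  have hγD : γ^(N-1) * D ≤ (1+v) * (N * w^(1-1/N)) := by
    have h1 : D * h r / (N * w ^ (1 - 1/N)) ≤ 1 + v := by linarith
    rw [div_le_iff₀ hNw] at h1
    rw [hhrγ] at h1
    calc γ^(N-1) * D = D * γ^(N-1) := by ring
      _ ≤ (1+v) * (N * w^(1-1/N)) := h1
  -- integrability
  have hIntIcc : IntegrableOn h (Set.Icc (0:ℝ) D') volume := by
    by_contra hcon
    rw [MeasureTheory.integral_undef hcon] at hmass
    norm_num at hmass
  have hInt0r : IntervalIntegrable h volume 0 r := by
    rw [intervalIntegrable_iff_integrableOn_Ioc_of_le hr0.le]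
    exact hIntIcc.mono_set (fun t ht => ⟨le_of_lt ht.1, ht.2.trans hrD'.le⟩)
  have hIntrD : IntervalIntegrable h volume r D' := by
    rw [intervalIntegrable_iff_integrableOn_Ioc_of_le hrD'.le]
    exact hIntIcc.mono_set (fun t ht => ⟨(hr0.trans ht.1).le, ht.2⟩)
  have hmass' : (∫ t in r..D', h t) = 1 - w := by
    have hadd := intervalIntegral.integral_add_adjacent_intervals hInt0r hIntrD
    rw [hintw] at hadd
    have h2 : (∫ t in (0:ℝ)..D', h t) = 1 := by
      rw [intervalIntegral.integral_of_le hD'0.le, ← MeasureTheory.integral_Icc_eq_integral_Ioc]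
      exact hmass
    rw [h2] at hadd
    linarith
  -- pointwise bounds from concavity
  have L1 : ∀ x ∈ Set.Icc (0:ℝ) r, x * γ ≤ r * g x := by
    intro x hx
    have hxIcc : x ∈ Set.Icc (0:ℝ) D' := ⟨hx.1, hx.2.trans hrD'.le⟩
    have h3 := concave3 hconc' h0Icc hrIcc hx.1 hx.2
    have g0 : 0 ≤ g 0 := gnn 0 h0Icc
    have := mul_nonneg (sub_nonneg.2 hx.2) g0
    linarith [h3, this]
  have L2 : ∀ t ∈ Set.Icc r D', r * g t ≤ t * γ := by
    intro t ht
    have htIcc : t ∈ Set.Icc (0:ℝ) D' := ⟨hr0.le.trans ht.1, ht.2⟩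
    have h3 := concave3 hconc' h0Icc htIcc hr0.le ht.1
    have g0 : 0 ≤ g 0 := gnn 0 h0Icc
    have := mul_nonneg (sub_nonneg.2 ht.1) g0
    linarith [h3, this]
  set K := γ^(N-1)/r^(N-1) with hKdef
  have hrN1pos : (0:ℝ) < r^(N-1) := Real.rpow_pos_of_pos hr0 _
  have hKpos : 0 < K := div_pos (Real.rpow_pos_of_pos hγ _) hrN1pos
  have H1 : ∀ x ∈ Set.Icc (0:ℝ) r, K * x^(N-1) ≤ h x := by
    intro x hx
    have hxIcc : x ∈ Set.Icc (0:ℝ) D' := ⟨hx.1, hx.2.trans hrD'.le⟩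
    have hgx : x * γ / r ≤ g x := by
      rw [div_le_iff₀ hr0]
      calc x * γ ≤ r * g x := L1 x hx
        _ = g x * r := by ring
    have hb0 : 0 ≤ x * γ / r := div_nonneg (mul_nonneg hx.1 hγ.le) hr0.le
    have := Real.rpow_le_rpow hb0 hgx hNm1
    rw [hgh x hxIcc] at this
    calc K * x^(N-1) = (x * γ / r)^(N-1) := by
          rw [Real.div_rpow (mul_nonneg hx.1 hγ.le) hr0.le, Real.mul_rpow hx.1 hγ.le, hKdef]
          ring
      _ ≤ h x := this
  have H2 : ∀ t ∈ Set.Icc r D', h t ≤ K * t^(N-1) := by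
    intro t ht
    have htIcc : t ∈ Set.Icc (0:ℝ) D' := ⟨hr0.le.trans ht.1, ht.2⟩
    have hgt : g t ≤ t * γ / r := by
      rw [le_div_iff₀ hr0]
      calc g t * r = r * g t := by ring
        _ ≤ t * γ := L2 t ht
    have := Real.rpow_le_rpow (gnn t htIcc) hgt hNm1
    rw [hgh t htIcc] at this
    calc h t ≤ (t * γ / r)^(N-1) := this
      _ = K * t^(N-1) := by
          rw [Real.div_rpow (mul_nonneg (hr0.le.trans ht.1) hγ.le) hr0.le,
            Real.mul_rpow (hr0.le.trans ht.1) hγ.le, hKdef]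
          ring
  -- integral bounds
  have hcontH1 : IntervalIntegrable (fun x => K * x^(N-1)) volume 0 r := by
    apply ContinuousOn.intervalIntegrable
    exact continuousOn_const.mul (continuousOn_id.rpow_const fun x _ => Or.inr hNm1)
  have hcontH2 : IntervalIntegrable (fun x => K * x^(N-1)) volume r D' := by
    apply ContinuousOn.intervalIntegrable
    exact continuousOn_const.mul (continuousOn_id.rpow_const fun x _ => Or.inr hNm1)
  have hNeq : N - 1 + 1 = N := by ring
  have E1 : K * (r^N/N) ≤ w := by
    have hm := intervalIntegral.integral_mono_on hr0.le hcontH1 hInt0r H1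
    rw [hintw] at hm
    have hcalc : (∫ x in (0:ℝ)..r, K * x^(N-1)) = K * (r^N/N) := by
      rw [intervalIntegral.integral_const_mul, integral_rpow (Or.inl (by linarith)), hNeq,
        Real.zero_rpow hN0.ne']
      ring
    linarith [hcalc ▸ hm]
  have E2 : 1 - w ≤ K * ((D'^N - r^N)/N) := by
    have hm := intervalIntegral.integral_mono_on hrD'.le hIntrD hcontH2 H2
    rw [hmass'] at hm
    have hcalc : (∫ x in r..D', K * x^(N-1)) = K * ((D'^N - r^N)/N) := by
      rw [intervalIntegral.integral_const_mul, integral_rpow (Or.inl (by linarith)), hNeq]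
    linarith [hcalc ▸ hm]
  -- upper bound for r
  have hDrN : (0:ℝ) ≤ D'^N - r^N :=
    sub_nonneg.2 (Real.rpow_le_rpow hr0.le hrD'.le hN0.le)
  have hrNpos : (0:ℝ) < r^N := Real.rpow_pos_of_pos hr0 _
  have hrN_le : r^N ≤ w * D'^N := by
    have E1' : K * r^N ≤ N * w := by
      have := mul_le_mul_of_nonneg_left E1 hN0.le
      calc K * r^N = N * (K * (r^N/N)) := by field_simp
        _ ≤ N * w := this
    have E2' : N * (1 - w) ≤ K * (D'^N - r^N) := by
      have := mul_le_mul_of_nonneg_left E2 hN0.le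
      calc N * (1 - w) ≤ N * (K * ((D'^N - r^N)/N)) := this
        _ = K * (D'^N - r^N) := by field_simp
    have step1 : K * r^N * (D'^N - r^N) ≤ N * w * (D'^N - r^N) :=
      mul_le_mul_of_nonneg_right E1' hDrN
    have step2 : N * (1 - w) * r^N ≤ K * (D'^N - r^N) * r^N :=
      mul_le_mul_of_nonneg_right E2' hrNpos.le
    have hfin : N * r^N ≤ N * (w * D'^N) := by nlinarith [step1, step2]
    exact le_of_mul_le_mul_left hfin hN0
  have hrupper : r ≤ D' * w^(1/N) := by
    have hstep := Real.rpow_le_rpow hrNpos.le hrN_le hiN.le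
    have e1 : (r^N)^(1/N) = r := by
      rw [← Real.rpow_mul hr0.le, (show N * (1/N) = 1 by field_simp), Real.rpow_one]
    have e2 : (w * D'^N)^(1/N) = w^(1/N) * D' := by
      rw [Real.mul_rpow hw0.le (Real.rpow_nonneg hD'0.le _), ← Real.rpow_mul hD'0.le,
        (show N * (1/N) = 1 by field_simp), Real.rpow_one]
    rw [e1, e2] at hstep
    linarith
  have hwpow0 : (0:ℝ) ≤ w^(1/N) := Real.rpow_nonneg hw0.le _
  constructor
  · -- lower bound
    set A := ((1+v)*N)^(1/(N-1)) * v^(1/N) with hAdef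
    set Bw := ((1+v)*N)^(1/(N-1)) * w^(1/N) with hBwdef
    set b := γ * D'^(1/(N-1)) with hbdef
    set c := (N*(1-w))^(1/N) with hcdef
    have hw1 : (0:ℝ) ≤ 1 - w := by linarith only [hw12]
    have hbpos : 0 < b := mul_pos hγ (Real.rpow_pos_of_pos hD'0 _)
    have ht4 : (w^(1-1/N))^(1/(N-1)) = w^(1/N) := by
      rw [← Real.rpow_mul hw0.le]
      congr 1
      field_simp
    have hγle : γ ≤ ((1+v) * (N * w^(1-1/N)) / D)^(1/(N-1)) := by
      have h1 : γ^(N-1) ≤ (1+v) * (N * w^(1-1/N)) / D := by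
        rw [le_div_iff₀ hD0]; exact hγD
      have h2 := Real.rpow_le_rpow (Real.rpow_nonneg hγ.le _) h1
        (by positivity : (0:ℝ) ≤ 1/(N-1))
      rwa [← Real.rpow_mul hγ.le, (show (N-1)*(1/(N-1)) = 1 by field_simp),
        Real.rpow_one] at h2
    have hbBw : b ≤ Bw := by
      have h1 : b ≤ ((1+v) * (N * w^(1-1/N)) / D)^(1/(N-1)) * D'^(1/(N-1)) := by
        rw [hbdef]
        exact mul_le_mul_of_nonneg_right hγle (Real.rpow_nonneg hD'0.le _)
      have h2 : ((1+v) * (N * w^(1-1/N)) / D)^(1/(N-1)) * D'^(1/(N-1))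
          = ((1+v) * (N * w^(1-1/N)) / D * D')^(1/(N-1)) :=
        (Real.mul_rpow (by positivity) hD'0.le).symm
      have h3 : (1+v) * (N * w^(1-1/N)) / D * D' ≤ (1+v) * (N * w^(1-1/N)) := by
        rw [div_mul_eq_mul_div, div_le_iff₀ hD0]
        have hnn2 : (0:ℝ) ≤ (1+v) * (N * w^(1-1/N)) := by positivity
        exact mul_le_mul_of_nonneg_left hD'D hnn2
      have h4 := Real.rpow_le_rpow (by positivity) h3 (by positivity : (0:ℝ) ≤ 1/(N-1))
      have h5 : ((1+v) * (N * w^(1-1/N)))^(1/(N-1))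
          = ((1+v)*N)^(1/(N-1)) * w^(1/N) := by
        rw [show (1+v) * (N * w^(1-1/N)) = ((1+v)*N) * w^(1-1/N) by ring,
          Real.mul_rpow (by positivity) (Real.rpow_nonneg hw0.le _), ht4]
      calc b ≤ ((1+v) * (N * w^(1-1/N)) / D)^(1/(N-1)) * D'^(1/(N-1)) := h1
        _ = ((1+v) * (N * w^(1-1/N)) / D * D')^(1/(N-1)) := h2
        _ ≤ ((1+v) * (N * w^(1-1/N)))^(1/(N-1)) := h4
        _ = Bw := by rw [h5, hBwdef]
    have hBwA : Bw ≤ A := by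
      rw [hBwdef, hAdef]
      exact mul_le_mul_of_nonneg_left (Real.rpow_le_rpow hw0.le hwv hiN.le)
        (Real.rpow_nonneg (by positivity) _)
    have hceq : c = N^(1/N) * (1-w)^(1/N) := Real.mul_rpow hN0.le hw1
    have hcge : N^(1/N) * (1-v)^(1/N) ≤ c := by
      rw [hceq]
      exact mul_le_mul_of_nonneg_left
        (Real.rpow_le_rpow (by linarith) (by linarith) hiN.le)
        (Real.rpow_nonneg hN0.le _)
    have hcbBw : 0 < c - 2*Bw := by
      have hh : 2*Bw ≤ 2*A := by linarith only [hBwA]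
      linarith only [hC4, hcge, hh]
    have hcb : 0 < c - 2*b := by linarith only [hbBw, hcbBw]
    set s₁ := (c - 2*b)^(N/(N-1)) / D'^(N/(N-1)) with hs₁def
    have hDpow : (0:ℝ) < D'^(N/(N-1)) := Real.rpow_pos_of_pos hD'0 _
    have hD'pow1 : (0:ℝ) < D'^(1/(N-1)) := Real.rpow_pos_of_pos hD'0 _
    have hs₁pos : 0 < s₁ := div_pos (Real.rpow_pos_of_pos hcb _) hDpow
    have hD'e1 : D' * D'^(1/(N-1)) = D'^(N/(N-1)) := by
      have he : D'^(N/(N-1)) = D'^(1 + 1/(N-1)) := by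
        congr 1
        field_simp
        ring
      rw [he, Real.rpow_add hD'0, Real.rpow_one]
    -- the uniform slope bound
    have hslope : ∀ x, 0 ≤ x → x < r → s₁ * (r - x) ≤ γ - g x := by
      intro x hx0 hxr
      have hrx : 0 < r - x := by linarith only [hxr]
      have hxIcc : x ∈ Set.Icc (0:ℝ) D' := ⟨hx0, by linarith only [hrD', hxr]⟩
      set sx := (γ - g x) / (r - x) with hsxdef
      have hsxrx : sx * (r - x) = γ - g x := div_mul_cancel₀ _ hrx.ne'
      suffices hs : s₁ ≤ sx by
        calc s₁ * (r - x) ≤ sx * (r - x) := mul_le_mul_of_nonneg_right hs hrx.le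
          _ = γ - g x := hsxrx
      have hgt2 : ∀ t ∈ Set.Icc r D', g t ≤ γ + sx*(t-r) := by
        intro t ht
        have htIcc : t ∈ Set.Icc (0:ℝ) D' := ⟨hr0.le.trans ht.1, ht.2⟩
        have h3 := concave3 hconc' hxIcc htIcc hxr.le ht.1
        have key : (r - x) * (g t) ≤ (r - x) * (γ + sx*(t-r)) := by
          have e : (r - x) * (γ + sx*(t-r)) = (t - x)*γ - (t - r)*(g x) := by
            rw [hsxdef]
            field_simp
            ring
          rw [e]
          linarith only [h3]
        exact le_of_mul_le_mul_left key hrx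
      have hbase : ∀ t ∈ Set.Icc r D', 0 ≤ γ + sx*(t-r) := fun t ht =>
        le_trans (gnn t ⟨hr0.le.trans ht.1, ht.2⟩) (hgt2 t ht)
      have hpt : ∀ t ∈ Set.Icc r D', h t ≤ (γ + sx*(t-r))^(N-1) := by
        intro t ht
        have htIcc : t ∈ Set.Icc (0:ℝ) D' := ⟨hr0.le.trans ht.1, ht.2⟩
        rw [← hgh t htIcc]
        exact Real.rpow_le_rpow (gnn t htIcc) (hgt2 t ht) hNm1
      have hsxpos : 0 < sx := by
        by_contra hle
        push_neg at hle
        have hb2 : ∀ t ∈ Set.Icc r D', h t ≤ γ^(N-1) := by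
          intro t ht
          refine (hpt t ht).trans (Real.rpow_le_rpow (hbase t ht) ?_ hNm1)
          have hmn := mul_nonpos_of_nonpos_of_nonneg hle (sub_nonneg.2 ht.1)
          linarith only [hmn]
        have hm := intervalIntegral.integral_mono_on hrD'.le hIntrD
          intervalIntegrable_const hb2
        rw [hmass', intervalIntegral.integral_const, smul_eq_mul] at hm
        have hup : (D' - r) * γ^(N-1) ≤ (1+v)*N*v^(1-1/N) := by
          have hg1 : γ^(N-1) * (D' - r) ≤ γ^(N-1) * D := by
            refine mul_le_mul_of_nonneg_left ?_ (Real.rpow_nonneg hγ.le _)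
            linarith only [hr0, hrD', hD'D]
          have hg2 : (1+v) * (N * w^(1-1/N)) ≤ (1+v) * (N * v^(1-1/N)) := by
            have hrp := Real.rpow_le_rpow hw0.le hwv h1iN.le
            refine mul_le_mul_of_nonneg_left ?_ (by linarith only [hv0] : (0:ℝ) ≤ 1+v)
            exact mul_le_mul_of_nonneg_left hrp hN0.le
          calc (D' - r) * γ^(N-1) = γ^(N-1) * (D' - r) := by ring
            _ ≤ γ^(N-1) * D := hg1
            _ ≤ (1+v) * (N * w^(1-1/N)) := hγD
            _ ≤ (1+v) * (N * v^(1-1/N)) := hg2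
            _ = (1+v)*N*v^(1-1/N) := by ring
        linarith only [hm, hup, hC2, hw12]
      -- integrate the pointwise bound
      have hintaff : IntervalIntegrable (fun t => (γ + sx*(t-r))^(N-1)) volume r D' := by
        apply ContinuousOn.intervalIntegrable
        apply ContinuousOn.rpow_const (by fun_prop)
        intro t _; right; exact hNm1
      have hm := intervalIntegral.integral_mono_on hrD'.le hIntrD hintaff hpt
      rw [hmass'] at hm
      have hcalc := integral_affine_rpow (a := γ) (s := sx) (l := r) (u := D')
        hsxpos hrD'.le hγ.le hNm1
      rw [hNeq] at hcalc
      rw [hcalc] at hm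
      set X := γ + sx*(D'-r) with hXdef
      have hXγ : γ ≤ X := by
        have hmp := mul_pos hsxpos (sub_pos.2 hrD')
        rw [hXdef]; linarith only [hmp]
      have hXpos : 0 < X := lt_of_lt_of_le hγ hXγ
      have E3 : N*sx*(1-w) ≤ X^N - γ^N := by
        have hh := mul_le_mul_of_nonneg_left hm (by positivity : (0:ℝ) ≤ N*sx)
        calc N*sx*(1-w) ≤ N*sx*((X^N - γ^N)/(N*sx)) := hh
          _ = X^N - γ^N := by field_simp
      set Y := γ + sx*D' with hYdef
      have hXY : X ≤ Y := by
        have hh : sx*(D'-r) ≤ sx*D' := mul_le_mul_of_nonneg_left (by linarith) hsxpos.le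
        rw [hXdef, hYdef]; linarith only [hh]
      have hYpos : 0 < Y := lt_of_lt_of_le hXpos hXY
      have E4 : N*sx*(1-w) ≤ Y^N := by
        have h1 : X^N ≤ Y^N := Real.rpow_le_rpow hXpos.le hXY hN0.le
        have h2 : (0:ℝ) ≤ γ^N := Real.rpow_nonneg hγ.le _
        linarith only [E3, h1, h2]
      have E5 : 1 - w ≤ Y^(N-1) * D' := by
        have hmvt := rpow_sub_rpow_le hγ.le hXγ hN.le
        have hXγe : X - γ = sx*(D'-r) := by rw [hXdef]; ring
        rw [hXγe] at hmvt
        have h1 : N*sx*(1-w) ≤ N * X^(N-1) * (sx*(D'-r)) := le_trans E3 hmvt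
        have h2 : 1 - w ≤ X^(N-1) * (D'-r) := by
          have hpos2 : (0:ℝ) < N * sx := by positivity
          have h1' : (N*sx)*(1-w) ≤ (N*sx)*(X^(N-1)*(D'-r)) := by
            calc (N*sx)*(1-w) = N*sx*(1-w) := by ring
              _ ≤ N * X^(N-1) * (sx*(D'-r)) := h1
              _ = (N*sx)*(X^(N-1)*(D'-r)) := by ring
          exact le_of_mul_le_mul_left h1' hpos2
        have h3 : X^(N-1)*(D'-r) ≤ Y^(N-1)*D' := by
          apply mul_le_mul (Real.rpow_le_rpow hXpos.le hXY hNm1)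
            (by linarith only [hr0, hrD']) (by linarith only [hr0, hrD'])
            (Real.rpow_nonneg hYpos.le _)
        linarith only [h2, h3]
      set P := sx * D'^(N/(N-1)) with hPdef
      have hPpos : 0 < P := mul_pos hsxpos hDpow
      have hYD : Y * D'^(1/(N-1)) = b + P := by
        rw [hYdef, hbdef, hPdef, add_mul, mul_assoc, hD'e1]
      have hbP : 0 < b + P := by linarith only [hbpos, hPpos]
      have hP1 : (1-w)^(1/(N-1)) ≤ b + P := by
        have h1 : (b+P)^(N-1) = Y^(N-1) * D' := by
          rw [← hYD, Real.mul_rpow hYpos.le hD'pow1.le, ← Real.rpow_mul hD'0.le,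
            (show (1/(N-1))*(N-1) = 1 by field_simp), Real.rpow_one]
        have h2 : (1 - w) ≤ (b+P)^(N-1) := by rw [h1]; exact E5
        have h3 := Real.rpow_le_rpow hw1 h2 (by positivity : (0:ℝ) ≤ 1/(N-1))
        rwa [← Real.rpow_mul hbP.le, (show (N-1)*(1/(N-1)) = 1 by field_simp),
          Real.rpow_one] at h3
      have hP2 : c * P^(1/N) ≤ b + P := by
        have h1 : (b+P)^N = Y^N * D'^(N/(N-1)) := by
          rw [← hYD, Real.mul_rpow hYpos.le hD'pow1.le, ← Real.rpow_mul hD'0.le,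
            (show (1/(N-1))*N = N/(N-1) by ring)]
        have h2 : N*(1-w)*P ≤ (b+P)^N := by
          rw [h1, hPdef]
          calc N*(1-w)*(sx*D'^(N/(N-1))) = (N*sx*(1-w))*D'^(N/(N-1)) := by ring
            _ ≤ Y^N * D'^(N/(N-1)) := mul_le_mul_of_nonneg_right E4 hDpow.le
        have h3 := Real.rpow_le_rpow (by positivity) h2 hiN.le
        have h4 : (N*(1-w)*P)^(1/N) = c * P^(1/N) := by
          rw [hcdef, ← Real.mul_rpow (by positivity) hPpos.le]
        have h5 : ((b+P)^N)^(1/N) = b + P := by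
          rw [← Real.rpow_mul hbP.le, (show N*(1/N) = 1 by field_simp), Real.rpow_one]
        rw [h4, h5] at h3
        exact h3
      have hPhalf : 1/2 ≤ P := by
        have h1 : (1-v)^(1/(N-1)) ≤ (1-w)^(1/(N-1)) :=
          Real.rpow_le_rpow (by linarith) (by linarith) (by positivity)
        have h2 : b ≤ A := le_trans hbBw hBwA
        linarith only [hC3, hP1, h1, h2]
      have hPmain : (c - 2*b)^(N/(N-1)) ≤ P := by
        by_contra hlt
        push_neg at hlt
        have h1 : P^((N-1)/N) < c - 2*b := by
          have hm2 := Real.rpow_lt_rpow hPpos.le hlt (by positivity : (0:ℝ) < (N-1)/N)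
          rwa [← Real.rpow_mul hcb.le, (show (N/(N-1))*((N-1)/N) = 1 by field_simp),
            Real.rpow_one] at hm2
        have hsplit : P = P^(1/N) * P^((N-1)/N) := by
          rw [← Real.rpow_add hPpos, (show 1/N + (N-1)/N = 1 by field_simp; ring), Real.rpow_one]
        have hP1N : 0 < P^(1/N) := Real.rpow_pos_of_pos hPpos _
        have h2 : c * P^(1/N) < b + P^(1/N)*(c - 2*b) := by
          calc c * P^(1/N) ≤ b + P := hP2
            _ = b + P^(1/N) * P^((N-1)/N) := by rw [← hsplit]
            _ < b + P^(1/N)*(c - 2*b) := by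
                have hml := mul_lt_mul_of_pos_left h1 hP1N
                linarith only [hml]
        have h4 : P^(1/N) < 1/2 := by
          by_contra hc
          push_neg at hc
          have hbx : b*(1/2) ≤ b*P^(1/N) := mul_le_mul_of_nonneg_left hc hbpos.le
          nlinarith only [h2, hbx, hbpos]
        have h5 : (1/2:ℝ) ≤ P^(1/N) := by
          calc (1/2:ℝ) = (1/2:ℝ)^(1:ℝ) := (Real.rpow_one _).symm
            _ ≤ (1/2:ℝ)^(1/N) := Real.rpow_le_rpow_of_exponent_ge (by norm_num)
                (by norm_num) hiNle1
            _ ≤ P^(1/N) := Real.rpow_le_rpow (by norm_num) hPhalf hiN.le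
        linarith only [h4, h5]
      rw [hs₁def, div_le_iff₀ hDpow]
      rw [← hPdef]
      exact hPmain
    -- base nonneg
    have hbase0 : (0:ℝ) ≤ γ - s₁ * r := by
      have hs := hslope 0 le_rfl hr0
      have g0 : 0 ≤ g 0 := gnn 0 h0Icc
      simp only [sub_zero] at hs
      linarith only [hs, g0]
    -- integrate the slope bound on [0, r]
    have hptlow : ∀ x ∈ Set.Icc (0:ℝ) r, h x ≤ ((γ - s₁*r) + s₁*(x - 0))^(N-1) := by
      intro x hx
      have hxIcc : x ∈ Set.Icc (0:ℝ) D' := ⟨hx.1, hx.2.trans hrD'.le⟩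
      rcases eq_or_lt_of_le hx.2 with heq|hlt
      · rw [heq]
        have e : γ - s₁*r + s₁*(r - 0) = γ := by ring
        rw [e]
        exact le_of_eq hhrγ
      · have hs := hslope x hx.1 hlt
        have hgx : g x ≤ γ - s₁*r + s₁*(x-0) := by linarith only [hs]
        rw [← hgh x hxIcc]
        exact Real.rpow_le_rpow (gnn x hxIcc) hgx hNm1
    have hintlow : IntervalIntegrable (fun x => ((γ - s₁*r) + s₁*(x - 0))^(N-1)) volume 0 r := by
      apply ContinuousOn.intervalIntegrable
      apply ContinuousOn.rpow_const (by fun_prop)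
      intro t _; right; exact hNm1
    have hm6 := intervalIntegral.integral_mono_on hr0.le hInt0r hintlow hptlow
    rw [hintw] at hm6
    have hcalc6 := integral_affine_rpow (a := γ - s₁*r) (s := s₁) (l := 0) (u := r)
      hs₁pos hr0.le hbase0 hNm1
    rw [hNeq] at hcalc6
    rw [hcalc6] at hm6
    have e6 : γ - s₁*r + s₁*(r-0) = γ := by ring
    rw [e6] at hm6
    have E6 : N*w*s₁ ≤ γ^N - (γ - s₁*r)^N := by
      have hh := mul_le_mul_of_nonneg_left hm6 (by positivity : (0:ℝ) ≤ N*s₁)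
      calc N*w*s₁ = N*s₁*w := by ring
        _ ≤ N*s₁*((γ^N - (γ-s₁*r)^N)/(N*s₁)) := hh
        _ = γ^N - (γ-s₁*r)^N := by field_simp
    -- final algebra
    set τ := (γ - s₁*r)/γ with hτdef
    have hτ0 : 0 ≤ τ := div_nonneg hbase0 hγ.le
    have hτr : s₁*r = γ*(1-τ) := by
      rw [hτdef]
      field_simp
      ring
    have hγN : γ^N = γ^(N-1)*γ := by
      rw [← Real.rpow_add_one hγ.ne']
      ring_nf
    have hτN : (γ - s₁*r)^N = γ^N * τ^N := by
      have e : γ - s₁*r = γ * τ := by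
        rw [hτdef]; field_simp
      rw [e, Real.mul_rpow hγ.le hτ0]
    have E6' : N*w*s₁ ≤ γ^N*(1 - τ^N) := by
      rw [mul_sub, mul_one, ← hτN]
      exact E6
    have h1τN : 0 < 1 - τ^N := by
      have h1 : 0 < N*w*s₁ := by positivity
      have h2 : 0 < γ^N := Real.rpow_pos_of_pos hγ _
      nlinarith only [E6', h1, h2]
    have hwsplit : w^(1-1/N) * w^(1/N) = w := by
      rw [← Real.rpow_add hw0, (show (1-1/N)+(1/N) = 1 by ring), Real.rpow_one]
    have key1 : w^(1/N)*s₁*D ≤ (1+v)*γ*(1-τ^N) := by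
      have hγNle : γ^N*D ≤ (1+v)*(N*w^(1-1/N))*γ := by
        calc γ^N*D = (γ^(N-1)*D)*γ := by rw [hγN]; ring
          _ ≤ ((1+v)*(N*w^(1-1/N)))*γ := mul_le_mul_of_nonneg_right hγD hγ.le
          _ = (1+v)*(N*w^(1-1/N))*γ := by ring
      have h6 : (N*w^(1-1/N)) * (w^(1/N)*s₁*D) ≤ (N*w^(1-1/N)) * ((1+v)*γ*(1-τ^N)) := by
        calc (N*w^(1-1/N)) * (w^(1/N)*s₁*D) = ((N*(w^(1-1/N)*w^(1/N))*s₁))*D := by ring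
          _ = (N*w*s₁)*D := by rw [hwsplit]
          _ ≤ (γ^N*(1-τ^N))*D := mul_le_mul_of_nonneg_right E6' hD0.le
          _ = (γ^N*D)*(1-τ^N) := by ring
          _ ≤ ((1+v)*(N*w^(1-1/N))*γ)*(1-τ^N) :=
              mul_le_mul_of_nonneg_right hγNle h1τN.le
          _ = (N*w^(1-1/N)) * ((1+v)*γ*(1-τ^N)) := by ring
      exact le_of_mul_le_mul_left h6 (by positivity)
    set qv := ((1-v)^(1/N) - 2*A/N^(1/N))/(1+v) with hqvdef
    have hNpow : (0:ℝ) < N^(1/N) := Real.rpow_pos_of_pos hN0 _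
    have hqvnum : 0 < N^(1/N)*(1-v)^(1/N) - 2*A := by linarith [hC4]
    have hqvpos : 0 < qv := by
      rw [hqvdef]
      apply div_pos _ (by linarith : (0:ℝ) < 1+v)
      rw [sub_pos, div_lt_iff₀ hNpow]
      nlinarith only [hqvnum]
    -- the key quantitative estimate
    have hqN : qv^(N/(N-1)) ≤ 1 - τ^N := by
      -- step (§): qv^(N/(N-1)) * ((1+v)*((1+v)*N)^(1/(N-1))) ≤ (c - 2*Bw)^(N/(N-1))
      have hM : (1+v)*((1+v)*N)^(1/(N-1)) = ((1+v)*N^(1/N))^(N/(N-1)) := by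
        rw [Real.mul_rpow (by linarith : (0:ℝ) ≤ 1+v) hNpow.le,
          ← Real.rpow_mul hN0.le, (show (1/N)*(N/(N-1)) = 1/(N-1) by field_simp),
          Real.mul_rpow (by linarith : (0:ℝ) ≤ 1+v) hN0.le,
          (show N/(N-1) = 1 + 1/(N-1) by field_simp; ring),
          Real.rpow_add (by linarith : (0:ℝ) < 1+v), Real.rpow_one]
        ring
      have hqinner : qv * ((1+v)*N^(1/N)) = N^(1/N)*(1-v)^(1/N) - 2*A := by
        rw [hqvdef]
        field_simp
      have hstep1 : qv^(N/(N-1)) * ((1+v)*((1+v)*N)^(1/(N-1))) ≤ (c - 2*Bw)^(N/(N-1)) := by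
        rw [hM, ← Real.mul_rpow hqvpos.le (by positivity : (0:ℝ) ≤ (1+v)*N^(1/N)), hqinner]
        apply Real.rpow_le_rpow hqvnum.le _ (by positivity)
        linarith only [hcge, hBwA]
      -- step (‡): multiply by w^(1/N)
      have hstep2 : qv^(N/(N-1)) * (1+v) * Bw ≤ w^(1/N) * (c - 2*Bw)^(N/(N-1)) := by
        have hh := mul_le_mul_of_nonneg_right hstep1 hwpow0
        calc qv^(N/(N-1)) * (1+v) * Bw
            = (qv^(N/(N-1)) * ((1+v)*((1+v)*N)^(1/(N-1)))) * w^(1/N) := by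
              rw [hBwdef]; ring
          _ ≤ (c - 2*Bw)^(N/(N-1)) * w^(1/N) := hh
          _ = w^(1/N) * (c - 2*Bw)^(N/(N-1)) := by ring
      -- step: replace Bw by b
      have hstep3 : qv^(N/(N-1)) * (1+v) * b ≤ w^(1/N) * (c - 2*b)^(N/(N-1)) := by
        have hq1 : qv^(N/(N-1)) * (1+v) * b ≤ qv^(N/(N-1)) * (1+v) * Bw := by
          apply mul_le_mul_of_nonneg_left hbBw
          exact mul_nonneg (Real.rpow_nonneg hqvpos.le _) (by linarith only [hv0])
        have hq2 : w^(1/N) * (c - 2*Bw)^(N/(N-1)) ≤ w^(1/N) * (c - 2*b)^(N/(N-1)) := by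
          apply mul_le_mul_of_nonneg_left _ hwpow0
          exact Real.rpow_le_rpow hcbBw.le (by linarith only [hbBw]) (by positivity)
        linarith only [hstep2, hq1, hq2]
      -- step (†): qv^(N/(N-1)) * ((1+v)*γ) ≤ w^(1/N)*s₁*D
      have hstep4 : qv^(N/(N-1)) * ((1+v)*γ) ≤ w^(1/N)*s₁*D := by
        have hγb : γ * D'^(N/(N-1)) = b * D' := by
          rw [hbdef, ← hD'e1]; ring
        have hh : qv^(N/(N-1)) * (1+v) * b * D' ≤ w^(1/N) * (c - 2*b)^(N/(N-1)) * D := by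
          have h1 := mul_le_mul_of_nonneg_right hstep3 hD'0.le
          have h2 : w^(1/N) * (c - 2*b)^(N/(N-1)) * D' ≤ w^(1/N) * (c - 2*b)^(N/(N-1)) * D := by
            apply mul_le_mul_of_nonneg_left hD'D
            positivity
          linarith only [h1, h2]
        have he : qv^(N/(N-1)) * ((1+v)*γ) * D'^(N/(N-1)) = qv^(N/(N-1)) * (1+v) * b * D' := by
          calc qv^(N/(N-1)) * ((1+v)*γ) * D'^(N/(N-1))
              = qv^(N/(N-1)) * (1+v) * (γ * D'^(N/(N-1))) := by ring
            _ = qv^(N/(N-1)) * (1+v) * (b * D') := by rw [hγb]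
            _ = qv^(N/(N-1)) * (1+v) * b * D' := by ring
        have he2 : w^(1/N)*s₁*D * D'^(N/(N-1)) = w^(1/N) * (c - 2*b)^(N/(N-1)) * D := by
          rw [hs₁def]
          field_simp
        have hfin : qv^(N/(N-1)) * ((1+v)*γ) * D'^(N/(N-1)) ≤ w^(1/N)*s₁*D * D'^(N/(N-1)) := by
          rw [he, he2]
          exact hh
        exact le_of_mul_le_mul_right hfin hDpow
      -- combine with key1
      have hcomb : qv^(N/(N-1)) * ((1+v)*γ) ≤ (1 - τ^N) * ((1+v)*γ) := by
        calc qv^(N/(N-1)) * ((1+v)*γ) ≤ w^(1/N)*s₁*D := hstep4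
          _ ≤ (1+v)*γ*(1-τ^N) := key1
          _ = (1 - τ^N) * ((1+v)*γ) := by ring
      exact le_of_mul_le_mul_right hcomb (by positivity)
    set Tv := (max 0 (1 - qv^(N/(N-1))))^(1/N) with hTvdef
    have hτTv : τ ≤ Tv := by
      have h1 : τ^N ≤ max 0 (1 - qv^(N/(N-1))) := le_max_of_le_right (by linarith [hqN])
      have h2 := Real.rpow_le_rpow (Real.rpow_nonneg hτ0 _) h1 hiN.le
      rwa [← Real.rpow_mul hτ0, (show N*(1/N) = 1 by field_simp), Real.rpow_one] at h2
    have key2 : w^(1/N)*s₁*D ≤ (1+v)*γ := by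
      have hτNn : 0 ≤ τ^N := Real.rpow_nonneg hτ0 _
      have hpr : (0:ℝ) ≤ (1+v)*γ*τ^N :=
        mul_nonneg (mul_nonneg (by linarith only [hv0]) hγ.le) hτNn
      nlinarith only [key1, hpr]
    have hrt : r * s₁ = γ*(1-τ) := by rw [mul_comm]; exact hτr
    have hTv1 : (1-ε')*(1+v) ≤ 1 - Tv := by
      rw [← le_div_iff₀ (by linarith : (0:ℝ) < 1+v)]
      exact hC5
    have hεhalf : (0:ℝ) < 1 - ε' := by linarith only [hε'le]
    have hTvnn : (0:ℝ) ≤ 1 - Tv := by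
      have hpr : (0:ℝ) ≤ (1-ε')*(1+v) :=
        mul_nonneg hεhalf.le (by linarith only [hv0])
      linarith only [hTv1, hpr]
    -- final chain
    have hfinal : (1-ε')*D*w^(1/N) ≤ r := by
      have hz : (1-ε')*D*w^(1/N) * (s₁*(1+v)) ≤ r * (s₁*(1+v)) := by
        have lhs_eq : (1-ε')*D*w^(1/N) * (s₁*(1+v)) = ((1-ε')*(1+v)) * (w^(1/N)*s₁*D) := by
          ring
        have rhs_eq : r * (s₁*(1+v)) = (γ*(1-τ))*(1+v) := by
          rw [← hrt]; ring
        rw [lhs_eq, rhs_eq]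
        have hmm : ((1-ε')*(1+v)) * (w^(1/N)*s₁*D) ≤ (1-Tv) * ((1+v)*γ) := by
          apply mul_le_mul hTv1 key2 (by positivity) hTvnn
        have hmm2 : (1-Tv) * ((1+v)*γ) ≤ (1-τ) * ((1+v)*γ) := by
          apply mul_le_mul_of_nonneg_right (by linarith only [hτTv]) (by positivity)
        calc ((1-ε')*(1+v)) * (w^(1/N)*s₁*D) ≤ (1-Tv) * ((1+v)*γ) := hmm
          _ ≤ (1-τ) * ((1+v)*γ) := hmm2
          _ = (γ*(1-τ))*(1+v) := by ring
      exact le_of_mul_le_mul_right hz (by positivity)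
    calc (1-ε)*D*w^(1/N) ≤ (1-ε')*D*w^(1/N) := by
          apply mul_le_mul_of_nonneg_right _ hwpow0
          exact mul_le_mul_of_nonneg_right (by linarith only [hε'ε]) hD0.le
      _ ≤ r := hfinal
  · -- upper bound
    calc r ≤ D' * w^(1/N) := hrupper
      _ ≤ D * w^(1/N) := mul_le_mul_of_nonneg_right hD'D hwpow0
      _ ≤ (1 + ε) * D * w^(1/N) := by
          nlinarith [mul_nonneg (mul_nonneg hε.le hD0.le) hwpow0]
end
end

section
/- Fix a real number N > 1. There exists w̄_N > 0, depending only on N, such that for every D' > 0, every probability CD(0,N) density h on [0,D'], and every w ∈ (0, w̄_N] satisfying D'·h(r_h(w)) ≤ 2N·w^{1−1/N}, there exists ξ ≥ 0 such that r_{N,D'}(ξ, w) ≤ r_h(w) and h_{N,D'}(ξ, r_{N,D'}(ξ, w)) ≤ h(r_h(w)). -/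
open MeasureTheory

noncomputable section

set_option maxHeartbeats 1000000

lemma aux_rpow_base_le {a b N : ℝ} (hb : 0 ≤ b) (hN : 0 < N)
    (h : a ^ N ≤ b ^ N) : a ≤ b := by
  by_contra hc
  push_neg at hc
  exact absurd h (not_le.mpr (Real.rpow_lt_rpow hb hc hN))

lemma aux_integral_shift {N : ℝ} (hN : 1 < N) (c a b : ℝ) :
    ∫ x in a..b, (x + c) ^ (N - 1) = ((b + c) ^ N - (a + c) ^ N) / N := by
  rw [intervalIntegral.integral_comp_add_right (fun u => u ^ (N - 1)) c]
  rw [integral_rpow (Or.inl (by linarith))]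
  norm_num

lemma aux_dichotomy {D' r : ℝ} {u : ℝ → ℝ} (hc : ConcaveOn ℝ (Set.Icc 0 D') u)
    (hr : r ∈ Set.Icc (0:ℝ) D') (hur : u r = 0) :
    (∀ x ∈ Set.Icc r D', u x ≤ 0) ∨ (∀ x ∈ Set.Icc (0:ℝ) r, u x ≤ 0) := by
  by_contra hcon
  push_neg at hcon
  obtain ⟨⟨b, hb, hub⟩, ⟨a, ha, hua⟩⟩ := hcon
  have hab1 : a ≤ r := ha.2
  have hab2 : r ≤ b := hb.1
  rcases eq_or_lt_of_le hab1 with h1 | h1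
  · rw [h1] at hua; linarith [hur ▸ hua]
  rcases eq_or_lt_of_le hab2 with h2 | h2
  · rw [← h2] at hub; linarith [hur ▸ hub]
  have hba : 0 < b - a := by linarith
  have hlam0 : 0 < (b - r) / (b - a) := div_pos (by linarith) hba
  have hmu0 : 0 < (r - a) / (b - a) := div_pos (by linarith) hba
  have hsum : (b - r) / (b - a) + (r - a) / (b - a) = 1 := by field_simp; ring
  have hcomb : ((b - r) / (b - a)) * a + ((r - a) / (b - a)) * b = r := by field_simp; ring
  have ha' : a ∈ Set.Icc (0:ℝ) D' := ⟨ha.1, le_trans hab1 hr.2⟩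
  have hb' : b ∈ Set.Icc (0:ℝ) D' := ⟨le_trans hr.1 hab2, hb.2⟩
  have := hc.2 ha' hb' hlam0.le hmu0.le hsum
  simp only [smul_eq_mul] at this
  rw [hcomb, hur] at this
  nlinarith [mul_pos hlam0 hua, mul_pos hmu0 hub]

/-- Reduction to model densities: if `w ≤ w̄_N` and `D' h(r_h(w)) ≤ 2 N w^{1-1/N}`, then there
is `ξ ≥ 0` with `r_{N,D'}(ξ, w) ≤ r_h(w)` and `h_{N,D'}(ξ, r_{N,D'}(ξ, w)) ≤ h(r_h(w))`.
Here `r = r_h(w)` is characterized by `r ∈ (0, D')` and `∫_0^r h = w`. -/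
theorem reduction_to_model_density (N : ℝ) (hN : 1 < N) :
    ∃ wbar : ℝ, 0 < wbar ∧
      ∀ D' : ℝ, 0 < D' →
      ∀ h : ℝ → ℝ, IsProbCDDensity N D' h →
      ∀ w : ℝ, 0 < w → w ≤ wbar →
      ∀ r : ℝ, r ∈ Set.Ioo 0 D' → (∫ x in (0:ℝ)..r, h x) = w →
        D' * h r ≤ 2 * N * w ^ (1 - 1 / N) →
        ∃ ξ : ℝ, 0 ≤ ξ ∧ modelRadius N D' ξ w ≤ r ∧
          modelDensity N D' ξ (modelRadius N D' ξ w) ≤ h r := by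
  have hN0 : (0:ℝ) < N := by linarith
  have hN1 : (0:ℝ) < N - 1 := by linarith
  refine ⟨min (1/2) ((4:ℝ) ^ (-(N*N)/(N-1))),
    lt_min (by norm_num) (Real.rpow_pos_of_pos (by norm_num) _), ?_⟩
  intro D' hD' h hprob w hw0 hwbar r hrmem hintr hhyp
  obtain ⟨⟨hnn, hpos, hconc⟩, htot⟩ := hprob
  obtain ⟨hr0, hrD⟩ := hrmem
  have hLpos : 0 < h r := hpos r ⟨hr0, hrD⟩
  have hw2 : w ≤ 1/2 := le_trans hwbar (min_le_left _ _)
  have hw1 : w < 1 := by linarith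
  have hee : 1 - 1/N = (N-1)/N := by field_simp
  have hhyp' : D' * h r ≤ 2*N*w^((N-1)/N) := by rwa [hee] at hhyp
  have hwepos : 0 < w ^ ((N-1)/N) := Real.rpow_pos_of_pos hw0 _
  have hwe : w ^ ((N-1)/N) ≤ (4:ℝ) ^ (-N) := by
    calc w ^ ((N-1)/N) ≤ ((4:ℝ) ^ (-(N*N)/(N-1))) ^ ((N-1)/N) :=
          Real.rpow_le_rpow hw0.le (le_trans hwbar (min_le_right _ _)) (by positivity)
    _ = (4:ℝ) ^ (-N) := by
          rw [← Real.rpow_mul (by norm_num : (0:ℝ) ≤ 4)]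
          congr 1
          have h1 : N - 1 ≠ 0 := by linarith
          have h2 : N ≠ 0 := by linarith
          field_simp
  -- integrability
  have hInt : IntegrableOn h (Set.Icc 0 D') := by
    by_contra hc
    rw [MeasureTheory.integral_undef hc] at htot
    norm_num at htot
  have hii : ∀ a b : ℝ, 0 ≤ a → a ≤ b → b ≤ D' → IntervalIntegrable h volume a b := by
    intro a b ha hab hb
    apply MeasureTheory.IntegrableOn.intervalIntegrable
    apply hInt.mono_set
    rw [Set.uIcc_of_le hab]
    exact Set.Icc_subset_Icc ha hb
  have htot' : ∫ x in (0:ℝ)..D', h x = 1 := by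
    rw [intervalIntegral.integral_of_le hD'.le, ← MeasureTheory.integral_Icc_eq_integral_Ioc]
    exact htot
  have hIright : ∫ x in r..D', h x = 1 - w := by
    have := intervalIntegral.integral_add_adjacent_intervals
      (hii 0 r le_rfl hr0.le hrD.le) (hii r D' hr0.le hrD.le le_rfl)
    rw [hintr, htot'] at this
    linarith
  -- the concave root function
  set φ : ℝ → ℝ := fun x => h x ^ (1/(N-1)) with hφdef
  have hφnn : ∀ x ∈ Set.Icc (0:ℝ) D', 0 ≤ φ x := fun x hx => Real.rpow_nonneg (hnn x hx) _
  have hφpow : ∀ x ∈ Set.Icc (0:ℝ) D', φ x ^ (N-1) = h x := by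
    intro x hx
    rw [hφdef]
    rw [← Real.rpow_mul (hnn x hx), one_div, inv_mul_cancel₀ (by linarith : N - 1 ≠ 0),
      Real.rpow_one]
  have hrIcc : r ∈ Set.Icc (0:ℝ) D' := ⟨hr0.le, hrD.le⟩
  have hgcont : ∀ c : ℝ, Continuous fun x : ℝ => (x + c) ^ (N - 1) :=
    fun c => (Real.continuous_rpow_const (by linarith)).comp (continuous_id.add continuous_const)
  -- chord bound on the right of r
  have hC1 : ∀ x ∈ Set.Icc r D', h x ≤ h r / r ^ (N-1) * x ^ (N-1) := by
    intro x hx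
    have hx0 : 0 < x := lt_of_lt_of_le hr0 hx.1
    have hxmem : x ∈ Set.Icc (0:ℝ) D' := ⟨hx0.le, hx.2⟩
    have h0mem : (0:ℝ) ∈ Set.Icc (0:ℝ) D' := ⟨le_rfl, hD'.le⟩
    have key := hconc.2 h0mem hxmem
      (show (0:ℝ) ≤ (x - r)/x from div_nonneg (by linarith [hx.1]) hx0.le)
      (show (0:ℝ) ≤ r/x from by positivity)
      (show (x - r)/x + r/x = 1 from by field_simp; ring)
    simp only [smul_eq_mul] at key
    rw [mul_zero, zero_add, div_mul_cancel₀ r (ne_of_gt hx0)] at key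
    have key2 : r / x * φ x ≤ φ r := by
      nlinarith [mul_nonneg (div_nonneg (sub_nonneg.2 hx.1) hx0.le) (hφnn 0 h0mem)]
    have hφx : φ x ≤ φ r * x / r := by
      rw [le_div_iff₀ hr0]
      have := mul_le_mul_of_nonneg_right key2 hx0.le
      calc φ x * r = r / x * φ x * x := by field_simp
      _ ≤ φ r * x := this
    calc h x = φ x ^ (N-1) := (hφpow x hxmem).symm
    _ ≤ (φ r * x / r) ^ (N-1) := Real.rpow_le_rpow (hφnn x hxmem) hφx (by linarith)
    _ = h r / r ^ (N-1) * x ^ (N-1) := by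
        rw [mul_div_assoc, Real.mul_rpow (hφnn r hrIcc) (by positivity),
          Real.div_rpow hx0.le hr0.le, hφpow r hrIcc]
        ring
  -- integral bound I1
  have hI1 : (1 - w) * (N * r ^ (N-1)) ≤ h r * (D' ^ N - r ^ N) := by
    have hgi : IntervalIntegrable (fun x : ℝ => h r / r ^ (N-1) * x ^ (N-1)) volume r D' :=
      (continuous_const.mul (Real.continuous_rpow_const (by linarith : (0:ℝ) ≤ N - 1))).intervalIntegrable r D'
    have hmono := intervalIntegral.integral_mono_on hrD.le (hii r D' hr0.le hrD.le le_rfl) hgi hC1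
    rw [hIright, intervalIntegral.integral_const_mul,
      integral_rpow (Or.inl (by linarith : (-1:ℝ) < N - 1))] at hmono
    have hrpow : 0 < r ^ (N-1) := Real.rpow_pos_of_pos hr0 _
    rw [show N - 1 + 1 = N by ring] at hmono
    rw [div_mul_div_comm, le_div_iff₀ (by positivity)] at hmono
    calc (1 - w) * (N * r ^ (N-1)) = (1 - w) * (r ^ (N-1) * N) := by ring
    _ ≤ h r * (D' ^ N - r ^ N) := hmono
  have hDrN : 0 < D' ^ N - r ^ N := sub_pos.2 (Real.rpow_lt_rpow hr0.le hrD hN0)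
  have hrNpos : 0 < r ^ (N-1) := Real.rpow_pos_of_pos hr0 _
  have hDN1 : D' ^ N / D' = D' ^ (N-1) := by
    rw [Real.rpow_sub hD', Real.rpow_one]
  have hDNpos : 0 < D' ^ N := Real.rpow_pos_of_pos hD' _
  have hDN1pos : 0 < D' ^ (N-1) := Real.rpow_pos_of_pos hD' _
  have hDsplit : D' ^ N = D' ^ (N-1) * D' := by
    have := Real.rpow_add hD' (N-1) 1
    rw [Real.rpow_one] at this
    rw [show N - 1 + 1 = N from by ring] at this
    exact this
  -- r is at most D'/2
  have hrhalf : r ≤ D' / 2 := by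
    have h1 : (1 - w) * (N * r ^ (N-1)) ≤ (2*N*w^((N-1)/N)/D') * D' ^ N := by
      calc (1 - w) * (N * r ^ (N-1)) ≤ h r * (D' ^ N - r ^ N) := hI1
      _ ≤ h r * D' ^ N := by nlinarith [Real.rpow_pos_of_pos hr0 N]
      _ ≤ (2*N*w^((N-1)/N)/D') * D' ^ N := by
          apply mul_le_mul_of_nonneg_right _ hDNpos.le
          rw [le_div_iff₀ hD']
          calc h r * D' = D' * h r := by ring
          _ ≤ 2*N*w^((N-1)/N) := hhyp'
    have h2 : r ^ (N-1) ≤ 4 * w^((N-1)/N) * D' ^ (N-1) := by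
      have hw' : 1 - w ≥ 1/2 := by linarith
      have : (2*N*w^((N-1)/N)/D') * D' ^ N = 2*N*w^((N-1)/N) * D' ^ (N-1) := by
        rw [div_mul_eq_mul_div, mul_div_assoc, hDN1]
      rw [this] at h1
      have hNX : N * r ^ (N-1) ≤ N * (4 * w^((N-1)/N) * D' ^ (N-1)) := by
        nlinarith [mul_pos hN0 hrNpos]
      exact le_of_mul_le_mul_left hNX hN0
    have h3 : (4:ℝ) * (4:ℝ)^(-N) = (4:ℝ)^(1-N) := by
      rw [show (1:ℝ) - N = 1 + (-N) by ring, Real.rpow_add (by norm_num) 1 (-N), Real.rpow_one]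
    have h4 : (4:ℝ)^(1-N) ≤ (2:ℝ)^(1-N) := by
      have e1 : (4:ℝ)^(1-N) = ((4:ℝ)^(N-1))⁻¹ := by
        rw [← Real.rpow_neg (by norm_num : (0:ℝ) ≤ 4), show -(N-1) = 1-N by ring]
      have e2 : (2:ℝ)^(1-N) = ((2:ℝ)^(N-1))⁻¹ := by
        rw [← Real.rpow_neg (by norm_num : (0:ℝ) ≤ 2), show -(N-1) = 1-N by ring]
      rw [e1, e2]
      exact inv_anti₀ (Real.rpow_pos_of_pos (by norm_num) _)
        (Real.rpow_le_rpow (by norm_num) (by norm_num) (by linarith))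
    have h5 : (2:ℝ)^(1-N) * D' ^ (N-1) = (D'/2) ^ (N-1) := by
      rw [Real.div_rpow hD'.le (by norm_num), show (1:ℝ) - N = -(N-1) by ring,
        Real.rpow_neg (by norm_num)]
      field_simp
    have h6 : r ^ (N-1) ≤ (D'/2) ^ (N-1) := by
      rw [← h5]
      calc r ^ (N-1) ≤ 4 * w^((N-1)/N) * D' ^ (N-1) := h2
      _ ≤ 4 * (4:ℝ)^(-N) * D' ^ (N-1) := by
          have := hDN1pos.le
          gcongr
      _ = (4:ℝ)^(1-N) * D' ^ (N-1) := by rw [h3]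
      _ ≤ (2:ℝ)^(1-N) * D' ^ (N-1) := by
          have := hDN1pos.le
          gcongr
    exact aux_rpow_base_le (by positivity) hN1 h6
  -- chord bound on the left of r
  have hC2 : ∀ x ∈ Set.Icc (0:ℝ) r, h x ≤ h r * 2 ^ (N-1) := by
    intro x hx
    have hone : (1:ℝ) ≤ (2:ℝ) ^ (N-1) := by
      calc (1:ℝ) = (2:ℝ)^(0:ℝ) := (Real.rpow_zero 2).symm
      _ ≤ (2:ℝ)^(N-1) := Real.rpow_le_rpow_of_exponent_le (by norm_num) (by linarith)
    have hxmem : x ∈ Set.Icc (0:ℝ) D' := ⟨hx.1, le_trans hx.2 hrD.le⟩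
    rcases eq_or_lt_of_le hx.2 with he | hxr
    · rw [he]; exact le_mul_of_one_le_right hLpos.le hone
    · have hDmem : D' ∈ Set.Icc (0:ℝ) D' := ⟨hD'.le, le_rfl⟩
      have hDx : 0 < D' - x := by linarith
      have key := hconc.2 hxmem hDmem
        (show (0:ℝ) ≤ (D' - r)/(D' - x) from div_nonneg (by linarith) hDx.le)
        (show (0:ℝ) ≤ (r - x)/(D' - x) from div_nonneg (by linarith) hDx.le)
        (show (D' - r)/(D' - x) + (r - x)/(D' - x) = 1 from by field_simp; ring)
      simp only [smul_eq_mul] at key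
      rw [show (D' - r)/(D' - x) * x + (r - x)/(D' - x) * D' = r from by field_simp; ring] at key
      have key2 : (D' - r)/(D' - x) * φ x ≤ φ r := by
        nlinarith [mul_nonneg (div_nonneg (by linarith : (0:ℝ) ≤ r - x) hDx.le) (hφnn D' hDmem)]
      have hφx : φ x ≤ 2 * φ r := by
        have hfrac : (D' - r) / (D' - x) ≥ 1/2 := by
          rw [ge_iff_le, le_div_iff₀ hDx]
          linarith [hrhalf, hx.1]
        nlinarith [hφnn x hxmem, hφnn r hrIcc]
      calc h x = φ x ^ (N-1) := (hφpow x hxmem).symm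
      _ ≤ (2 * φ r) ^ (N-1) := Real.rpow_le_rpow (hφnn x hxmem) hφx (by linarith)
      _ = h r * 2 ^ (N-1) := by
          rw [Real.mul_rpow (by norm_num) (hφnn r hrIcc), hφpow r hrIcc]; ring
  -- integral bound I2
  have hI2 : w ≤ h r * 2 ^ (N-1) * r := by
    have := intervalIntegral.integral_mono_on hr0.le (hii 0 r le_rfl hr0.le hrD.le)
      (intervalIntegrable_const) hC2
    rw [hintr, intervalIntegral.integral_const, smul_eq_mul, sub_zero] at this
    linarith
  -- key scalar bound
  have hNr : (2:ℝ)^N * (w * D') ≤ N * r := by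
    have h2N : (2:ℝ)^(N-1) * 2 = 2^N := by
      rw [Real.rpow_sub (by norm_num), Real.rpow_one]; field_simp
    have h4N : (4:ℝ)^N = 2^N * 2^N := by
      rw [show (4:ℝ) = 2*2 by norm_num, Real.mul_rpow (by norm_num) (by norm_num)]
    have h2Npos : (0:ℝ) < 2^N := Real.rpow_pos_of_pos (by norm_num) _
    have hwsplit : w ^ ((N-1)/N) * w ^ ((1:ℝ)/N) = w := by
      rw [← Real.rpow_add hw0]
      rw [show (N-1)/N + 1/N = 1 from by field_simp; ring, Real.rpow_one]
    -- w * D' ≤ N * w^e * 2^N * r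
    have step1 : w * D' ≤ N * w^((N-1)/N) * 2^N * r := by
      calc w * D' ≤ (h r * 2^(N-1) * r) * D' := by nlinarith
      _ = (D' * h r) * 2^(N-1) * r := by ring
      _ ≤ (2*N*w^((N-1)/N)) * 2^(N-1) * r := by
          have h2p : (0:ℝ) < 2^(N-1) := Real.rpow_pos_of_pos (by norm_num) _
          nlinarith
      _ = N * w^((N-1)/N) * 2^N * r := by rw [← h2N]; ring
    -- cancel w^e
    have step2 : w^((1:ℝ)/N) * D' ≤ N * 2^N * r := by
      have h' : w^((N-1)/N) * (w^((1:ℝ)/N) * D') ≤ w^((N-1)/N) * (N * 2^N * r) := by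
        calc w^((N-1)/N) * (w^((1:ℝ)/N) * D')
            = (w^((N-1)/N) * w^((1:ℝ)/N)) * D' := by ring
        _ = w * D' := by rw [hwsplit]
        _ ≤ N * w^((N-1)/N) * 2^N * r := step1
        _ = w^((N-1)/N) * (N * 2^N * r) := by ring
      exact le_of_mul_le_mul_left h' hwepos
    -- 4^N * w ≤ w^{1/N}
    have step3 : (4:ℝ)^N * w ≤ w^((1:ℝ)/N) := by
      have h44 : (4:ℝ)^N * (4:ℝ)^(-N) = 1 := by
        rw [← Real.rpow_add (by norm_num)]; simp
      have hq : w = w^((N-1)/N) * w^((1:ℝ)/N) := hwsplit.symm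
      have h4Npos : (0:ℝ) < 4^N := Real.rpow_pos_of_pos (by norm_num) _
      have hwN : 0 < w^((1:ℝ)/N) := Real.rpow_pos_of_pos hw0 _
      calc (4:ℝ)^N * w = 4^N * (w^((N-1)/N) * w^((1:ℝ)/N)) := by rw [← hq]
      _ ≤ 4^N * ((4:ℝ)^(-N) * w^((1:ℝ)/N)) := by gcongr
      _ = w^((1:ℝ)/N) := by rw [← mul_assoc, h44, one_mul]
    -- combine
    have step4 : (4:ℝ)^N * (w * D') ≤ 2^N * (N * r) := by
      calc (4:ℝ)^N * (w * D') = ((4:ℝ)^N * w) * D' := by ring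
      _ ≤ w^((1:ℝ)/N) * D' := by nlinarith
      _ ≤ N * 2^N * r := step2
      _ = 2^N * (N * r) := by ring
    rw [h4N] at step4
    have : (2:ℝ)^N * ((2:ℝ)^N * (w * D')) ≤ 2^N * (N * r) := by
      calc (2:ℝ)^N * ((2:ℝ)^N * (w * D')) = 2^N * 2^N * (w * D') := by ring
      _ ≤ 2^N * (N * r) := step4
    exact le_of_mul_le_mul_left this h2Npos
  -- case split on whether the model radius at ξ = 0 is below r
  rcases le_or_gt (w * D' ^ N) (r ^ N) with hcase | hcase
  · -- Case 1 : take ξ = 0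
    have hmr0 : modelRadius N D' 0 w = D' * w ^ ((1:ℝ)/N) := by
      unfold modelRadius
      rw [Real.zero_rpow hN0.ne']
      norm_num
    have hwN : 0 < w^((1:ℝ)/N) := Real.rpow_pos_of_pos hw0 _
    have hradle : D' * w ^ ((1:ℝ)/N) ≤ r := by
      apply aux_rpow_base_le hr0.le hN0
      rw [Real.mul_rpow hD'.le hwN.le, ← Real.rpow_mul hw0.le,
        one_div, inv_mul_cancel₀ hN0.ne', Real.rpow_one]
      calc D' ^ N * w = w * D' ^ N := by ring
      _ ≤ r ^ N := hcase
    have hmd0 : modelDensity N D' 0 (D' * w ^ ((1:ℝ)/N)) = N * w ^ ((N-1)/N) / D' := by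
      unfold modelDensity
      rw [Real.zero_rpow hN0.ne']
      norm_num
      rw [Real.mul_rpow hD'.le (by positivity), ← Real.rpow_mul hw0.le]
      rw [show N⁻¹*(N-1) = (N-1)/N from by field_simp]
      rw [show N / D' ^ N * (D' ^ (N-1) * w ^ ((N-1)/N)) = N * w ^ ((N-1)/N) * (D' ^ (N-1) / D' ^ N) from by ring]
      rw [← Real.rpow_sub hD', show N - 1 - N = -1 by ring, Real.rpow_neg_one]
      ring
    refine ⟨0, le_rfl, by rw [hmr0]; exact hradle, ?_⟩
    rw [hmr0, hmd0, div_le_iff₀ hD']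
    have hB1 : D' ^ (N-1) * w ^ ((N-1)/N) ≤ r ^ (N-1) := by
      calc D' ^ (N-1) * w ^ ((N-1)/N) = (D' * w ^ ((1:ℝ)/N)) ^ (N-1) := by
            rw [Real.mul_rpow hD'.le hwN.le, ← Real.rpow_mul hw0.le,
              show 1/N*(N-1) = (N-1)/N from by field_simp]
      _ ≤ r ^ (N-1) := Real.rpow_le_rpow (by positivity) hradle (by linarith)
    have hB2 : D' ^ N - r ^ N ≤ (1 - w) * D' ^ N := by nlinarith
    have hkey : N * w ^ ((N-1)/N) * (D' ^ N - r ^ N) ≤ (1 - w) * (N * r ^ (N-1)) * D' := by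
      calc N * w ^ ((N-1)/N) * (D' ^ N - r ^ N) ≤ N * w ^ ((N-1)/N) * ((1-w) * D' ^ N) := by
            have h1 : (0:ℝ) ≤ N * w ^ ((N-1)/N) := by positivity
            exact mul_le_mul_of_nonneg_left hB2 h1
      _ = (1 - w) * (N * (D' ^ (N-1) * w ^ ((N-1)/N))) * D' := by
            rw [hDsplit]; ring
      _ ≤ (1 - w) * (N * r ^ (N-1)) * D' := by
            have h1w : (0:ℝ) ≤ 1 - w := by linarith
            have h2 : N * (D' ^ (N-1) * w ^ ((N-1)/N)) ≤ N * r ^ (N-1) :=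
              mul_le_mul_of_nonneg_left hB1 hN0.le
            have := mul_le_mul_of_nonneg_left h2 h1w
            exact mul_le_mul_of_nonneg_right this hD'.le
    have hfin : N * w ^ ((N-1)/N) * (D' ^ N - r ^ N) ≤ h r * D' * (D' ^ N - r ^ N) := by
      calc N * w ^ ((N-1)/N) * (D' ^ N - r ^ N) ≤ (1 - w) * (N * r ^ (N-1)) * D' := hkey
      _ ≤ h r * (D' ^ N - r ^ N) * D' := mul_le_mul_of_nonneg_right hI1 hD'.le
      _ = h r * D' * (D' ^ N - r ^ N) := by ring
    exact le_of_mul_le_mul_right (by linarith [hfin]) hDrN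
  · -- Case 2 : find ξ₀ with exact radius match
    set F : ℝ → ℝ := fun ξ => w*(D'*(1+ξ))^N + (1-w)*(D'*ξ)^N - (r + ξ*D')^N with hFdef
    have hrcont : Continuous fun x : ℝ => x ^ N := Real.continuous_rpow_const hN0.le
    have hFcont : Continuous F := by
      have c1 : Continuous fun ξ:ℝ => (D'*(1+ξ))^N :=
        hrcont.comp (continuous_const.mul (continuous_const.add continuous_id))
      have c2 : Continuous fun ξ:ℝ => (D'*ξ)^N :=
        hrcont.comp (continuous_const.mul continuous_id)
      have c3 : Continuous fun ξ:ℝ => (r + ξ*D')^N :=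
        hrcont.comp (continuous_const.add (continuous_id.mul continuous_const))
      exact ((continuous_const.mul c1).add (continuous_const.mul c2)).sub c3
    have hF0 : 0 ≤ F 0 := by
      have : F 0 = w * D' ^ N - r ^ N := by
        rw [hFdef]
        norm_num [Real.zero_rpow hN0.ne']
      rw [this]
      linarith
    have hF1 : F 1 ≤ 0 := by
      have hber : D' ^ N + N * r * D' ^ (N-1) ≤ (r + D') ^ N := by
        have hb := one_add_mul_self_le_rpow_one_add
          (show (-1:ℝ) ≤ r/D' from le_trans (by norm_num) (div_nonneg hr0.le hD'.le)) hN.le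
        have hmul : D' ^ N * (1 + r/D') ^ N = (r + D') ^ N := by
          rw [← Real.mul_rpow hD'.le (by positivity)]
          rw [show D' * (1 + r/D') = r + D' from by field_simp; ring]
        have h2 : D' ^ N * (1 + N * (r/D')) ≤ D' ^ N * (1 + r/D') ^ N :=
          mul_le_mul_of_nonneg_left hb hDNpos.le
        rw [hmul] at h2
        calc D' ^ N + N * r * D' ^ (N-1) = D' ^ N * (1 + N * (r/D')) := by
              rw [hDsplit]; field_simp
        _ ≤ (r + D') ^ N := h2
      have h2D : (D' * 2) ^ N = D' ^ N * 2 ^ N := Real.mul_rpow hD'.le (by norm_num)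
      have hF1' : F 1 = w*(D'*2)^N + (1-w)*D'^N - (r + D')^N := by
        rw [hFdef]
        norm_num
      rw [hF1', h2D]
      have hNrD : 2 ^ N * (w * D') * D' ^ (N-1) ≤ N * r * D' ^ (N-1) :=
        mul_le_mul_of_nonneg_right hNr hDN1pos.le
      have e1 : w*(D'^N*2^N) = 2^N*(w*D')*D'^(N-1) := by rw [hDsplit]; ring
      have e2 : (1-w)*D'^N = D'^N - w*D'^N := by ring
      linarith [hber, hNrD, e1, e2, mul_pos hw0 hDNpos]
    obtain ⟨ξ₀, hξmem, hFz⟩ : ∃ ξ₀ ∈ Set.Icc (0:ℝ) 1, F ξ₀ = 0 := by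
      have := intermediate_value_Icc' (by norm_num : (0:ℝ) ≤ 1) hFcont.continuousOn
      have h0m : (0:ℝ) ∈ Set.Icc (F 1) (F 0) := ⟨hF1, hF0⟩
      obtain ⟨ξ₀, hm, he⟩ := this h0m
      exact ⟨ξ₀, hm, he⟩
    have hξ0 : 0 ≤ ξ₀ := hξmem.1
    set s := r + ξ₀ * D' with hsdef
    have hs : 0 < s := by positivity
    have hA : w*(D'*(1+ξ₀))^N + (1-w)*(D'*ξ₀)^N = s ^ N := by
      have := hFz
      rw [hFdef] at this
      simp only at this
      linarith
    have h1ξ : (0:ℝ) < 1 + ξ₀ := by linarith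
    have hmul1 : (D'*(1+ξ₀))^N = D'^N * (1+ξ₀)^N := Real.mul_rpow hD'.le h1ξ.le
    have hmul2 : (D'*ξ₀)^N = D'^N * ξ₀^N := Real.mul_rpow hD'.le hξ0
    have hP : 0 < (1+ξ₀)^N - ξ₀^N :=
      sub_pos.2 (Real.rpow_lt_rpow hξ0 (by linarith) hN0)
    have hsD : s ^ N = D'^N * (w*(1+ξ₀)^N + (1-w)*ξ₀^N) := by
      rw [← hA, hmul1, hmul2]; ring
    have hmrr : modelRadius N D' ξ₀ w = r := by
      unfold modelRadius
      have hq : w*(1+ξ₀)^N + (1-w)*ξ₀^N = (s/D')^N := by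
        rw [Real.div_rpow hs.le hD'.le, hsD]
        field_simp
      rw [hq, ← Real.rpow_mul (by positivity), mul_one_div_cancel hN0.ne', Real.rpow_one]
      field_simp
      rw [hsdef]
      ring
    refine ⟨ξ₀, hξ0, le_of_eq hmrr, ?_⟩
    rw [hmrr]
    have hmd : modelDensity N D' ξ₀ r = N * s^(N-1) / (D'^N * ((1+ξ₀)^N - ξ₀^N)) := by
      unfold modelDensity
      rw [← hsdef, add_comm ξ₀ 1]
      rw [div_mul_eq_mul_div, div_div]
    rw [hmd, div_le_iff₀ (by positivity)]
    -- it remains : N * s^(N-1) ≤ h r * (D'^N * P)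
    have hsN1 : 0 < s ^ (N-1) := Real.rpow_pos_of_pos hs _
    -- the comparison line ψ
    set ψ : ℝ → ℝ := fun x => φ r * ((x + ξ₀*D')/s) with hψdef
    have hψconvex : ConvexOn ℝ (Set.Icc (0:ℝ) D') ψ := by
      refine ⟨convex_Icc _ _, ?_⟩
      intro x hx y hy a b ha hb hab
      rw [hψdef]
      simp only [smul_eq_mul]
      apply le_of_eq
      field_simp
      linear_combination (-(φ r * ξ₀ * D')) * hab
    have huconc : ConcaveOn ℝ (Set.Icc (0:ℝ) D') (fun x => φ x - ψ x) := hconc.sub hψconvex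
    have hur : φ r - ψ r = 0 := by
      rw [hψdef]
      simp only
      rw [← hsdef, div_self hs.ne']
      ring
    -- pointwise comparison under φ ≤ ψ
    have hcomp : ∀ x ∈ Set.Icc (0:ℝ) D', φ x ≤ ψ x →
        h x ≤ h r / s^(N-1) * (x + ξ₀*D')^(N-1) := by
      intro x hx hle
      have hxc : (0:ℝ) ≤ x + ξ₀*D' := by
        have := hx.1
        positivity
      calc h x = φ x ^ (N-1) := (hφpow x hx).symm
      _ ≤ ψ x ^ (N-1) := Real.rpow_le_rpow (hφnn x hx) hle (by linarith)
      _ = h r / s^(N-1) * (x + ξ₀*D')^(N-1) := by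
          rw [hψdef]
          simp only
          rw [Real.mul_rpow (hφnn r hrIcc) (by positivity),
            Real.div_rpow hxc hs.le, hφpow r hrIcc]
          ring
    -- integrability of the comparison function
    have hgint : ∀ a b : ℝ, IntervalIntegrable
        (fun x => h r / s^(N-1) * (x + ξ₀*D')^(N-1)) volume a b :=
      fun a b => (continuous_const.mul (hgcont (ξ₀*D'))).intervalIntegrable a b
    rcases aux_dichotomy huconc hrIcc hur with hcasei | hcaseii
    · -- φ ≤ ψ on [r, D']
      have hptwise : ∀ x ∈ Set.Icc r D', h x ≤ h r / s^(N-1) * (x + ξ₀*D')^(N-1) := by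
        intro x hx
        have hxIcc : x ∈ Set.Icc (0:ℝ) D' := ⟨le_trans hr0.le hx.1, hx.2⟩
        exact hcomp x hxIcc (by linarith [hcasei x hx])
      have hmono := intervalIntegral.integral_mono_on hrD.le
        (hii r D' hr0.le hrD.le le_rfl) (hgint r D') hptwise
      rw [hIright, intervalIntegral.integral_const_mul, aux_integral_shift hN (ξ₀*D') r D'] at hmono
      have halg : (D' + ξ₀*D')^N - (r + ξ₀*D')^N = (1-w) * (D'^N * ((1+ξ₀)^N - ξ₀^N)) := by
        have hDc : D' + ξ₀*D' = D'*(1+ξ₀) := by ring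
        rw [hDc, ← hsdef, hmul1, hsD]
        ring
      rw [halg] at hmono
      -- 1 - w ≤ h r / s^(N-1) * ((1-w) * (D'^N*P) / N)
      have h1w : (0:ℝ) < 1 - w := by linarith
      have hfin : (1-w) * (N * s^(N-1)) ≤ (1-w) * (h r * (D'^N * ((1+ξ₀)^N - ξ₀^N))) := by
        have := mul_le_mul_of_nonneg_right hmono (le_of_lt (mul_pos hN0 hsN1))
        calc (1-w) * (N * s^(N-1)) ≤ (h r / s^(N-1) * ((1-w) * (D'^N * ((1+ξ₀)^N - ξ₀^N)) / N)) * (N * s^(N-1)) := this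
        _ = (1-w) * (h r * (D'^N * ((1+ξ₀)^N - ξ₀^N))) := by
            field_simp
      exact le_of_mul_le_mul_left hfin h1w
    · -- φ ≤ ψ on [0, r]
      have hptwise : ∀ x ∈ Set.Icc (0:ℝ) r, h x ≤ h r / s^(N-1) * (x + ξ₀*D')^(N-1) := by
        intro x hx
        have hxIcc : x ∈ Set.Icc (0:ℝ) D' := ⟨hx.1, le_trans hx.2 hrD.le⟩
        exact hcomp x hxIcc (by linarith [hcaseii x hx])
      have hmono := intervalIntegral.integral_mono_on hr0.le
        (hii 0 r le_rfl hr0.le hrD.le) (hgint 0 r) hptwise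
      rw [hintr, intervalIntegral.integral_const_mul, aux_integral_shift hN (ξ₀*D') 0 r] at hmono
      have halg : (r + ξ₀*D')^N - (0 + ξ₀*D')^N = w * (D'^N * ((1+ξ₀)^N - ξ₀^N)) := by
        have hDc : (0:ℝ) + ξ₀*D' = D'*ξ₀ := by ring
        rw [hDc, ← hsdef, hmul2, hsD]
        ring
      rw [halg] at hmono
      have hfin : w * (N * s^(N-1)) ≤ w * (h r * (D'^N * ((1+ξ₀)^N - ξ₀^N))) := by
        have := mul_le_mul_of_nonneg_right hmono (le_of_lt (mul_pos hN0 hsN1))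
        calc w * (N * s^(N-1)) ≤ (h r / s^(N-1) * (w * (D'^N * ((1+ξ₀)^N - ξ₀^N)) / N)) * (N * s^(N-1)) := this
        _ = w * (h r * (D'^N * ((1+ξ₀)^N - ξ₀^N))) := by
            field_simp
      exact le_of_mul_le_mul_left hfin hw0
end
end
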